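/- arXiv:1103.1063 — 6 statements merged into one kernel-verified Lean document; each statement's English description precedes it below -/
import Mathlib

section
/- Let Γ be a countably infinite group and let κ and λ be standard probability spaces, each of whose measures is not a Dirac measure (i.e., the Bernoulli actions κ^Γ and λ^Γ are nontrivial, hence free). Then the Bernoulli actions κ^Γ and λ^Γ are weakly equivalent. -/
open MeasureTheory Filter Topology

/-- A probability-measure-preserving action of a group `Γ` on `(X, μ)`. -/
def IsPMPAction {Γ X : Type*} [Group Γ] [MeasurableSpace X]
    (f : Γ → X → X) (μ : Measure X) : Prop :=
  (∀ γ : Γ, MeasurePreserving (f γ) μ μ) ∧ (∀ x : X, f 1 x = x) ∧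
    (∀ γ₁ γ₂ : Γ, ∀ x : X, f (γ₁ * γ₂) x = f γ₁ (f γ₂ x))

/-- The action is (essentially) free. -/
def IsFreeAction {Γ X : Type*} [MeasurableSpace X]
    (f : Γ → X → X) (μ : Measure X) : Prop :=
  ∀ᵐ x ∂μ, ∀ γ γ' : Γ, γ ≠ γ' → f γ x ≠ f γ' x

/-- `f` (acting on `(X, μ)`) weakly contains `g` (acting on `(Y, ν)`). -/
def WeaklyContains {Γ X Y : Type*} [MeasurableSpace X] [MeasurableSpace Y]
    (f : Γ → X → X) (μ : Measure X) (g : Γ → Y → Y) (ν : Measure Y) : Prop :=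
  ∀ (n : ℕ) (Ys : Fin n → Set Y), (∀ i, MeasurableSet (Ys i)) →
    ∀ (S : Finset Γ) (ε : ℝ), 0 < ε →
      ∃ Xs : Fin n → Set X, (∀ i, MeasurableSet (Xs i)) ∧
        ∀ i j : Fin n, ∀ γ ∈ S,
          |(μ (f γ '' Xs i ∩ Xs j)).toReal - (ν (g γ '' Ys i ∩ Ys j)).toReal| < ε

/-- The (left) shift action of `Γ` on `Γ → κ`. -/
def bernoulliShift {Γ κ : Type*} [Group Γ] (γ : Γ) (ω : Γ → κ) : Γ → κ :=
  fun δ => ω (δ * γ)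

/-- `ν` is the product (Bernoulli) measure on `Γ → κ` with one-dimensional marginal `κm`:
it is a probability measure giving every cylinder set the product of the marginals. -/
def IsBernoulliMeasure {Γ κ : Type*} [MeasurableSpace κ]
    (κm : Measure κ) (ν : Measure (Γ → κ)) : Prop :=
  IsProbabilityMeasure ν ∧
    ∀ (F : Finset Γ) (B : Γ → Set κ), (∀ γ, MeasurableSet (B γ)) →
      ν {ω | ∀ γ ∈ F, ω γ ∈ B γ} = ∏ γ ∈ F, κm (B γ)


section BWEAux

open MeasureTheory Filter Topology Set ProbabilityTheory
open scoped ENNReal symmDiff Pointwise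

namespace BWE




lemma measurableSet_cylSet {κ : Type*} [MeasurableSpace κ] {I : Type*} (F : Finset I) (B : I → Set κ)
    (hB : ∀ i, MeasurableSet (B i)) : MeasurableSet {x : I → κ | ∀ i ∈ F, x i ∈ B i} := by
  have h : {x : I → κ | ∀ i ∈ F, x i ∈ B i} = ⋂ i ∈ F, (fun x : I → κ => x i) ⁻¹' (B i) := by
    ext; simp
  rw [h]
  exact MeasurableSet.biInter F.countable_toSet (fun i _ => (measurable_pi_apply i) (hB i))

/-- `μ` is a product measure on `I → κ` with marginal `κm`. -/
def IsProd {κ : Type*} [MeasurableSpace κ] {I : Type*} (κm : Measure κ) (μ : Measure (I → κ)) : Prop :=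
  IsProbabilityMeasure μ ∧ ∀ (F : Finset I) (B : I → Set κ), (∀ i, MeasurableSet (B i)) →
    μ {x | ∀ i ∈ F, x i ∈ B i} = ∏ i ∈ F, κm (B i)

lemma IsProd.map_reindex {κ : Type*} [MeasurableSpace κ] {I J : Type*} {κm : Measure κ} {μ : Measure (J → κ)}
    (h : IsProd κm μ) {j : I → J} (hj : Function.Injective j) :
    IsProd κm (μ.map (fun x i => x (j i))) := by
  classical
  have hmeas : Measurable (fun (x : J → κ) (i : I) => x (j i)) :=
    measurable_pi_lambda _ (fun i => measurable_pi_apply _)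
  have hP : IsProbabilityMeasure μ := h.1
  refine ⟨Measure.isProbabilityMeasure_map hmeas.aemeasurable, fun F B hB => ?_⟩
  set B' : J → Set κ := fun b => ⋂ i ∈ F.filter (fun i => j i = b), B i with hB'
  have hB'm : ∀ b, MeasurableSet (B' b) :=
    fun b => MeasurableSet.biInter (Finset.countable_toSet _) (fun i _ => hB i)
  have hset : (fun (x : J → κ) (i : I) => x (j i)) ⁻¹' {x | ∀ i ∈ F, x i ∈ B i}
      = {x : J → κ | ∀ b ∈ F.image j, x b ∈ B' b} := by
    ext x
    simp only [mem_preimage, mem_setOf_eq, Finset.mem_image, hB', mem_iInter,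
      Finset.mem_filter]
    constructor
    · rintro hx b ⟨i, hi, rfl⟩ i' ⟨hi', he⟩
      exact he ▸ hx i' hi'
    · intro hx i hi
      exact hx (j i) ⟨i, hi, rfl⟩ i ⟨hi, rfl⟩
  rw [Measure.map_apply hmeas (measurableSet_cylSet F B hB), hset,
    h.2 (F.image j) B' hB'm, Finset.prod_image (fun a _ b _ hab => hj hab)]
  refine Finset.prod_congr rfl (fun i hi => ?_)
  congr 1
  have : F.filter (fun i' => j i' = j i) = {i} := by
    ext a
    simp only [Finset.mem_filter, Finset.mem_singleton]
    constructor
    · rintro ⟨_, he⟩; exact hj he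
    · rintro rfl; exact ⟨hi, rfl⟩
  show (⋂ i' ∈ Finset.filter (fun i' => j i' = j i) F, B i') = B i
  rw [this]
  simp

lemma IsProd.marginal {κ : Type*} [MeasurableSpace κ] {I : Type*} {κm : Measure κ} [IsProbabilityMeasure κm]
    {μ : Measure (I → κ)} (h : IsProd κm μ) (F : Finset I) :
    μ.map F.restrict = Measure.pi (fun _ : F => κm) := by
  classical
  refine (Measure.pi_eq (fun s hs => ?_)).symm
  set B : I → Set κ := fun i => if hi : i ∈ F then s ⟨i, hi⟩ else univ with hBdef
  have hBm : ∀ i, MeasurableSet (B i) := by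
    intro i
    by_cases hi : i ∈ F
    · simpa [hBdef, hi] using hs ⟨i, hi⟩
    · simp [hBdef, hi]
  have hset : F.restrict ⁻¹' (univ.pi s) = {x : I → κ | ∀ i ∈ F, x i ∈ B i} := by
    ext x
    simp only [mem_preimage, Set.mem_pi, mem_univ, forall_true_left, mem_setOf_eq]
    constructor
    · intro hx i hi; simpa [hBdef, hi] using hx ⟨i, hi⟩
    · intro hx i; have := hx i.1 i.2; simpa [hBdef, i.2] using this
  rw [Measure.map_apply (F.measurable_restrict) (MeasurableSet.univ_pi hs), hset,
    h.2 F B hBm, ← Finset.prod_attach F (fun i => κm (B i)), Finset.univ_eq_attach]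
  refine Finset.prod_congr rfl (fun i _ => ?_)
  simp [hBdef, i.2]

lemma IsProd.eq_of {κ : Type*} [MeasurableSpace κ] {I : Type*} {κm : Measure κ} [IsProbabilityMeasure κm]
    {μ₁ μ₂ : Measure (I → κ)} (h₁ : IsProd κm μ₁) (h₂ : IsProd κm μ₂) : μ₁ = μ₂ := by
  have hP₁ : IsProbabilityMeasure μ₁ := h₁.1
  have hP₂ : IsProbabilityMeasure μ₂ := h₂.1
  refine ext_of_generate_finite _ generateFrom_measurableCylinders.symm
    isPiSystem_measurableCylinders (fun s hs => ?_) (by simp)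
  obtain ⟨F, S, hS, rfl⟩ := (mem_measurableCylinders s).mp hs
  have e₁ := h₁.marginal F
  have e₂ := h₂.marginal F
  have m₁ : μ₁ (cylinder F S) = (μ₁.map F.restrict) S := by
    rw [Measure.map_apply (F.measurable_restrict) hS]; rfl
  have m₂ : μ₂ (cylinder F S) = (μ₂.map F.restrict) S := by
    rw [Measure.map_apply (F.measurable_restrict) hS]; rfl
  rw [m₁, m₂, e₁, e₂]

lemma IsProd.map_curry {κ : Type*} [MeasurableSpace κ] {E : Type*} [Fintype E] {κm : Measure κ}
    {μ : Measure (E × ℕ → κ)} (h : IsProd κm μ)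
    {μN : Measure (ℕ → κ)} (hN : IsProd κm μN) :
    μ.map (fun x (δ : E) (n : ℕ) => x (δ, n)) = Measure.pi (fun _ : E => μN) := by
  classical
  have hP : IsProbabilityMeasure μ := h.1
  have hPN : IsProbabilityMeasure μN := hN.1
  have hcm : Measurable (fun (x : E × ℕ → κ) (δ : E) (n : ℕ) => x (δ, n)) :=
    measurable_pi_lambda _ (fun δ => measurable_pi_lambda _ (fun n => measurable_pi_apply _))
  set C : Set (Set (E → ℕ → κ)) :=
    {t | ∃ (F : E → Finset ℕ) (B : E → ℕ → Set κ), (∀ δ n, MeasurableSet (B δ n)) ∧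
      t = {y : E → ℕ → κ | ∀ δ, ∀ n ∈ F δ, y δ n ∈ B δ n}} with hC
  have hmemC : ∀ t ∈ C, MeasurableSet t := by
    rintro t ⟨F, B, hB, rfl⟩
    have : {y : E → ℕ → κ | ∀ δ, ∀ n ∈ F δ, y δ n ∈ B δ n}
        = ⋂ δ, ⋂ n ∈ F δ, (fun y : E → ℕ → κ => y δ n) ⁻¹' (B δ n) := by ext; simp
    rw [this]
    exact MeasurableSet.iInter fun δ => MeasurableSet.biInter (Finset.countable_toSet _)
      (fun n _ => ((measurable_pi_apply n).comp (measurable_pi_apply δ)) (hB δ n))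
  have hgen : (MeasurableSpace.pi : MeasurableSpace (E → ℕ → κ))
      = MeasurableSpace.generateFrom C := by
    refine le_antisymm ?_ (MeasurableSpace.generateFrom_le hmemC)
    show (⨆ δ : E, MeasurableSpace.comap (fun y : E → ℕ → κ => y δ) MeasurableSpace.pi) ≤ _
    refine iSup_le fun δ => ?_
    show MeasurableSpace.comap (fun y : E → ℕ → κ => y δ)
      (⨆ n : ℕ, MeasurableSpace.comap (fun z : ℕ → κ => z n) inferInstance) ≤ _
    rw [MeasurableSpace.comap_iSup]
    refine iSup_le fun n => ?_
    rw [MeasurableSpace.comap_comp]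
    intro s hs
    rw [MeasurableSpace.measurableSet_comap] at hs
    obtain ⟨B, hB, rfl⟩ := hs
    refine MeasurableSpace.measurableSet_generateFrom ?_
    refine ⟨fun δ' => if δ' = δ then {n} else ∅, fun _ _ => B, fun _ _ => hB, ?_⟩
    ext y
    simp only [mem_preimage, mem_setOf_eq, Function.comp]
    constructor
    · intro hy δ' n' hn'
      rcases eq_or_ne δ' δ with rfl | hδ
      · rw [if_pos rfl, Finset.mem_singleton] at hn'
        subst hn'; exact hy
      · rw [if_neg hδ] at hn'
        exact absurd hn' (Finset.notMem_empty _)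
    · intro hy
      exact hy δ n (by simp)
  have hpi : IsPiSystem C := by
    rintro t ⟨F, B, hB, rfl⟩ t' ⟨F', B', hB', rfl⟩ -
    refine ⟨fun δ => F δ ∪ F' δ,
      fun δ n => (if n ∈ F δ then B δ n else univ) ∩ (if n ∈ F' δ then B' δ n else univ),
      fun δ n => by
        refine MeasurableSet.inter ?_ ?_ <;> split_ifs <;>
          first | exact hB δ n | exact hB' δ n | exact MeasurableSet.univ, ?_⟩
    ext y
    simp only [mem_inter_iff, mem_setOf_eq, Finset.mem_union]
    constructor
    · rintro ⟨h1, h2⟩ δ n hn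
      constructor
      · by_cases hnF : n ∈ F δ
        · simpa [hnF] using h1 δ n hnF
        · simp [hnF]
      · by_cases hnF' : n ∈ F' δ
        · simpa [hnF'] using h2 δ n hnF'
        · simp [hnF']
    · intro hy
      constructor
      · intro δ n hn
        have := (hy δ n (Or.inl hn)).1
        simpa [hn] using this
      · intro δ n hn
        have := (hy δ n (Or.inr hn)).2
        simpa [hn] using this
  haveI : IsProbabilityMeasure (μ.map (fun x (δ : E) (n : ℕ) => x (δ, n))) :=
    Measure.isProbabilityMeasure_map hcm.aemeasurable
  refine ext_of_generate_finite C hgen hpi ?_ (by simp [measure_univ])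
  rintro t ⟨F, B, hB, rfl⟩
  -- LHS
  have hpre : (fun (x : E × ℕ → κ) (δ : E) (n : ℕ) => x (δ, n)) ⁻¹'
      {y : E → ℕ → κ | ∀ δ, ∀ n ∈ F δ, y δ n ∈ B δ n}
      = {x : E × ℕ → κ | ∀ p ∈ Finset.univ.biUnion
          (fun δ : E => (F δ).map ⟨fun n => (δ, n), fun a b hab => (Prod.mk.injEq _ _ _ _ ▸ hab).2⟩),
          x p ∈ B p.1 p.2} := by
    ext x
    simp only [mem_preimage, mem_setOf_eq, Finset.mem_biUnion, Finset.mem_map,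
      Function.Embedding.coeFn_mk, Finset.mem_univ, true_and]
    constructor
    · rintro hx p ⟨δ, n, hn, rfl⟩
      exact hx δ n hn
    · intro hx δ n hn
      exact hx (δ, n) ⟨δ, n, hn, rfl⟩
  have hLHS : (μ.map (fun x (δ : E) (n : ℕ) => x (δ, n)))
      {y : E → ℕ → κ | ∀ δ, ∀ n ∈ F δ, y δ n ∈ B δ n}
      = ∏ δ : E, ∏ n ∈ F δ, κm (B δ n) := by
    rw [Measure.map_apply hcm (hmemC _ ⟨F, B, hB, rfl⟩), hpre,
      h.2 _ (fun p => B p.1 p.2) (fun p => hB p.1 p.2)]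
    rw [Finset.prod_biUnion]
    · exact Finset.prod_congr rfl fun δ _ => by rw [Finset.prod_map]; rfl
    · intro a _ b _ hab
      simp only [Finset.disjoint_left]
      rintro p hp hp'
      simp only [Finset.mem_map, Function.Embedding.coeFn_mk] at hp hp'
      obtain ⟨n, -, rfl⟩ := hp
      obtain ⟨n', -, h'⟩ := hp'
      exact hab (by injection h'.symm)
  -- RHS
  have hRHS : Measure.pi (fun _ : E => μN) {y : E → ℕ → κ | ∀ δ, ∀ n ∈ F δ, y δ n ∈ B δ n}
      = ∏ δ : E, ∏ n ∈ F δ, κm (B δ n) := by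
    have : {y : E → ℕ → κ | ∀ δ, ∀ n ∈ F δ, y δ n ∈ B δ n}
        = univ.pi (fun δ => {z : ℕ → κ | ∀ n ∈ F δ, z n ∈ B δ n}) := by
      ext y; simp [Set.mem_pi]
    rw [this, Measure.pi_pi]
    exact Finset.prod_congr rfl fun δ _ => hN.2 (F δ) (B δ) (hB δ)
  rw [hLHS, hRHS]

lemma IsProd.map_blocks {κ : Type*} [MeasurableSpace κ] {E lam : Type*} [Fintype E] [MeasurableSpace lam]
    {κm : Measure κ} {μ : Measure (E × ℕ → κ)} (h : IsProd κm μ)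
    {μN : Measure (ℕ → κ)} (hN : IsProd κm μN)
    {ψ : (ℕ → κ) → lam} (hψ : Measurable ψ) :
    μ.map (fun x (δ : E) => ψ (fun n => x (δ, n))) = Measure.pi (fun _ : E => μN.map ψ) := by
  have hPN : IsProbabilityMeasure μN := hN.1
  have hPlam : IsProbabilityMeasure (μN.map ψ) := Measure.isProbabilityMeasure_map hψ.aemeasurable
  have hcm : Measurable (fun (x : E × ℕ → κ) (δ : E) (n : ℕ) => x (δ, n)) :=
    measurable_pi_lambda _ (fun δ => measurable_pi_lambda _ (fun n => measurable_pi_apply _))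
  have hψm : Measurable (fun (y : E → ℕ → κ) (δ : E) => ψ (y δ)) :=
    measurable_pi_lambda _ (fun δ => hψ.comp (measurable_pi_apply δ))
  have hcomp : (fun (x : E × ℕ → κ) (δ : E) => ψ (fun n => x (δ, n)))
      = (fun (y : E → ℕ → κ) (δ : E) => ψ (y δ)) ∘ (fun x (δ : E) (n : ℕ) => x (δ, n)) := rfl
  rw [hcomp, ← Measure.map_map hψm hcm, h.map_curry hN]
  refine (Measure.pi_eq (fun s hs => ?_)).symm
  have hpre : (fun (y : E → ℕ → κ) (δ : E) => ψ (y δ)) ⁻¹' (univ.pi s)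
      = univ.pi (fun δ => ψ ⁻¹' (s δ)) := by
    ext y; simp [Set.mem_pi]
  rw [Measure.map_apply hψm (MeasurableSet.univ_pi hs), hpre, Measure.pi_pi]
  exact Finset.prod_congr rfl fun δ _ => (Measure.map_apply hψ (hs δ)).symm


/-- Quantile-based transfer: any probability measure on `ℝ` is a factor of any
atomless probability measure on `ℝ`. -/
lemma exists_real_factor (μ m : Measure ℝ) [IsProbabilityMeasure μ] [IsProbabilityMeasure m]
    [NullSingletonClass μ] : ∃ τ : ℝ → ℝ, Measurable τ ∧ μ.map τ = m := by
  classical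
  set G : ℝ → ℝ := fun x => cdf μ x with hGdef
  set F : ℝ → ℝ := fun x => cdf m x with hFdef
  have hGmono : Monotone G := monotone_cdf μ
  have hFmono : Monotone F := monotone_cdf m
  set Q : ℝ → ℝ := fun u => sInf {x | u ≤ F x} with hQdef
  -- basic quantile properties
  have hQ1 : ∀ u, 0 < u → u < 1 → ∀ x, (Q u ≤ x ↔ u ≤ F x) := by
    intro u hu0 hu1 x
    have hne : {x | u ≤ F x}.Nonempty := by
      obtain ⟨y, hy⟩ := ((tendsto_cdf_atTop m).eventually (eventually_gt_nhds hu1)).exists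
      exact ⟨y, hy.le⟩
    obtain ⟨y₀, hy₀⟩ := ((tendsto_cdf_atBot m).eventually (eventually_lt_nhds hu0)).exists
    have hbdd : BddBelow {x | u ≤ F x} := by
      refine ⟨y₀, fun z hz => ?_⟩
      by_contra hlt
      push_neg at hlt
      exact absurd (le_trans hz (hFmono hlt.le)) (not_le.mpr hy₀)
    constructor
    · intro hQx
      have hq : u ≤ F (Q u) := by
        have htends : Tendsto F (𝓝[>] (Q u)) (𝓝 (F (Q u))) := by
          refine ((cdf m).right_continuous (Q u)).tendsto.mono_left
            (nhdsWithin_mono _ Ioi_subset_Ici_self)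
        refine ge_of_tendsto htends ?_
        refine eventually_nhdsWithin_of_forall (fun y hy => ?_)
        obtain ⟨z, hz, hzy⟩ := exists_lt_of_csInf_lt hne hy
        exact le_trans hz (hFmono hzy.le)
      exact le_trans hq (hFmono hQx)
    · intro hx
      exact csInf_le hbdd hx
  -- left continuity of G
  have hGleft : ∀ a, Function.leftLim G a = G a := by
    intro a
    have h1 : (cdf μ).measure {a} = 0 := by rw [measure_cdf]; exact measure_singleton a
    rw [StieltjesFunction.measure_singleton] at h1
    have h2 : G a - Function.leftLim G a ≤ 0 := by
      by_contra hpos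
      push_neg at hpos
      rw [ENNReal.ofReal_eq_zero] at h1
      exact absurd h1 (not_le.mpr hpos)
    have h3 : Function.leftLim G a ≤ G a := hGmono.leftLim_le le_rfl
    linarith
  have hG0 : ∀ x, 0 ≤ G x := fun x => cdf_nonneg μ x
  have hG1 : ∀ x, G x ≤ 1 := fun x => cdf_le_one μ x
  -- key: μ {G ≤ c} = c for c ∈ [0,1]
  have hGlevel : ∀ c : ℝ, 0 ≤ c → c ≤ 1 → μ {z | G z ≤ c} = ENNReal.ofReal c := by
    intro c hc0 hc1
    rcases eq_or_lt_of_le hc1 with rfl | hc1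
    · have : {z | G z ≤ 1} = univ := eq_univ_of_forall (fun z => hG1 z)
      rw [this, measure_univ, ENNReal.ofReal_one]
    rcases Set.eq_empty_or_nonempty {z | G z ≤ c} with hA | hA
    · have hc : c ≤ 0 := by
        by_contra hpos
        push_neg at hpos
        obtain ⟨z, hz⟩ := ((tendsto_cdf_atBot μ).eventually (eventually_lt_nhds hpos)).exists
        have hmem : z ∈ {z | G z ≤ c} := le_of_lt hz
        rw [hA] at hmem
        exact hmem
      have : c = 0 := le_antisymm hc hc0
      rw [hA, this, measure_empty, ENNReal.ofReal_zero]
    have hbdd : BddAbove {z | G z ≤ c} := by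
      by_contra hnb
      have hall : ∀ y, G y ≤ c := by
        intro y
        obtain ⟨z, hz, hyz⟩ := not_bddAbove_iff.mp hnb y
        exact le_trans (hGmono hyz.le) hz
      have : (1 : ℝ) ≤ c := le_of_tendsto (tendsto_cdf_atTop μ) (Eventually.of_forall hall)
      linarith
    set a := sSup {z | G z ≤ c} with ha
    have hGa_le : G a ≤ c := by
      rw [← hGleft a]
      have htends : Tendsto G (𝓝[<] a) (𝓝 (Function.leftLim G a)) := hGmono.tendsto_leftLim a
      refine le_of_tendsto htends ?_
      refine eventually_nhdsWithin_of_forall (fun z hz => ?_)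
      obtain ⟨w, hw, hzw⟩ := exists_lt_of_lt_csSup hA hz
      exact le_trans (hGmono hzw.le) hw
    have hEq : {z | G z ≤ c} = Iic a := by
      ext z
      constructor
      · intro hz; exact le_csSup hbdd hz
      · intro hz; exact le_trans (hGmono hz) hGa_le
    have hGa_ge : c ≤ G a := by
      have htends : Tendsto G (𝓝[>] a) (𝓝 (G a)) :=
        ((cdf μ).right_continuous a).tendsto.mono_left
          (nhdsWithin_mono _ Ioi_subset_Ici_self)
      refine ge_of_tendsto htends ?_
      refine eventually_nhdsWithin_of_forall (fun y hy => ?_)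
      by_contra hlt
      push_neg at hlt
      exact absurd (le_csSup hbdd hlt.le) (not_le.mpr hy)
    have : G a = c := le_antisymm hGa_le hGa_ge
    rw [hEq, ← ofReal_cdf μ a]
    exact congrArg _ this
  -- null boundary sets
  have hnull0 : μ {z | G z = 0} = 0 := by
    have hsub : {z | G z = 0} ⊆ {z | G z ≤ 0} := fun z hz => le_of_eq hz
    have := hGlevel 0 le_rfl zero_le_one
    exact le_antisymm (le_trans (measure_mono hsub) (by simp [this])) (zero_le)
  have hnull1 : μ {z | G z = 1} = 0 := by
    have key : ∀ ε : ℝ, 0 < ε → ε < 1 → μ {z | G z = 1} ≤ ENNReal.ofReal ε := by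
      intro ε hε hε1
      have hsub : {z | G z = 1} ⊆ {z | G z ≤ 1 - ε}ᶜ := by
        intro z hz
        have hz1 : G z = 1 := hz
        simp only [mem_compl_iff, mem_setOf_eq, not_le, hz1]
        linarith
      have hco : μ {z | G z ≤ 1 - ε}ᶜ = 1 - ENNReal.ofReal (1 - ε) := by
        rw [measure_compl ?hm (measure_ne_top _ _), hGlevel (1 - ε) (by linarith) (by linarith),
          measure_univ]
        case hm =>
          have : {z | G z ≤ 1 - ε} = G ⁻¹' (Iic (1 - ε)) := rfl
          rw [this]
          exact hGmono.measurable measurableSet_Iic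
      refine le_trans (measure_mono hsub) ?_
      rw [hco, tsub_le_iff_right, ← ENNReal.ofReal_add (by linarith) (by linarith)]
      have he : ε + (1 - ε) = 1 := by ring
      rw [he, ENNReal.ofReal_one]
    by_contra hne
    have hpos : 0 < μ {z | G z = 1} := pos_iff_ne_zero.mpr hne
    have hfin : μ {z | G z = 1} ≤ 1 := prob_le_one
    set ε := (μ {z | G z = 1}).toReal / 2 with hεdef
    have hεpos : 0 < ε := by
      have := ENNReal.toReal_pos hne (by exact ne_top_of_le_ne_top ENNReal.one_ne_top hfin)
      positivity
    have hε1 : ε < 1 := by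
      have h2 : (μ {z | G z = 1}).toReal ≤ 1 := by
        rw [← ENNReal.toReal_one]
        exact ENNReal.toReal_mono ENNReal.one_ne_top hfin
      rw [hεdef]; linarith
    have := key ε hεpos hε1
    rw [← ENNReal.ofReal_toReal (a := μ {z | G z = 1}) (ne_top_of_le_ne_top ENNReal.one_ne_top hfin)]
      at this
    rw [ENNReal.ofReal_le_ofReal_iff (by positivity)] at this
    have htr : 0 < (μ {z | G z = 1}).toReal := ENNReal.toReal_pos hne
      (ne_top_of_le_ne_top ENNReal.one_ne_top hfin)
    rw [hεdef] at this
    linarith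
  -- the transfer map
  set τ : ℝ → ℝ := fun z => Q (G z) with hτdef
  have hGmeas : Measurable G := hGmono.measurable
  have hpreIic : ∀ x : ℝ, τ ⁻¹' (Iic x)
      = G ⁻¹' (({(0:ℝ)} ∩ {u | Q u ≤ x}) ∪ (Ioo 0 1 ∩ Iic (F x)) ∪ ({(1:ℝ)} ∩ {u | Q u ≤ x})) := by
    intro x
    ext z
    simp only [mem_preimage, mem_Iic, mem_union, mem_inter_iff, mem_singleton_iff, mem_setOf_eq,
      mem_Ioo]
    constructor
    · intro hz
      rcases eq_or_lt_of_le (hG0 z) with h0 | h0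
      · exact Or.inl (Or.inl ⟨h0.symm, hz⟩)
      rcases eq_or_lt_of_le (hG1 z) with h1 | h1
      · exact Or.inr ⟨h1, hz⟩
      exact Or.inl (Or.inr ⟨⟨h0, h1⟩, (hQ1 (G z) h0 h1 x).mp hz⟩)
    · rintro ((⟨h0, hQx⟩ | ⟨⟨h0, h1⟩, hFx⟩) | ⟨h1, hQx⟩)
      · exact hQx
      · exact (hQ1 (G z) h0 h1 x).mpr hFx
      · exact hQx
  have hτmeas : Measurable τ := by
    refine measurable_of_Iic (fun x => ?_)
    rw [hpreIic x]
    refine hGmeas ?_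
    refine MeasurableSet.union (MeasurableSet.union ?_ ?_) ?_
    · exact (Set.subsingleton_singleton.anti Set.inter_subset_left).measurableSet
    · exact measurableSet_Ioo.inter measurableSet_Iic
    · exact (Set.subsingleton_singleton.anti Set.inter_subset_left).measurableSet
  refine ⟨τ, hτmeas, ?_⟩
  refine Measure.ext_of_Iic (μ.map τ) m (fun x => ?_)
  rw [Measure.map_apply hτmeas measurableSet_Iic]
  have hae : τ ⁻¹' (Iic x) =ᵐ[μ] {z | G z ≤ F x} := by
    rw [Filter.eventuallyEq_set]
    rw [show (∀ᵐ (x_1 : ℝ) ∂μ, x_1 ∈ τ ⁻¹' (Iic x) ↔ x_1 ∈ {z | G z ≤ F x}) = _ from rfl]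
    have hsub : {z | ¬ (z ∈ τ ⁻¹' (Iic x) ↔ G z ≤ F x)} ⊆ {z | G z = 0} ∪ {z | G z = 1} := by
      intro z hz
      simp only [mem_setOf_eq] at hz
      by_contra hzn
      simp only [mem_union, mem_setOf_eq] at hzn
      push_neg at hzn
      have h0 : 0 < G z := lt_of_le_of_ne (hG0 z) (Ne.symm hzn.1)
      have h1 : G z < 1 := lt_of_le_of_ne (hG1 z) hzn.2
      have : z ∈ τ ⁻¹' (Iic x) ↔ G z ≤ F x := by
        rw [mem_preimage, mem_Iic]
        exact hQ1 (G z) h0 h1 x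
      exact hz this
    have hz0 : μ ({z | G z = 0} ∪ {z | G z = 1}) = 0 := by
      refine measure_union_null hnull0 hnull1
    rw [ae_iff]
    exact measure_mono_null hsub hz0
  rw [measure_congr hae, hGlevel (F x) (cdf_nonneg m x) (cdf_le_one m x), ofReal_cdf]


lemma nonempty_of_prob {α : Type*} [MeasurableSpace α] (μ : Measure α)
    [IsProbabilityMeasure μ] : Nonempty α := by
  by_contra h
  rw [not_nonempty_iff] at h
  have : μ univ = 0 := by simp [Set.univ_eq_empty_iff.mpr h]
  rw [measure_univ] at this
  exact one_ne_zero this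

lemma eq_dirac_of_singleton {α : Type*} [MeasurableSpace α] [MeasurableSingletonClass α]
    (μ : Measure α) [IsProbabilityMeasure μ] {a : α} (ha : μ {a} = 1) :
    μ = Measure.dirac a := by
  refine Measure.ext (fun s hs => ?_)
  rw [Measure.dirac_apply' a hs]
  by_cases hmem : a ∈ s
  · have h1 : (1 : ℝ≥0∞) ≤ μ s := ha ▸ measure_mono (singleton_subset_iff.mpr hmem)
    have h2 : μ s ≤ 1 := prob_le_one
    rw [le_antisymm h2 h1, Set.indicator_of_mem hmem]
    simp
  · have hsub : s ⊆ {a}ᶜ := fun x hx => by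
      simp only [mem_compl_iff, mem_singleton_iff]
      rintro rfl; exact hmem hx
    have hc : μ {a}ᶜ = 0 := by
      rw [measure_compl (measurableSet_singleton a) (measure_ne_top _ _), ha, measure_univ]
      simp
    have hz := measure_mono_null hsub hc
    rw [hz, Set.indicator_of_notMem hmem]

/-- A non-Dirac probability measure on a standard Borel space has a set of measure
strictly between 0 and 1. -/
lemma exists_middle_set {κ : Type*} [MeasurableSpace κ] [StandardBorelSpace κ]
    (κm : Measure κ) [IsProbabilityMeasure κm] (hκ : ∀ a : κ, κm ≠ Measure.dirac a) :
    ∃ A : Set κ, MeasurableSet A ∧ κm A ≠ 0 ∧ κm A ≠ 1 := by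
  by_contra hA
  push_neg at hA
  have h01 : ∀ A : Set κ, MeasurableSet A → κm A = 0 ∨ κm A = 1 := by
    intro A mA
    by_cases h : κm A = 0
    · exact Or.inl h
    · exact Or.inr (hA A mA h)
  obtain ⟨e, he⟩ := exists_measurableEmbedding_real κ
  set m : Measure ℝ := κm.map e with hm
  haveI : IsProbabilityMeasure m := Measure.isProbabilityMeasure_map he.measurable.aemeasurable
  have hm01 : ∀ B : Set ℝ, MeasurableSet B → m B = 0 ∨ m B = 1 := by
    intro B hB
    rw [hm, Measure.map_apply he.measurable hB]
    exact h01 _ (he.measurable hB)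
  set F : ℝ → ℝ := fun x => cdf m x with hF
  have hFv : ∀ x, m (Iic x) = 0 ∨ m (Iic x) = 1 := fun x => hm01 _ measurableSet_Iic
  set S : Set ℝ := {x | m (Iic x) = 1} with hS
  have hSne : S.Nonempty := by
    obtain ⟨x, hx⟩ := ((tendsto_cdf_atTop m).eventually (eventually_gt_nhds (by norm_num :
      (1:ℝ)/2 < 1))).exists
    refine ⟨x, ?_⟩
    rcases hFv x with h | h
    · rw [← ofReal_cdf m x] at h
      rw [ENNReal.ofReal_eq_zero] at h
      linarith
    · exact h
  have hSbdd : BddBelow S := by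
    obtain ⟨y, hy⟩ := ((tendsto_cdf_atBot m).eventually (eventually_lt_nhds (by norm_num :
      (0:ℝ) < 1/2))).exists
    refine ⟨y, fun x hx => ?_⟩
    by_contra hlt
    push_neg at hlt
    have : m (Iic x) ≤ m (Iic y) := measure_mono (Iic_subset_Iic.mpr hlt.le)
    rw [hx] at this
    have hy1 : m (Iic y) = 1 := le_antisymm prob_le_one this
    rw [← ofReal_cdf m y] at hy1
    have : cdf m y ≥ 1 := by
      by_contra hno
      push_neg at hno
      have := ENNReal.ofReal_lt_one.mpr hno
      rw [hy1] at this
      exact lt_irrefl _ this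
    linarith
  set x₀ := sInf S with hx₀
  have hIic : m (Iic x₀) = 1 := by
    have hmono : ∀ y, x₀ < y → m (Iic y) = 1 := by
      intro y hy
      obtain ⟨z, hz, hzy⟩ := exists_lt_of_csInf_lt hSne hy
      have : m (Iic z) ≤ m (Iic y) := measure_mono (Iic_subset_Iic.mpr hzy.le)
      rw [hz] at this
      exact le_antisymm prob_le_one this
    have hF1 : ∀ y, x₀ < y → F y = 1 := by
      intro y hy
      have := hmono y hy
      rw [← ofReal_cdf m y] at this
      have h0 : cdf m y ≤ 1 := cdf_le_one m y
      have h1 : (1:ℝ) ≤ cdf m y := by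
        by_contra hno
        push_neg at hno
        have hlt := ENNReal.ofReal_lt_one.mpr hno
        rw [this] at hlt
        exact lt_irrefl _ hlt
      linarith
    have : F x₀ = 1 := by
      have htends : Tendsto F (𝓝[>] x₀) (𝓝 (F x₀)) :=
        ((cdf m).right_continuous x₀).tendsto.mono_left
          (nhdsWithin_mono _ Ioi_subset_Ici_self)
      have hge : (1:ℝ) ≤ F x₀ := by
        refine ge_of_tendsto htends ?_
        exact eventually_nhdsWithin_of_forall (fun y hy => (hF1 y hy).ge)
      exact le_antisymm (cdf_le_one m x₀) hge
    rw [← ofReal_cdf m x₀, show cdf m x₀ = F x₀ from rfl, this, ENNReal.ofReal_one]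
  have hIio : m (Iio x₀) = 0 := by
    have hlt : ∀ x, x < x₀ → m (Iic x) = 0 := by
      intro x hx
      rcases hFv x with h | h
      · exact h
      · exact absurd (csInf_le hSbdd h) (not_le.mpr hx)
    have hcover : Iio x₀ ⊆ ⋃ n : ℕ, Iic (x₀ - 1/(n+1)) := by
      intro x hx
      obtain ⟨n, hn⟩ := exists_nat_one_div_lt (K := ℝ) (sub_pos.mpr hx)
      refine mem_iUnion.mpr ⟨n, ?_⟩
      rw [mem_Iic]
      have : (1:ℝ)/(n+1) < x₀ - x := hn
      linarith
    refine measure_mono_null hcover (measure_iUnion_null (fun n => ?_))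
    refine hlt _ ?_
    have : (0:ℝ) < 1/((n:ℝ)+1) := by positivity
    linarith
  have hsing : m {x₀} = 1 := by
    have hsub : Iic x₀ ⊆ Iio x₀ ∪ {x₀} := by
      intro x hx
      rcases lt_or_eq_of_le (mem_Iic.mp hx) with h | h
      · exact Or.inl h
      · exact Or.inr (by simp [h])
    have h1 : (1:ℝ≥0∞) ≤ m (Iio x₀ ∪ {x₀}) := hIic ▸ measure_mono hsub
    have h2 : m (Iio x₀ ∪ {x₀}) ≤ m (Iio x₀) + m {x₀} := measure_union_le _ _
    rw [hIio, zero_add] at h2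
    exact le_antisymm prob_le_one (le_trans h1 h2)
  -- pull back to κ
  have hpre : κm (e ⁻¹' {x₀}) = 1 := by
    rw [hm, Measure.map_apply he.measurable (measurableSet_singleton x₀)] at hsing
    exact hsing
  have hne : (e ⁻¹' {x₀}).Nonempty := by
    rcases eq_empty_or_nonempty (e ⁻¹' {x₀}) with h | h
    · rw [h, measure_empty] at hpre
      exact absurd hpre zero_ne_one
    · exact h
  obtain ⟨a, ha⟩ := hne
  have hsub : e ⁻¹' {x₀} ⊆ {a} := by
    intro b hb
    have : e b = e a := by
      rw [mem_preimage, mem_singleton_iff] at hb ha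
      rw [hb, ha]
    exact mem_singleton_iff.mpr (he.injective this)
  have ha1 : κm {a} = 1 := by
    refine le_antisymm prob_le_one ?_
    calc (1:ℝ≥0∞) = κm (e ⁻¹' {x₀}) := hpre.symm
    _ ≤ κm {a} := measure_mono hsub
  haveI : MeasurableSingletonClass κ := by
    letI := upgradeStandardBorel κ
    infer_instance
  exact hκ a (eq_dirac_of_singleton κm ha1)



/-- Pull a measure back through a measurable embedding. -/
lemma exists_inv_embedding {lam : Type*} [MeasurableSpace lam] [Nonempty lam]
    {g : lam → ℝ} (hg : MeasurableEmbedding g) (lamm : Measure lam) :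
    ∃ gi : ℝ → lam, Measurable gi ∧ (lamm.map g).map gi = lamm := by
  classical
  set gi : ℝ → lam := fun r => if r ∈ range g then Function.invFun g r else Classical.arbitrary lam
    with hgi
  have hpre : ∀ s : Set lam, gi ⁻¹' s
      = (g '' s) ∪ (if Classical.arbitrary lam ∈ s then (range g)ᶜ else ∅) := by
    intro s
    ext r
    by_cases hr : r ∈ range g
    · obtain ⟨a, rfl⟩ := hr
      have hinv : gi (g a) = a := by
        rw [hgi]
        simp only [mem_range, exists_apply_eq_apply, if_true]
        exact Function.leftInverse_invFun hg.injective a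
      simp only [mem_preimage, hinv, mem_union]
      constructor
      · intro ha
        exact Or.inl ⟨a, ha, rfl⟩
      · rintro (⟨b, hb, hba⟩ | hjunk)
        · rwa [← hg.injective hba]
        · split_ifs at hjunk
          · exact absurd (mem_range_self a) hjunk
          · exact hjunk.elim
    · have hival : gi r = Classical.arbitrary lam := by
        rw [hgi]; simp only [hr, if_false]
      simp only [mem_preimage, hival, mem_union]
      constructor
      · intro ha
        refine Or.inr ?_
        rw [if_pos ha]
        exact hr
      · rintro (⟨b, hb, hba⟩ | hjunk)
        · exact absurd (hba ▸ mem_range_self b) hr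
        · split_ifs at hjunk with hmem
          · exact hmem
          · exact hjunk.elim
  have hgim : Measurable gi := by
    intro s hs
    rw [hpre s]
    refine MeasurableSet.union (hg.measurableSet_image' hs) ?_
    split_ifs
    · exact hg.measurableSet_range.compl
    · exact MeasurableSet.empty
  refine ⟨gi, hgim, ?_⟩
  refine Measure.ext (fun s hs => ?_)
  rw [Measure.map_apply hgim hs, Measure.map_apply hg.measurable (hgim hs), hpre s]
  have hps : g ⁻¹' ((g '' s) ∪ (if Classical.arbitrary lam ∈ s then (range g)ᶜ else ∅)) = s := by
    rw [preimage_union, Function.Injective.preimage_image hg.injective]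
    have h2 : g ⁻¹' (if Classical.arbitrary lam ∈ s then (range g)ᶜ else ∅) = ∅ := by
      split_ifs
      · ext a; simp
      · simp
    rw [h2, union_empty]
  rw [hps]


lemma IsProd.noAtoms {κ : Type*} [MeasurableSpace κ] {κm : Measure κ} [IsProbabilityMeasure κm]
    {A : Set κ} (hA : MeasurableSet A) (h0 : κm A ≠ 0) (h1 : κm A ≠ 1)
    {μN : Measure (ℕ → κ)} (hN : IsProd κm μN) : NullSingletonClass μN := by
  classical
  constructor
  intro x
  have ht1 : κm A < 1 := lt_of_le_of_ne prob_le_one h1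
  have hAc : κm Aᶜ < 1 := by
    rw [measure_compl hA (measure_ne_top _ _), measure_univ]
    exact ENNReal.sub_lt_self ENNReal.one_ne_top one_ne_zero h0
  set r := max (κm A) (κm Aᶜ) with hr
  have hr1 : r < 1 := max_lt ht1 hAc
  have hle : ∀ k : ℕ, μN {x} ≤ r ^ k := by
    intro k
    set B : ℕ → Set κ := fun n => if x n ∈ A then A else Aᶜ with hB
    have hBm : ∀ n, MeasurableSet (B n) := by
      intro n; rw [hB]; dsimp only; split_ifs; exacts [hA, hA.compl]
    have hBr : ∀ n, κm (B n) ≤ r := by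
      intro n; rw [hB]; dsimp only; split_ifs
      exacts [le_max_left _ _, le_max_right _ _]
    have hsub : {x} ⊆ {z : ℕ → κ | ∀ n ∈ Finset.range k, z n ∈ B n} := by
      intro z hz
      rw [mem_singleton_iff] at hz
      subst hz
      intro n _
      rw [hB]; dsimp only; split_ifs with h
      exacts [h, h]
    calc μN {x} ≤ μN {z | ∀ n ∈ Finset.range k, z n ∈ B n} := measure_mono hsub
    _ = ∏ n ∈ Finset.range k, κm (B n) := hN.2 _ _ hBm
    _ ≤ ∏ _n ∈ Finset.range k, r := Finset.prod_le_prod' (fun n _ => hBr n)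
    _ = r ^ k := by rw [Finset.prod_const, Finset.card_range]
  have hz := ge_of_tendsto' (ENNReal.tendsto_pow_atTop_nhds_zero_of_lt_one hr1) hle
  exact le_antisymm hz (zero_le)

lemma exists_factor {κ : Type*} [MeasurableSpace κ] [StandardBorelSpace κ]
    {κm : Measure κ} [IsProbabilityMeasure κm]
    (hκ : ∀ a : κ, κm ≠ Measure.dirac a)
    {μN : Measure (ℕ → κ)} (hN : IsProd κm μN)
    {lam : Type*} [MeasurableSpace lam] [StandardBorelSpace lam]
    (lamm : Measure lam) [IsProbabilityMeasure lamm] :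
    ∃ ψ : (ℕ → κ) → lam, Measurable ψ ∧ μN.map ψ = lamm := by
  obtain ⟨A, hA, h0, h1⟩ := exists_middle_set κm hκ
  haveI : IsProbabilityMeasure μN := hN.1
  haveI := hN.noAtoms hA h0 h1
  haveI : Nonempty lam := nonempty_of_prob lamm
  obtain ⟨e, he⟩ := exists_measurableEmbedding_real (ℕ → κ)
  obtain ⟨g, hg⟩ := exists_measurableEmbedding_real lam
  set μR := μN.map e with hμR
  haveI : IsProbabilityMeasure μR := Measure.isProbabilityMeasure_map he.measurable.aemeasurable
  haveI : NullSingletonClass μR := by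
    constructor
    intro x
    rw [hμR, Measure.map_apply he.measurable (measurableSet_singleton x)]
    have hss : (e ⁻¹' {x}).Subsingleton := by
      intro a ha b hb
      rw [mem_preimage, mem_singleton_iff] at ha hb
      exact he.injective (ha.trans hb.symm)
    exact hss.countable.measure_zero _
  set m := lamm.map g with hmdef
  haveI : IsProbabilityMeasure m := Measure.isProbabilityMeasure_map hg.measurable.aemeasurable
  obtain ⟨τ, hτ, hτm⟩ := exists_real_factor μR m
  obtain ⟨gi, hgi, hgim⟩ := exists_inv_embedding hg lamm
  refine ⟨gi ∘ τ ∘ e, hgi.comp (hτ.comp he.measurable), ?_⟩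
  rw [show gi ∘ τ ∘ e = gi ∘ (τ ∘ e) from rfl,
    ← Measure.map_map hgi (hτ.comp he.measurable),
    ← Measure.map_map hτ he.measurable]
  rw [← hμR, hτm, hmdef, hgim]




noncomputable def pick {Γ : Type*} [Infinite Γ] (s : Finset Γ) : Γ := (Infinite.exists_notMem_finset s).choose

lemma pick_spec {Γ : Type*} [Infinite Γ] (s : Finset Γ) : pick s ∉ s := (Infinite.exists_notMem_finset s).choose_spec

noncomputable def st {Γ : Type*} [Group Γ] [Infinite Γ] [DecidableEq Γ] (D : Finset Γ) : ℕ → Finset Γ × Γ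
  | 0 => ((∅ : Finset Γ), pick (∅ : Finset Γ))
  | n+1 => (insert (st D n).2 (st D n).1, pick ((insert (st D n).2 (st D n).1) * D))

lemma st_fst_succ {Γ : Type*} [Group Γ] [Infinite Γ] [DecidableEq Γ] (D : Finset Γ) (n : ℕ) :
    (st D (n+1)).1 = insert (st D n).2 (st D n).1 := rfl

lemma st_mem_of_lt {Γ : Type*} [Group Γ] [Infinite Γ] [DecidableEq Γ] (D : Finset Γ) {m n : ℕ} (h : m < n) :
    (st D m).2 ∈ (st D n).1 := by
  induction n with
  | zero => omega
  | succ k ih =>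
    rw [st_fst_succ]
    rcases Nat.lt_succ_iff_lt_or_eq.mp h with h' | h'
    · exact Finset.mem_insert_of_mem (ih h')
    · subst h'
      exact Finset.mem_insert_self _ _

lemma st_not_mem {Γ : Type*} [Group Γ] [Infinite Γ] [DecidableEq Γ] (D : Finset Γ) (n : ℕ) :
    (st D n).2 ∉ (st D n).1 * D := by
  cases n with
  | zero =>
    show pick ∅ ∉ (∅ : Finset Γ) * D
    rw [Finset.empty_mul]
    exact Finset.notMem_empty _
  | succ k =>
    exact pick_spec _

lemma exists_spread {Γ : Type*} [Group Γ] [Infinite Γ] (E : Finset Γ) :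
    ∃ w : ℕ → Γ, Function.Injective (fun p : (↑E : Finset Γ) × ℕ => w p.2 * (p.1 : Γ)) := by
  classical
  set D : Finset Γ := E * E⁻¹ with hD
  refine ⟨fun n => (st D n).2, ?_⟩
  rintro ⟨δ, n⟩ ⟨δ', m⟩ h
  simp only at h
  have key : ∀ (a b : ℕ) (x y : (↑E : Finset Γ)), a < b →
      (st D b).2 * (x : Γ) ≠ (st D a).2 * (y : Γ) := by
    intro a b x y hab
    intro heq
    have hwb : (st D b).2 = (st D a).2 * ((y : Γ) * (x : Γ)⁻¹) := by
      have h2 := congrArg (· * (x : Γ)⁻¹) heq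
      simpa [mul_assoc] using h2
    have hd : ((y : Γ) * (x : Γ)⁻¹) ∈ D := by
      rw [hD]
      refine Finset.mul_mem_mul y.2 ?_
      rw [Finset.mem_inv]
      exact ⟨(x : Γ), x.2, rfl⟩
    have : (st D b).2 ∈ (st D b).1 * D := by
      rw [hwb]
      exact Finset.mul_mem_mul (st_mem_of_lt D hab) hd
    exact st_not_mem D b this
  rcases lt_trichotomy n m with hnm | hnm | hnm
  · exact absurd h.symm (key n m δ' δ hnm)
  · subst hnm
    have : (δ : Γ) = (δ' : Γ) := mul_left_cancel h
    have : δ = δ' := Subtype.ext this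
    rw [this]
  · exact absurd h (key m n δ δ' hnm)




lemma shift_measurable {Γ : Type*} [Group Γ] {κ : Type*} [MeasurableSpace κ] (γ : Γ) : Measurable (bernoulliShift (κ := κ) γ) :=
  measurable_pi_lambda _ (fun δ => measurable_pi_apply _)

lemma shift_comp {Γ : Type*} [Group Γ] {κ : Type*} (γ γ' : Γ) (ω : Γ → κ) :
    bernoulliShift γ (bernoulliShift γ' ω) = bernoulliShift (γ * γ') ω := by
  funext δ
  simp [bernoulliShift, mul_assoc]

lemma shift_image {Γ : Type*} [Group Γ] {κ : Type*} (γ : Γ) (s : Set (Γ → κ)) :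
    bernoulliShift γ '' s = bernoulliShift γ⁻¹ ⁻¹' s := by
  have h := Set.image_eq_preimage_of_inverse (f := bernoulliShift (κ := κ) γ)
    (g := bernoulliShift γ⁻¹)
    (fun ω => by rw [shift_comp]; simp; funext δ; simp [bernoulliShift])
    (fun ω => by rw [shift_comp]; simp; funext δ; simp [bernoulliShift])
  exact congrFun h s

/-- A set depends only on coordinates in `F`. -/
def Dep {Γ : Type*} {lam : Type*} (U : Set (Γ → lam)) (F : Finset Γ) : Prop :=
  ∀ ω ω' : Γ → lam, (∀ γ ∈ F, ω γ = ω' γ) → (ω ∈ U ↔ ω' ∈ U)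

lemma Dep.mono {Γ : Type*} {lam : Type*} {U : Set (Γ → lam)} {F F' : Finset Γ} (h : Dep U F)
    (hFF : F ⊆ F') : Dep U F' :=
  fun ω ω' hag => h ω ω' (fun γ hγ => hag γ (hFF hγ))

lemma Dep.inter {Γ : Type*} {lam : Type*} {U V : Set (Γ → lam)} {F : Finset Γ} (hU : Dep U F)
    (hV : Dep V F) : Dep (U ∩ V) F := by
  intro ω ω' hag
  rw [Set.mem_inter_iff, Set.mem_inter_iff, hU ω ω' hag, hV ω ω' hag]

lemma Dep.cylinder {Γ : Type*} {lam : Type*} (s : Finset Γ) (S : Set (∀ _ : s, lam)) :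
    Dep (cylinder s S) s := by
  intro ω ω' hag
  simp only [mem_cylinder]
  have : s.restrict ω = s.restrict ω' := by
    funext i
    exact hag i i.2
  rw [this]

lemma Dep.shift_preimage {Γ : Type*} [Group Γ] {lam : Type*} [DecidableEq Γ] {U : Set (Γ → lam)} {F : Finset Γ} (h : Dep U F)
    (γ : Γ) : Dep (bernoulliShift γ ⁻¹' U) (F.image (· * γ)) := by
  intro ω ω' hag
  simp only [Set.mem_preimage]
  refine h _ _ ?_
  intro δ hδ
  exact hag (δ * γ) (Finset.mem_image_of_mem _ hδ)

/-- For measures with equal marginals on `F`, `F`-dependent measurable sets get equal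
measure. -/
lemma measure_eq_of_dep {Γ : Type*} {lam : Type*} [MeasurableSpace lam] [Nonempty lam]
    {ρ₁ ρ₂ : Measure (Γ → lam)} {F : Finset Γ}
    (hm : ρ₁.map F.restrict = ρ₂.map F.restrict) {U : Set (Γ → lam)}
    (hU : MeasurableSet U) (hdep : Dep U F) : ρ₁ U = ρ₂ U := by
  classical
  set ext : ((↑F : Finset Γ) → lam) → (Γ → lam) :=
    fun z γ => if h : γ ∈ F then z ⟨γ, h⟩ else Classical.arbitrary lam with hext
  have hextm : Measurable ext := by
    refine measurable_pi_lambda _ (fun γ => ?_)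
    by_cases h : γ ∈ F
    · simp only [hext, dif_pos h]
      exact measurable_pi_apply _
    · simp only [hext, dif_neg h]
      exact measurable_const
  have hkey : U = F.restrict ⁻¹' (ext ⁻¹' U) := by
    ext ω
    rw [Set.mem_preimage, Set.mem_preimage]
    exact hdep ω (ext (F.restrict ω))
      (fun γ hγ => by simp [hext, dif_pos hγ, Finset.restrict])
  rw [hkey, ← Measure.map_apply (F.measurable_restrict) (hextm hU), hm,
    Measure.map_apply (F.measurable_restrict) (hextm hU)]

lemma abs_toReal_sub_le {α : Type*} [MeasurableSpace α] (μ : Measure α) [IsFiniteMeasure μ]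
    (S T : Set α) : |(μ S).toReal - (μ T).toReal| ≤ (μ (S ∆ T)).toReal := by
  have hsub : ∀ A B : Set α, A ⊆ B ∪ (A ∆ B) := by
    intro A B x hx
    by_cases hB : x ∈ B
    · exact Or.inl hB
    · exact Or.inr (Set.mem_symmDiff.mpr (Or.inl ⟨hx, hB⟩))
  have h1 : μ S ≤ μ T + μ (S ∆ T) :=
    le_trans (measure_mono (hsub S T)) (measure_union_le _ _)
  have h2 : μ T ≤ μ S + μ (S ∆ T) := by
    have := le_trans (measure_mono (hsub T S)) (measure_union_le (μ := μ) S (T ∆ S))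
    rwa [symmDiff_comm] at this
  have hfin : ∀ A : Set α, μ A ≠ ∞ := fun A => measure_ne_top μ A
  have hfin2 : ∀ A B : Set α, μ A + μ B ≠ ∞ :=
    fun A B => ENNReal.add_ne_top.mpr ⟨hfin A, hfin B⟩
  have t1 : (μ S).toReal ≤ (μ T).toReal + (μ (S ∆ T)).toReal := by
    have := ENNReal.toReal_mono (hfin2 _ _) h1
    rwa [ENNReal.toReal_add (hfin _) (hfin _)] at this
  have t2 : (μ T).toReal ≤ (μ S).toReal + (μ (S ∆ T)).toReal := by
    have := ENNReal.toReal_mono (hfin2 _ _) h2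
    rwa [ENNReal.toReal_add (hfin _) (hfin _)] at this
  rw [abs_sub_le_iff]
  constructor <;> linarith

lemma symmDiff_inter_subset {α : Type*} (P P' Q Q' : Set α) :
    (P ∩ Q) ∆ (P' ∩ Q') ⊆ (P ∆ P') ∪ (Q ∆ Q') := by
  intro x hx
  simp only [Set.mem_symmDiff, Set.mem_inter_iff, Set.mem_union] at *
  tauto

lemma preimage_symmDiff {α β : Type*} (f : α → β) (S T : Set β) :
    f ⁻¹' (S ∆ T) = (f ⁻¹' S) ∆ (f ⁻¹' T) := by
  ext x
  simp [Set.mem_symmDiff]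

lemma weaklyContains_of
    {Γ : Type*} [Group Γ] [Countable Γ] [Infinite Γ]
    {κ : Type*} [MeasurableSpace κ] [StandardBorelSpace κ]
    (κm : Measure κ) [IsProbabilityMeasure κm] (hκ : ∀ a : κ, κm ≠ Measure.dirac a)
    {lam : Type*} [MeasurableSpace lam] [StandardBorelSpace lam]
    (lamm : Measure lam) [IsProbabilityMeasure lamm]
    (ν : Measure (Γ → κ)) (hν : IsProd κm ν)
    (ρ : Measure (Γ → lam)) (hρ : IsProd lamm ρ) :
    WeaklyContains (bernoulliShift (κ := κ)) ν (bernoulliShift (κ := lam)) ρ := by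
  classical
  haveI : IsProbabilityMeasure ν := hν.1
  haveI : IsProbabilityMeasure ρ := hρ.1
  haveI : Nonempty lam := nonempty_of_prob lamm
  intro n Ys hYs S ε hε
  -- approximate the target sets by cylinders
  have hdense : ρ.MeasureDense (measurableCylinders (fun _ : Γ => lam)) :=
    Measure.MeasureDense.of_generateFrom_isSetAlgebra_finite ρ
      ⟨empty_mem_measurableCylinders _, fun _ hs => compl_mem_measurableCylinders hs,
        fun _ _ hs ht => union_mem_measurableCylinders hs ht⟩
      generateFrom_measurableCylinders.symm
  have happrox : ∀ i : Fin n, ∃ Z ∈ measurableCylinders (fun _ : Γ => lam),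
      ρ (Ys i ∆ Z) < ENNReal.ofReal (ε/3) :=
    fun i => hdense.approx (Ys i) (hYs i) (measure_ne_top ρ _) (ε/3) (by linarith)
  choose Z hZmem hZapp using happrox
  have hZmeas : ∀ i, MeasurableSet (Z i) :=
    fun i => MeasurableSet.of_mem_measurableCylinders (hZmem i)
  set F : Finset Γ := Finset.univ.biUnion
    (fun i : Fin n => measurableCylinders.finset (hZmem i)) with hFdef
  have hZdep : ∀ i, Dep (Z i) F := by
    intro i
    have h := Dep.cylinder (measurableCylinders.finset (hZmem i))
      (measurableCylinders.set (hZmem i))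
    rw [← measurableCylinders.eq_cylinder (hZmem i)] at h
    refine h.mono ?_
    rw [hFdef]
    exact Finset.subset_biUnion_of_mem
      (fun i : Fin n => measurableCylinders.finset (hZmem i)) (Finset.mem_univ i)
  set E : Finset Γ := F ∪ S.biUnion (fun γ => F.image (· * γ⁻¹)) with hEdef
  -- spread sequence and the coding map
  obtain ⟨w, hw⟩ := exists_spread (Γ := Γ) E
  set μN : Measure (ℕ → κ) := ν.map (fun ω k => ω ((Infinite.natEmbedding Γ) k)) with hμN
  have hN : IsProd κm μN := hν.map_reindex (Infinite.natEmbedding Γ).injective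
  obtain ⟨ψ, hψ, hψm⟩ := exists_factor hκ hN lamm
  set Φ : (Γ → κ) → (Γ → lam) := fun ω δ => ψ (fun k => ω (w k * δ)) with hΦdef
  have hΦm : Measurable Φ :=
    measurable_pi_lambda _ (fun δ => hψ.comp
      (measurable_pi_lambda _ (fun k => measurable_pi_apply _)))
  have hequiv : ∀ (γ : Γ) ω, Φ (bernoulliShift γ ω) = bernoulliShift γ (Φ ω) := by
    intro γ ω
    funext δ
    show ψ (fun k => (bernoulliShift γ ω) (w k * δ)) = ψ (fun k => ω (w k * (δ * γ)))
    simp only [bernoulliShift, mul_assoc]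
  -- the marginals of `ν.map Φ` and `ρ` on `E` agree
  have hblocksm : Measurable
      (fun (x : ((↑E : Finset Γ) × ℕ) → κ) (δ : (↑E : Finset Γ)) => ψ (fun k => x (δ, k))) :=
    measurable_pi_lambda _ (fun δ => hψ.comp
      (measurable_pi_lambda _ (fun k => measurable_pi_apply _)))
  have hreindexm : Measurable (fun (ω : Γ → κ) (p : (↑E : Finset Γ) × ℕ) => ω (w p.2 * ↑p.1)) :=
    measurable_pi_lambda _ (fun p => measurable_pi_apply _)
  have hmarg : (ν.map Φ).map E.restrict = ρ.map E.restrict := by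
    rw [Measure.map_map (E.measurable_restrict) hΦm]
    have hR : IsProd κm (ν.map (fun ω (p : (↑E : Finset Γ) × ℕ) => ω (w p.2 * ↑p.1))) :=
      hν.map_reindex hw
    have hcomp : (E.restrict ∘ Φ)
        = (fun (x : ((↑E : Finset Γ) × ℕ) → κ) (δ : (↑E : Finset Γ)) => ψ (fun k => x (δ, k)))
          ∘ (fun ω (p : (↑E : Finset Γ) × ℕ) => ω (w p.2 * ↑p.1)) := rfl
    rw [hcomp, ← Measure.map_map hblocksm hreindexm, hR.map_blocks hN hψ, hψm,
      hρ.marginal E]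
  -- shift invariance of ρ
  have hshiftinv : ∀ (γ : Γ) (s : Set (Γ → lam)), MeasurableSet s →
      ρ (bernoulliShift γ ⁻¹' s) = ρ s := by
    intro γ s hs
    have hinj : Function.Injective (fun i : Γ => i * γ) := fun a b hab => by
      exact mul_right_cancel hab
    have hinv : ρ.map (bernoulliShift (κ := lam) γ) = ρ :=
      IsProd.eq_of (hρ.map_reindex hinj) hρ
    rw [← Measure.map_apply (shift_measurable γ) hs, hinv]
  -- conclusion
  refine ⟨fun i => Φ ⁻¹' (Z i), fun i => hΦm (hZmeas i), ?_⟩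
  intro i j γ hγS
  have hTi : bernoulliShift γ '' Z i = bernoulliShift γ⁻¹ ⁻¹' Z i := shift_image γ (Z i)
  have hTim : MeasurableSet (bernoulliShift γ '' Z i) := by
    rw [hTi]; exact shift_measurable γ⁻¹ (hZmeas i)
  have hXsim : bernoulliShift γ '' (Φ ⁻¹' (Z i)) = Φ ⁻¹' (bernoulliShift γ '' Z i) := by
    rw [shift_image, hTi, ← Set.preimage_comp, ← Set.preimage_comp]
    have : Φ ∘ bernoulliShift γ⁻¹ = bernoulliShift γ⁻¹ ∘ Φ := by
      funext ω; exact hequiv γ⁻¹ ω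
    rw [this]
  have h1 : ν (bernoulliShift γ '' (Φ ⁻¹' (Z i)) ∩ Φ ⁻¹' (Z j))
      = (ν.map Φ) (bernoulliShift γ '' Z i ∩ Z j) := by
    rw [hXsim, ← Set.preimage_inter, Measure.map_apply hΦm (hTim.inter (hZmeas j))]
  have hdepint : Dep (bernoulliShift γ '' Z i ∩ Z j) E := by
    have d1 : Dep (bernoulliShift γ⁻¹ ⁻¹' (Z i)) (F.image (· * γ⁻¹)) :=
      (hZdep i).shift_preimage γ⁻¹
    have d1' : Dep (bernoulliShift γ '' Z i) E := by
      rw [hTi]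
      refine d1.mono ?_
      rw [hEdef]
      exact le_trans (Finset.subset_biUnion_of_mem (fun γ => F.image (· * γ⁻¹)) hγS)
        Finset.subset_union_right
    refine d1'.inter ((hZdep j).mono ?_)
    rw [hEdef]
    exact Finset.subset_union_left
  have h2 : (ν.map Φ) (bernoulliShift γ '' Z i ∩ Z j) = ρ (bernoulliShift γ '' Z i ∩ Z j) :=
    measure_eq_of_dep hmarg (hTim.inter (hZmeas j)) hdepint
  -- error estimate
  have herr1 : ρ ((bernoulliShift γ '' Z i) ∆ (bernoulliShift γ '' Ys i)) = ρ (Z i ∆ Ys i) := by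
    rw [hTi, shift_image, ← preimage_symmDiff,
      hshiftinv γ⁻¹ _ ((hZmeas i).symmDiff (hYs i))]
  have hbound : ρ ((bernoulliShift γ '' Z i ∩ Z j) ∆ (bernoulliShift γ '' Ys i ∩ Ys j))
      ≤ ρ (Z i ∆ Ys i) + ρ (Z j ∆ Ys j) := by
    refine le_trans (measure_mono (symmDiff_inter_subset _ _ _ _)) ?_
    refine le_trans (measure_union_le _ _) ?_
    rw [herr1]
  have hZYs : ∀ k : Fin n, ρ (Z k ∆ Ys k) < ENNReal.ofReal (ε/3) := by
    intro k
    have := hZapp k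
    rwa [symmDiff_comm] at this
  have hlt : ρ ((bernoulliShift γ '' Z i ∩ Z j) ∆ (bernoulliShift γ '' Ys i ∩ Ys j))
      < ENNReal.ofReal (ε/3) + ENNReal.ofReal (ε/3) :=
    lt_of_le_of_lt hbound (ENNReal.add_lt_add (hZYs i) (hZYs j))
  rw [h1, h2]
  have habs := abs_toReal_sub_le ρ (bernoulliShift γ '' Z i ∩ Z j)
    (bernoulliShift γ '' Ys i ∩ Ys j)
  have htr : (ρ ((bernoulliShift γ '' Z i ∩ Z j) ∆ (bernoulliShift γ '' Ys i ∩ Ys j))).toReal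
      < 2*ε/3 := by
    rw [← ENNReal.ofReal_add (by linarith) (by linarith)] at hlt
    have h23 : ε/3 + ε/3 = 2*ε/3 := by ring
    rw [h23] at hlt
    exact (ENNReal.lt_ofReal_iff_toReal_lt (measure_ne_top ρ _)).mp hlt
  calc |(ρ (bernoulliShift γ '' Z i ∩ Z j)).toReal
      - (ρ (bernoulliShift γ '' Ys i ∩ Ys j)).toReal|
      ≤ (ρ ((bernoulliShift γ '' Z i ∩ Z j) ∆ (bernoulliShift γ '' Ys i ∩ Ys j))).toReal := habs
    _ < 2*ε/3 := htr
    _ < ε := by linarith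

end BWE

end BWEAux

/-- Any two nontrivial Bernoulli actions of a countably infinite group are weakly
equivalent. -/
theorem bernoulli_actions_weakly_equivalent
    {Γ : Type*} [Group Γ] [Countable Γ] [Infinite Γ]
    {κ : Type*} [MeasurableSpace κ] [StandardBorelSpace κ]
    (κm : Measure κ) [IsProbabilityMeasure κm] (hκ : ∀ a : κ, κm ≠ Measure.dirac a)
    {lam : Type*} [MeasurableSpace lam] [StandardBorelSpace lam]
    (lamm : Measure lam) [IsProbabilityMeasure lamm] (hlam : ∀ a : lam, lamm ≠ Measure.dirac a)
    (ν : Measure (Γ → κ)) (hν : IsBernoulliMeasure κm ν)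
    (ρ : Measure (Γ → lam)) (hρ : IsBernoulliMeasure lamm ρ) :
    WeaklyContains (bernoulliShift (κ := κ)) ν (bernoulliShift (κ := lam)) ρ ∧
      WeaklyContains (bernoulliShift (κ := lam)) ρ (bernoulliShift (κ := κ)) ν := by
  have hv : BWE.IsProd κm ν := ⟨hν.1, hν.2⟩
  have hr : BWE.IsProd lamm ρ := ⟨hρ.1, hρ.2⟩
  exact ⟨BWE.weaklyContains_of κm hκ lamm ν hv ρ hr,
    BWE.weaklyContains_of lamm hlam κm ρ hr ν hv⟩
end

section
/- Every free p.m.p. action of ℤ on a standard Borel probability space weakly contains, for every integer n > 0, the cyclic action of ℤ on n points with uniform measure (ℤ acting on ℤ/nℤ by translation). -/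
open MeasureTheory Filter Topology

/-- A p.m.p. action of the additive group `ℤ`. -/
def IsPMPActionZ {X : Type*} [MeasurableSpace X] (f : ℤ → X → X) (μ : Measure X) : Prop :=
  (∀ m : ℤ, MeasurePreserving (f m) μ μ) ∧ (∀ x : X, f 0 x = x) ∧
    (∀ m m' : ℤ, ∀ x : X, f (m + m') x = f m (f m' x))

instance (n : ℕ) : MeasurableSpace (ZMod n) := ⊤

section RokhlinAuxiliary

open Finset
open scoped ENNReal

set_option linter.unusedSectionVars false
set_option linter.unusedVariables false
set_option maxHeartbeats 1600000


open MeasureTheory Filter Topology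
open scoped ENNReal
open Finset



theorem sum_le_one_of_antitone_aux (a : ℕ → ℝ) (hpos : ∀ m, 0 ≤ a m) (L : ℕ)
    (hsum : ∑ m ∈ range L, a m = 1) (hz : ∀ m, L ≤ m → a m = 0)
    (T : Finset ℕ) : ∑ m ∈ T, a m ≤ 1 := by
  classical
  have hsub : T ⊆ range (max L (T.sup id + 1)) := by
    intro m hm
    simp only [mem_range, lt_max_iff]
    exact Or.inr (Nat.lt_succ_of_le (le_sup (f := id) hm))
  calc ∑ m ∈ T, a m ≤ ∑ m ∈ range (max L (T.sup id + 1)), a m :=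
        sum_le_sum_of_subset_of_nonneg hsub (fun m _ _ => hpos m)
    _ = ∑ m ∈ range L, a m := by
        refine (sum_subset (by intro m; simp only [mem_range]; omega) ?_).symm
        intro m _ hm
        simp only [mem_range, not_lt] at hm
        exact hz m hm
    _ = 1 := hsum

/-- Residue class sums of a nonneg antitone sequence summing to 1 are close to `1/n`. -/
theorem residue_sum_bounds (a : ℕ → ℝ) (ha : Antitone a) (hpos : ∀ m, 0 ≤ a m)
    (L n k : ℕ) (hn : 0 < n) (hk : k < n) (hnL : n ≤ L)
    (hsum : ∑ m ∈ range L, a m = 1) (hz : ∀ m, L ≤ m → a m = 0) :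
    |(∑ m ∈ (range L).filter (fun m => m % n = k), a m) - 1 / n| ≤ a 0 := by
  classical
  have hT := sum_le_one_of_antitone_aux a hpos L hsum hz
  have hnR : (0 : ℝ) < n := by exact_mod_cast hn
  -- rewrite the filtered sum as a sum over q ↦ q*n+k
  have hinj : Set.InjOn (fun q => q * n + k) (range L : Set ℕ) := by
    intro q _ q' _ h
    simp only at h
    exact Nat.eq_of_mul_eq_mul_right hn (by omega)
  have himg : ∑ m ∈ (range L).filter (fun m => m % n = k), a m
      = ∑ q ∈ range L, a (q * n + k) := by
    rw [← sum_image hinj]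
    refine sum_subset ?_ ?_
    · intro m hm
      simp only [mem_filter, mem_range] at hm
      simp only [mem_image, mem_range]
      have hd := Nat.div_add_mod' m n
      have hds := Nat.div_le_self m n
      exact ⟨m / n, by omega, by omega⟩
    · intro m hm hm'
      simp only [mem_image, mem_range] at hm
      obtain ⟨q, hq, rfl⟩ := hm
      simp only [mem_filter, mem_range, not_and] at hm'
      by_cases hL : q * n + k < L
      · have : (q * n + k) % n = k := by
          rw [Nat.add_comm, Nat.add_mul_mod_self_right, Nat.mod_eq_of_lt hk]
        exact absurd this (hm' hL)
      · exact hz _ (by omega)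
  rw [himg]
  have ha0 : ∀ m, a m ≤ a 0 := fun m => ha (Nat.zero_le m)
  -- upper bound
  have hub : ∑ q ∈ range L, a (q * n + k) ≤ a 0 + 1 / n := by
    have hrins : range L = insert 0 (Ico 1 L) := by
      ext m; simp only [mem_insert, mem_Ico, mem_range]; omega
    have hnotin : 0 ∉ Ico 1 L := by simp
    have hsplit : ∑ q ∈ range L, a (q * n + k)
        = a k + ∑ q ∈ Ico 1 L, a (q * n + k) := by
      rw [hrins, sum_insert hnotin]
      norm_num
    have hstep : ∀ q ∈ Ico 1 L, (n : ℝ) * a (q * n + k)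
        ≤ ∑ j ∈ range n, a ((q - 1) * n + k + j) := by
      intro q hq
      simp only [mem_Ico] at hq
      obtain ⟨q', rfl⟩ : ∃ q', q = q' + 1 := ⟨q - 1, by omega⟩
      calc (n : ℝ) * a ((q' + 1) * n + k) = ∑ _j ∈ range n, a ((q' + 1) * n + k) := by
            simp [mul_comm]
        _ ≤ ∑ j ∈ range n, a ((q' + 1 - 1) * n + k + j) := by
            refine sum_le_sum fun j hj => ha ?_
            simp only [mem_range] at hj
            have e1 : (q' + 1) * n = q' * n + n := by ring
            simp only [Nat.add_sub_cancel]
            omega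
    have hdouble : ∑ q ∈ Ico 1 L, ∑ j ∈ range n, a ((q - 1) * n + k + j) ≤ 1 := by
      rw [← sum_product']
      have hinj2 : Set.InjOn (fun p : ℕ × ℕ => (p.1 - 1) * n + k + p.2)
          ((Ico 1 L ×ˢ range n : Finset (ℕ × ℕ)) : Set (ℕ × ℕ)) := by
        rintro ⟨q, j⟩ hp ⟨q', j'⟩ hp' h
        simp only [coe_product, Set.mem_prod, mem_coe, mem_Ico, mem_range] at hp hp'
        simp only at h
        have h2 : (q - 1) * n + j = (q' - 1) * n + j' := by omega
        have hj : j = j' := by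
          rw [← Nat.mod_eq_of_lt hp.2, ← Nat.mul_add_mod' (q-1) n j, h2,
            Nat.mul_add_mod', Nat.mod_eq_of_lt hp'.2]
        subst hj
        have hq1 : q - 1 = q' - 1 := Nat.eq_of_mul_eq_mul_right hn (by omega)
        have : q = q' := by omega
        simp [this]
      calc ∑ p ∈ Ico 1 L ×ˢ range n, a ((p.1 - 1) * n + k + p.2)
          = ∑ m ∈ (Ico 1 L ×ˢ range n).image (fun p : ℕ × ℕ => (p.1 - 1) * n + k + p.2),
              a m := (sum_image hinj2).symm
        _ ≤ 1 := hT _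
    have hIco : ∑ q ∈ Ico 1 L, a (q * n + k) ≤ 1 / n := by
      have h1 : (n : ℝ) * ∑ q ∈ Ico 1 L, a (q * n + k) ≤ 1 := by
        rw [mul_sum]
        exact le_trans (sum_le_sum hstep) hdouble
      rw [le_div_iff₀ hnR]
      linarith [h1]
    rw [hsplit]
    linarith [ha0 k, hIco]
  -- lower bound
  have hlb : 1 / n - a 0 ≤ ∑ q ∈ range L, a (q * n + k) := by
    have hstep : ∀ q ∈ range L, ∑ j ∈ range n, a (q * n + k + j) ≤ (n : ℝ) * a (q * n + k) := by
      intro q _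
      calc ∑ j ∈ range n, a (q * n + k + j) ≤ ∑ _j ∈ range n, a (q * n + k) :=
            sum_le_sum fun j _ => ha (by omega)
        _ = (n : ℝ) * a (q * n + k) := by simp [mul_comm]
    have hinj3 : Set.InjOn (fun p : ℕ × ℕ => p.1 * n + k + p.2)
        ((range L ×ˢ range n : Finset (ℕ × ℕ)) : Set (ℕ × ℕ)) := by
      rintro ⟨q, j⟩ hp ⟨q', j'⟩ hp' h
      simp only [coe_product, Set.mem_prod, mem_coe, mem_range] at hp hp'
      simp only at h
      have h2 : q * n + j = q' * n + j' := by omega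
      have hj : j = j' := by
        rw [← Nat.mod_eq_of_lt hp.2, ← Nat.mul_add_mod' q n j, h2,
          Nat.mul_add_mod', Nat.mod_eq_of_lt hp'.2]
      subst hj
      have : q = q' := Nat.eq_of_mul_eq_mul_right hn (by omega)
      simp [this]
    have hcover : range L \ range k ⊆
        (range L ×ˢ range n).image (fun p : ℕ × ℕ => p.1 * n + k + p.2) := by
      intro m hm
      simp only [Finset.mem_sdiff, Finset.mem_range, not_lt] at hm
      simp only [mem_image, mem_product, mem_range]
      refine ⟨((m - k) / n, (m - k) % n), ⟨?_, Nat.mod_lt _ hn⟩, ?_⟩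
      · have := Nat.div_le_self (m - k) n
        omega
      · have := Nat.div_add_mod' (m - k) n
        simp only
        omega
    have h2 : ∑ m ∈ range L \ range k, a m
        ≤ ∑ m ∈ (range L ×ˢ range n).image (fun p : ℕ × ℕ => p.1 * n + k + p.2), a m :=
      sum_le_sum_of_subset_of_nonneg hcover (fun m _ _ => hpos m)
    have h3 : ∑ m ∈ (range L ×ˢ range n).image (fun p : ℕ × ℕ => p.1 * n + k + p.2), a m
        = ∑ p ∈ range L ×ˢ range n, a (p.1 * n + k + p.2) := sum_image hinj3
    have h4 : ∑ m ∈ range L \ range k, a m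
        = (∑ m ∈ range L, a m) - ∑ m ∈ range k, a m :=
      sum_sdiff_eq_sub (by intro m; simp only [mem_range]; omega)
    have h5 : ∑ m ∈ range k, a m ≤ (k : ℝ) * a 0 := by
      calc ∑ m ∈ range k, a m ≤ ∑ _m ∈ range k, a 0 := sum_le_sum fun m _ => ha0 m
        _ = (k : ℝ) * a 0 := by simp [mul_comm]
    have hkn : (k : ℝ) ≤ (n : ℝ) := by exact_mod_cast hk.le
    have hfull : (1 : ℝ) - (n : ℝ) * a 0 ≤ (n : ℝ) * ∑ q ∈ range L, a (q * n + k) := by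
      have e1 : (n : ℝ) * ∑ q ∈ range L, a (q * n + k)
          = ∑ q ∈ range L, (n : ℝ) * a (q * n + k) := mul_sum _ _ _
      have e2 : ∑ p ∈ range L ×ˢ range n, a (p.1 * n + k + p.2)
          = ∑ q ∈ range L, ∑ j ∈ range n, a (q * n + k + j) := sum_product _ _ _
      have := sum_le_sum hstep
      have h0a := hpos 0
      nlinarith [ha0 0]
    have : ((1 : ℝ) - (n : ℝ) * a 0) / n ≤ ∑ q ∈ range L, a (q * n + k) := by
      rw [div_le_iff₀ hnR]
      linarith
    have e3 : ((1 : ℝ) - (n : ℝ) * a 0) / n = 1 / n - a 0 := by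
      field_simp
    linarith [e3 ▸ this]
  rw [abs_le]
  constructor <;> linarith



section RokhlinAux

variable {X : Type*} [MeasurableSpace X] {μ : Measure X} {f : ℤ → X → X}

variable (f) in
/-- `B` is `N`-discrete: forward translates up to `N-1` steps stay out of `B`. -/
def ZDisj (N : ℕ) (B : Set X) : Prop :=
  ∀ j : ℤ, 0 < j → j < N → ∀ x ∈ B, f j x ∉ B

section Basics

variable (hadd : ∀ a b : ℤ, ∀ x, f (a + b) x = f a (f b x)) (h0 : ∀ x, f 0 x = x)

include hadd h0

theorem finv (a : ℤ) (x : X) : f (-a) (f a x) = x := by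
  rw [← hadd, neg_add_cancel, h0]

theorem fimage (a : ℤ) (Q : Set X) : f a '' Q = f (-a) ⁻¹' Q := by
  ext x
  constructor
  · rintro ⟨q, hq, rfl⟩
    simpa [finv hadd h0] using hq
  · intro hx
    exact ⟨f (-a) x, hx, by simpa using finv hadd h0 (-a) x⟩

end Basics

/-- Claim D: any positive measure set contains a positive measure `N`-discrete subset. -/
theorem exists_disj_subset [MeasurableSpace.CountablySeparated X]
    (hmp : ∀ m : ℤ, Measurable (f m)) (h0 : ∀ x, f 0 x = x)
    (hfree : ∀ᵐ x ∂μ, ∀ γ γ' : ℤ, γ ≠ γ' → f γ x ≠ f γ' x)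
    (N : ℕ) (W : Set X) (hW : MeasurableSet W) (hWpos : 0 < μ W) :
    ∃ B, B ⊆ W ∧ MeasurableSet B ∧ ZDisj f N B ∧ 0 < μ B := by
  obtain ⟨S, hScount, hSmeas, hSsep⟩ :=
    exists_countable_separating X MeasurableSet Set.univ
  -- enumerate (insert univ S)
  obtain ⟨e, hrange, hemeas0⟩ :
      ∃ e : ℕ → Set X, (∀ s ∈ S, ∃ i, e i = s) ∧ ∀ i, MeasurableSet (e i) := by
    rcases Set.eq_empty_or_nonempty S with rfl | hne
    · exact ⟨fun _ => ∅, by simp, fun _ => MeasurableSet.empty⟩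
    · obtain ⟨e, he⟩ := (Set.countable_iff_exists_surjective hne).1 hScount
      exact ⟨fun i => (e i : Set X), fun s hs => by
        obtain ⟨i, hi⟩ := he ⟨s, hs⟩
        exact ⟨i, congrArg Subtype.val hi⟩, fun i => hSmeas _ (e i).2⟩
  have hemeas : ∀ i b, MeasurableSet (cond b (e i) (e i)ᶜ) := by
    intro i b; cases b
    · exact (hemeas0 i).compl
    · exact hemeas0 i
  classical
  -- the candidate sets
  let B : (Fin N → ℕ × Bool) → Set X := fun c =>
    W ∩ ⋂ j : Fin N, {x | 0 < (j : ℕ) →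
      (x ∈ cond (c j).2 (e (c j).1) (e (c j).1)ᶜ ∧
        f (j : ℕ) x ∉ cond (c j).2 (e (c j).1) (e (c j).1)ᶜ)}
  have hBmeas : ∀ c, MeasurableSet (B c) := by
    intro c
    refine hW.inter (MeasurableSet.iInter fun j => ?_)
    by_cases hj : 0 < (j : ℕ)
    · have : {x | 0 < (j : ℕ) →
          (x ∈ cond (c j).2 (e (c j).1) (e (c j).1)ᶜ ∧
            f (j : ℕ) x ∉ cond (c j).2 (e (c j).1) (e (c j).1)ᶜ)} =
          (cond (c j).2 (e (c j).1) (e (c j).1)ᶜ) ∩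
            (f (j : ℕ)) ⁻¹' (cond (c j).2 (e (c j).1) (e (c j).1)ᶜ)ᶜ := by
        ext x; simp [hj]
      rw [this]
      exact (hemeas _ _).inter ((hmp _) ((hemeas _ _).compl))
    · have : {x | 0 < (j : ℕ) →
          (x ∈ cond (c j).2 (e (c j).1) (e (c j).1)ᶜ ∧
            f (j : ℕ) x ∉ cond (c j).2 (e (c j).1) (e (c j).1)ᶜ)} = Set.univ := by
        ext x; simp [hj]
      rw [this]; exact MeasurableSet.univ
  have hBdisj : ∀ c, ZDisj f N (B c) := by
    intro c j hj hjN x hx hx'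
    lift j to ℕ using hj.le with jn
    have hjn : 0 < jn := by exact_mod_cast hj
    have hjnN : jn < N := by exact_mod_cast hjN
    have h1 := hx.2
    have h2 := hx'.2
    simp only [Set.mem_iInter, Set.mem_setOf_eq] at h1 h2
    have hxj := (h1 ⟨jn, hjnN⟩ (by simpa using hjn)).2
    have hxj' := (h2 ⟨jn, hjnN⟩ (by simpa using hjn)).1
    exact hxj (by simpa using hxj')
  -- a.e. coverage
  have hcov : ∀ᵐ x ∂μ, x ∈ W → ∃ c, x ∈ B c := by
    filter_upwards [hfree] with x hxf hxW
    have hchoice : ∀ j : Fin N, ∃ ib : ℕ × Bool, 0 < (j : ℕ) →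
        (x ∈ cond ib.2 (e ib.1) (e ib.1)ᶜ ∧
          f (j : ℕ) x ∉ cond ib.2 (e ib.1) (e ib.1)ᶜ) := by
      intro j
      by_cases hj : 0 < (j : ℕ)
      · have hne : x ≠ f (j : ℕ) x := by
          have := hxf 0 (j : ℕ) (by exact_mod_cast hj.ne)
          simpa [h0] using this
        have : ¬ ∀ s ∈ S, x ∈ s ↔ f (j : ℕ) x ∈ s := by
          intro hs
          exact hne (hSsep x trivial _ trivial hs)
        push_neg at this
        obtain ⟨s, hsS, hsep⟩ := this
        obtain ⟨i, rfl⟩ := hrange s hsS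
        by_cases hxs : x ∈ e i
        · refine ⟨(i, true), fun _ => ⟨by simpa using hxs, ?_⟩⟩
          simp only [cond]
          tauto
        · refine ⟨(i, false), fun _ => ⟨by simpa using hxs, ?_⟩⟩
          simp only [cond, Set.mem_compl_iff, not_not]
          tauto
      · exact ⟨(0, true), fun h => absurd h hj⟩
    choose c hc using hchoice
    exact ⟨c, hxW, Set.mem_iInter.2 fun j => hc j⟩
  -- some B c has positive measure
  by_contra hcon
  push_neg at hcon
  have hzero : ∀ c, μ (B c) = 0 := by
    intro c
    by_contra hc
    exact absurd (hcon (B c) (fun x hx => hx.1) (hBmeas c) (hBdisj c))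
      (by simp [pos_iff_ne_zero, hc])
  have : μ W = 0 := by
    have hsub : W ⊆ (⋃ c, B c) ∪ {x | ¬ (x ∈ W → ∃ c, x ∈ B c)} := by
      intro x hx
      by_cases h : ∃ c, x ∈ B c
      · exact Or.inl (Set.mem_iUnion.2 h)
      · exact Or.inr (fun himp => h (himp hx))
    refine le_antisymm ?_ zero_le
    calc μ W ≤ μ ((⋃ c, B c) ∪ {x | ¬ (x ∈ W → ∃ c, x ∈ B c)}) := measure_mono hsub
      _ ≤ μ (⋃ c, B c) + μ {x | ¬ (x ∈ W → ∃ c, x ∈ B c)} := measure_union_le _ _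
      _ = 0 := by
          rw [ae_iff] at hcov
          rw [measure_iUnion_null hzero, zero_add]
          exact hcov
  exact absurd this hWpos.ne'

/-- The marker lemma: an `N`-discrete set whose `(N-1)`-window saturation is conull. -/
theorem exists_marker [MeasurableSpace.CountablySeparated X] [IsFiniteMeasure μ]
    (hmp : ∀ m : ℤ, Measurable (f m)) (h0 : ∀ x, f 0 x = x)
    (hadd : ∀ a b : ℤ, ∀ x, f (a + b) x = f a (f b x))
    (hfree : ∀ᵐ x ∂μ, ∀ γ γ' : ℤ, γ ≠ γ' → f γ x ≠ f γ' x)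
    (N : ℕ) (hN : 0 < N) :
    ∃ A, MeasurableSet A ∧ ZDisj f N A ∧
      μ (⋃ j ∈ Finset.Icc (-(N : ℤ) + 1) ((N : ℤ) - 1), f j ⁻¹' A)ᶜ = 0 := by
  classical
  set V : Set X → Set X := fun B => ⋃ j ∈ Finset.Icc (-(N : ℤ) + 1) ((N : ℤ) - 1), f j ⁻¹' B
    with hV
  have hVmeas : ∀ B : Set X, MeasurableSet B → MeasurableSet (V B) := fun B hB =>
    MeasurableSet.biUnion (Finset.countable_toSet _) (fun j _ => (hmp j) hB)
  have hVmono : ∀ B C : Set X, B ⊆ C → V B ⊆ V C := fun B C h =>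
    Set.iUnion₂_mono fun j _ => Set.preimage_mono h
  have hzeroIcc : (0 : ℤ) ∈ Finset.Icc (-(N : ℤ) + 1) ((N : ℤ) - 1) := by
    simp only [Finset.mem_Icc]
    omega
  have hself : ∀ B : Set X, B ⊆ V B := fun B x hx =>
    Set.mem_biUnion hzeroIcc (by simpa [h0] using hx)
  have hmemV : ∀ (B C : Set X) (j : ℤ), B ⊆ C → -(N : ℤ) + 1 ≤ -j → -j ≤ (N : ℤ) - 1 →
      ∀ x ∈ B, f j x ∈ V C := by
    intro B C j hBC h1 h2 x hx
    refine Set.mem_biUnion (Finset.mem_Icc.2 ⟨h1, h2⟩) ?_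
    have : f (-j) (f j x) = x := by rw [← hadd, neg_add_cancel, h0]
    simpa [this] using hBC hx
  -- the near-maximal choice function
  have hchoice : ∀ W : Set X, ∃ B : Set X, B ⊆ W ∧ MeasurableSet B ∧ ZDisj f N B ∧
      (⨆ C : {C : Set X // C ⊆ W ∧ MeasurableSet C ∧ ZDisj f N C}, μ C.1) ≤ 2 * μ B := by
    intro W
    set s := ⨆ C : {C : Set X // C ⊆ W ∧ MeasurableSet C ∧ ZDisj f N C}, μ C.1 with hs
    rcases eq_or_ne s 0 with h0s | h0s
    · exact ⟨∅, Set.empty_subset _, MeasurableSet.empty,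
        fun j _ _ x hx => absurd hx (Set.notMem_empty x), by simp [h0s]⟩
    · have hstop : s ≠ ⊤ := by
        refine ne_of_lt (lt_of_le_of_lt (iSup_le fun C => ?_) (measure_lt_top μ Set.univ))
        exact measure_mono (Set.subset_univ _)
      have hhalf : s / 2 < s := ENNReal.half_lt_self h0s hstop
      rw [hs] at hhalf
      obtain ⟨⟨B, hBW, hBm, hBd⟩, hlt⟩ := lt_iSup_iff.1 hhalf
      refine ⟨B, hBW, hBm, hBd, ?_⟩
      calc s = 2 * (s / 2) := (ENNReal.mul_div_cancel two_ne_zero ENNReal.ofNat_ne_top).symm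
        _ ≤ 2 * μ B := mul_le_mul_right hlt.le 2
  choose Φ hΦ1 hΦ2 hΦ3 hΦ4 using hchoice
  set U : ℕ → Set X := fun k => Nat.rec ∅ (fun _ Uk => Uk ∪ Φ (V Uk)ᶜ) k with hU
  set A : ℕ → Set X := fun k => Φ (V (U k))ᶜ with hA
  have hUsucc : ∀ k, U (k + 1) = U k ∪ A k := fun k => rfl
  have hAsub : ∀ k, A k ⊆ (V (U k))ᶜ := fun k => hΦ1 _
  have hAmeas : ∀ k, MeasurableSet (A k) := fun k => hΦ2 _
  have hAdisj : ∀ k, ZDisj f N (A k) := fun k => hΦ3 _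
  have hUmono : ∀ k l, k ≤ l → U k ⊆ U l := by
    intro k l hkl
    induction l with
    | zero => simp_all
    | succ l ih =>
      rcases Nat.lt_or_ge k (l + 1) with h | h
      · exact (ih (by omega)).trans (by rw [hUsucc]; exact Set.subset_union_left)
      · have : k = l + 1 := by omega
        subst this; exact subset_rfl
  have hAU : ∀ l k, l < k → A l ⊆ U k := by
    intro l k hlk
    refine Set.Subset.trans ?_ (hUmono (l + 1) k hlk)
    rw [hUsucc]; exact Set.subset_union_right
  set Ainf : Set X := ⋃ k, A k with hAinf
  have hAinfMeas : MeasurableSet Ainf := MeasurableSet.iUnion hAmeas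
  have hdisj : ZDisj f N Ainf := by
    intro j hj hjN x hx hx'
    obtain ⟨l, hl⟩ := Set.mem_iUnion.1 hx
    obtain ⟨m, hm⟩ := Set.mem_iUnion.1 hx'
    have hjIcc1 : -(N : ℤ) + 1 ≤ -j := by omega
    have hjIcc2 : -j ≤ (N : ℤ) - 1 := by omega
    rcases lt_trichotomy l m with h | h | h
    · exact hAsub m hm (hmemV (A l) (U m) j (hAU l m h) hjIcc1 hjIcc2 x hl)
    · subst h; exact hAdisj l j hj hjN x hl hm
    · -- m < l : x ∈ A l ⊆ (V (U l))ᶜ but x ∈ f j ⁻¹' (A m) ⊆ V (U l)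
      refine hAsub l hl ?_
      refine Set.mem_biUnion (Finset.mem_Icc.2 ⟨by omega, by omega⟩) (x := j) ?_
      exact hAU m l h hm
  refine ⟨Ainf, hAinfMeas, hdisj, ?_⟩
  by_contra hpos
  have hpos : 0 < μ (V Ainf)ᶜ := pos_iff_ne_zero.2 hpos
  obtain ⟨B, hBsub, hBmeas, hBdisj, hBpos⟩ := exists_disj_subset hmp h0 hfree N (V Ainf)ᶜ
    (hVmeas _ hAinfMeas).compl hpos
  have hUA : ∀ k, U k ⊆ Ainf := by
    intro k
    induction k with
    | zero => exact Set.empty_subset _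
    | succ k ih =>
      rw [hUsucc]
      exact Set.union_subset ih (Set.subset_iUnion A k)
  have hBk : ∀ k, B ⊆ (V (U k))ᶜ :=
    fun k => hBsub.trans (Set.compl_subset_compl.2 (hVmono _ _ (hUA k)))
  have hAklb : ∀ k, μ B ≤ 2 * μ (A k) := by
    intro k
    refine le_trans ?_ (hΦ4 ((V (U k))ᶜ))
    exact le_iSup_of_le ⟨B, hBk k, hBmeas, hBdisj⟩ le_rfl
  -- A k are pairwise disjoint
  have hApd : ∀ l k, l < k → Disjoint (A l) (A k) := by
    intro l k hlk
    rw [Set.disjoint_left]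
    intro x hxl hxk
    exact hAsub k hxk (hself (U k) (hAU l k hlk hxl))
  have hsum : ∀ K : ℕ, (K : ℝ≥0∞) * (μ B / 2) ≤ μ Set.univ := by
    intro K
    have hdisjf : (Finset.range K : Set ℕ).Pairwise (Function.onFun Disjoint fun k => A k) := by
      intro a _ b _ hab
      rcases lt_or_gt_of_ne hab with h | h
      · exact hApd a b h
      · exact (hApd b a h).symm
    have hmbu := measure_biUnion_finset (μ := μ) hdisjf (fun k _ => hAmeas k)
    have hle : ∀ k ∈ Finset.range K, μ B / 2 ≤ μ (A k) := by
      intro k _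
      rw [ENNReal.div_le_iff_le_mul (Or.inl two_ne_zero) (Or.inl ENNReal.ofNat_ne_top)]
      rw [mul_comm]
      exact hAklb k
    calc (K : ℝ≥0∞) * (μ B / 2) = ∑ _k ∈ Finset.range K, μ B / 2 := by
          simp [Finset.sum_const, mul_comm]
      _ ≤ ∑ k ∈ Finset.range K, μ (A k) := Finset.sum_le_sum hle
      _ = μ (⋃ k ∈ Finset.range K, A k) := hmbu.symm
      _ ≤ μ Set.univ := measure_mono (Set.subset_univ _)
  have hc0 : μ B / 2 ≠ 0 := by
    simp only [ne_eq, ENNReal.div_eq_zero_iff]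
    push_neg
    exact ⟨hBpos.ne', ENNReal.ofNat_ne_top⟩
  have hbd : ∀ K : ℕ, (K : ℝ≥0∞) ≤ μ Set.univ / (μ B / 2) := by
    intro K
    rw [ENNReal.le_div_iff_mul_le (Or.inl hc0) (Or.inr (measure_ne_top μ _))]
    exact hsum K
  obtain ⟨K, hK⟩ := ENNReal.exists_nat_gt (ENNReal.div_lt_top (measure_ne_top μ _) hc0).ne
  exact absurd (hbd K) (not_le.2 hK)


variable {A : Set X} {N : ℕ}


/-- the set of points whose most recent visit to `A` (in the past) was `m` steps ago -/
def SmSet (f : ℤ → X → X) (A : Set X) (m : ℕ) : Set X :=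
  (f (-(m : ℤ)) ⁻¹' A) ∩ ⋂ t ∈ Finset.range m, (f (-(t : ℤ)) ⁻¹' A)ᶜ

theorem mem_SmSet {x : X} {m : ℕ} :
    x ∈ SmSet f A m ↔ f (-(m : ℤ)) x ∈ A ∧ ∀ t : ℕ, t < m → f (-(t : ℤ)) x ∉ A := by
  simp [SmSet]

theorem SmSet_measurable (hmp : ∀ k : ℤ, Measurable (f k)) (hA : MeasurableSet A) (m : ℕ) :
    MeasurableSet (SmSet f A m) :=
  ((hmp _) hA).inter (MeasurableSet.biInter (Finset.range m).countable_toSet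
    (fun t _ => ((hmp _) hA).compl))

theorem SmSet_disjoint {m m' : ℕ} (h : m ≠ m') : Disjoint (SmSet f A m) (SmSet f A m') := by
  rcases Nat.lt_or_ge m m' with hlt | hge
  · rw [Set.disjoint_left]
    intro x hx hx'
    exact (mem_SmSet.1 hx').2 m hlt (mem_SmSet.1 hx).1
  · have hlt : m' < m := by omega
    rw [Set.disjoint_right]
    intro x hx hx'
    exact (mem_SmSet.1 hx').2 m' hlt (mem_SmSet.1 hx).1

/-- the key shift property of the level sets -/
theorem SmSet_shift (h0 : ∀ x, f 0 x = x) (hadd : ∀ a b : ℤ, ∀ x, f (a + b) x = f a (f b x))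
    {γ : ℤ} {R : ℕ} (hγ : γ.natAbs ≤ R) {c : ℕ} {x : X} (hx : x ∈ SmSet f A c)
    (hbad : x ∉ ⋃ t ∈ Finset.Icc (-(R : ℤ)) (R : ℤ), f t ⁻¹' A) :
    0 ≤ (c : ℤ) - γ ∧ f (-γ) x ∈ SmSet f A ((c : ℤ) - γ).toNat := by
  rw [mem_SmSet] at hx
  simp only [Set.mem_iUnion, not_exists, Finset.mem_Icc, exists_prop, not_and] at hbad
  have hfc : ∀ u : ℤ, f u (f (-γ) x) = f (u - γ) x := by
    intro u
    rw [← hadd]; ring_nf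
  have he : 0 ≤ (c : ℤ) - γ := by
    by_contra hlt
    push_neg at hlt
    have hcR : (c : ℤ) < γ := by omega
    exact hbad (-(c : ℤ)) ⟨by omega, by omega⟩ hx.1
  refine ⟨he, mem_SmSet.2 ⟨?_, ?_⟩⟩
  · rw [hfc, Int.toNat_of_nonneg he]
    have : -((c : ℤ) - γ) - γ = -(c : ℤ) := by ring
    rw [this]
    exact hx.1
  · intro t ht
    rw [hfc]
    set u : ℤ := (t : ℤ) + γ with hu
    have huc : u < c := by
      have : (t : ℤ) < (c : ℤ) - γ := by
        rw [← Int.toNat_of_nonneg he]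
        exact_mod_cast ht
      omega
    have heq : -(t : ℤ) - γ = -u := by ring
    rw [heq]
    rcases le_or_gt 0 u with hu0 | hu0
    · have h2 := hx.2 u.toNat (by omega)
      rw [show -(u.toNat : ℤ) = -u by omega] at h2
      exact h2
    · exact hbad (-u) ⟨by omega, by omega⟩


end RokhlinAux


/-- Every free p.m.p. action of `ℤ` on a standard Borel probability space weakly contains,
for every `n > 0`, the cyclic action of `ℤ` on `n` points with uniform measure. -/
theorem free_Z_action_weakly_contains_cyclic
    {X : Type*} [MeasurableSpace X] [StandardBorelSpace X]
    (μ : Measure X) [IsProbabilityMeasure μ]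
    (f : ℤ → X → X) (hf : IsPMPActionZ f μ) (hfree : IsFreeAction f μ)
    (n : ℕ) (hn : 0 < n) :
    WeaklyContains f μ (fun (m : ℤ) (y : ZMod n) => y + (m : ZMod n))
      ((n : ENNReal)⁻¹ • Measure.count) := by
  classical
  haveI : NeZero n := ⟨hn.ne'⟩
  haveI : MeasurableSpace.CountablySeparated X := by
    letI := upgradeStandardBorel X; infer_instance
  obtain ⟨hmp0, h0, hadd⟩ := hf
  have hmp : ∀ k : ℤ, Measurable (f k) := fun k => (hmp0 k).measurable
  intro nn Ys hYs S ε hε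
  set R : ℕ := S.sup fun γ => γ.natAbs with hR
  obtain ⟨N₀, hN₀⟩ := exists_nat_gt ((4 * R + n + 2 : ℝ) / ε)
  set N : ℕ := N₀ + R + n + 1 with hNdef
  have hNpos : 0 < N := by omega
  have hNR : R < N := by omega
  have hNn : n < N := by omega
  have hNposR : (0 : ℝ) < N := by exact_mod_cast hNpos
  have hNerr : (4 * R + n + 1 : ℝ) / N < ε := by
    have hNge : (N₀ : ℝ) ≤ N := by exact_mod_cast (by omega : N₀ ≤ N)
    have h1 : (4 * R + n + 2 : ℝ) / ε < N := lt_of_lt_of_le hN₀ hNge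
    rw [div_lt_iff₀ hε] at h1
    rw [div_lt_iff₀ hNposR]
    nlinarith
  obtain ⟨A, hAmeas, hAdisj, hAnull⟩ := exists_marker hmp h0 hadd hfree N hNpos
  set L : ℕ := 2 * N - 1 with hLdef
  have hLN : n ≤ L := by omega
  have hprein : ∀ (t : ℤ) (Q : Set X), MeasurableSet Q → μ (f t ⁻¹' Q) = μ Q :=
    fun t Q hQ => (hmp0 t).measure_preimage hQ.nullMeasurableSet
  -- the level sets cover a.e.
  set U : Set X := ⋃ m ∈ Finset.range L, SmSet f A m with hUdef
  have hUmeas : MeasurableSet U :=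
    MeasurableSet.biUnion (Finset.range L).countable_toSet
      (fun m _ => SmSet_measurable hmp hAmeas m)
  have hcoverNull : μ Uᶜ = 0 := by
    set G : Set X := ⋃ j ∈ Finset.Icc (-(N : ℤ) + 1) ((N : ℤ) - 1), f j ⁻¹' A with hGdef
    have hGmeas : MeasurableSet G :=
      MeasurableSet.biUnion (Finset.Icc _ _).countable_toSet (fun j _ => (hmp j) hAmeas)
    have hsub : f (-(N : ℤ) + 1) ⁻¹' G ⊆ U := by
      intro x hx
      rw [Set.mem_preimage, hGdef, Set.mem_iUnion₂] at hx
      obtain ⟨j, hj, hmem⟩ := hx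
      rw [Finset.mem_Icc] at hj
      rw [Set.mem_preimage] at hmem
      have hA1 : f (j + (-(N : ℤ) + 1)) x ∈ A := by rw [hadd]; exact hmem
      have hex : ∃ m : ℕ, f (-(m : ℤ)) x ∈ A :=
        ⟨((N : ℤ) - 1 - j).toNat, by
          rw [show -((((N : ℤ) - 1 - j).toNat : ℕ) : ℤ) = j + (-(N : ℤ) + 1) by omega]
          exact hA1⟩
      set m₀ : ℕ := Nat.find hex with hm₀
      have hm₀A : f (-(m₀ : ℤ)) x ∈ A := Nat.find_spec hex
      have hm₀min : ∀ t : ℕ, t < m₀ → f (-(t : ℤ)) x ∉ A := fun t ht => Nat.find_min hex ht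
      have hm₀L : m₀ < L := by
        have : m₀ ≤ ((N : ℤ) - 1 - j).toNat := Nat.find_min' hex (by
          rw [show -((((N : ℤ) - 1 - j).toNat : ℕ) : ℤ) = j + (-(N : ℤ) + 1) by omega]
          exact hA1)
        omega
      exact Set.mem_biUnion (Finset.mem_range.2 hm₀L) (mem_SmSet.2 ⟨hm₀A, hm₀min⟩)
    have : Uᶜ ⊆ f (-(N : ℤ) + 1) ⁻¹' Gᶜ := by
      rw [Set.preimage_compl]
      exact Set.compl_subset_compl.2 hsub
    refine le_antisymm (le_trans (measure_mono this) ?_) zero_le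
    rw [hprein _ _ hGmeas.compl]
    rw [hGdef] at hAnull ⊢
    exact le_of_eq hAnull
  have hUfull : μ U = 1 := (prob_compl_eq_zero_iff hUmeas).1 hcoverNull
  -- the level measures
  set a : ℕ → ℝ := fun m => (μ (SmSet f A m)).toReal with ha
  have hapos : ∀ m, 0 ≤ a m := fun m => ENNReal.toReal_nonneg
  have hamono : Antitone a := by
    refine antitone_nat_of_succ_le (fun m => ?_)
    have hsub : SmSet f A (m + 1) ⊆ f (-1 : ℤ) ⁻¹' (SmSet f A m) := by
      intro x hx
      rw [mem_SmSet] at hx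
      rw [Set.mem_preimage, mem_SmSet]
      constructor
      · have he : f (-(m : ℤ)) (f (-1) x) = f (-((m + 1 : ℕ) : ℤ)) x := by
          rw [← hadd]
          norm_num
          ring_nf
        rw [he]
        exact hx.1
      · intro t ht
        have he : f (-(t : ℤ)) (f (-1) x) = f (-((t + 1 : ℕ) : ℤ)) x := by
          rw [← hadd]
          norm_num
          ring_nf
        rw [he]
        exact hx.2 (t + 1) (by omega)
    have hle : μ (SmSet f A (m + 1)) ≤ μ (SmSet f A m) := by
      calc μ (SmSet f A (m + 1)) ≤ μ (f (-1 : ℤ) ⁻¹' SmSet f A m) := measure_mono hsub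
        _ = μ (SmSet f A m) := hprein _ _ (SmSet_measurable hmp hAmeas m)
    exact ENNReal.toReal_mono (measure_ne_top μ _) hle
  have hzero : ∀ m, L ≤ m → a m = 0 := by
    intro m hm
    have hsub : SmSet f A m ⊆ Uᶜ := by
      intro x hx
      rw [hUdef]
      simp only [Set.mem_compl_iff, Set.mem_iUnion, Finset.mem_range, exists_prop, not_exists,
        not_and]
      intro m' hm'
      exact fun hx' =>
        (Set.disjoint_left.1 (SmSet_disjoint (show m ≠ m' by omega))) hx hx'
    have : μ (SmSet f A m) = 0 :=
      le_antisymm (le_trans (measure_mono hsub) (le_of_eq hcoverNull)) zero_le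
    simp [ha, this]
  have hsum1 : ∑ m ∈ Finset.range L, a m = 1 := by
    have hpd : ((Finset.range L : Finset ℕ) : Set ℕ).Pairwise
        (Function.onFun Disjoint fun m => SmSet f A m) :=
      fun m _ m' _ hne => SmSet_disjoint hne
    have hbu : μ U = ∑ m ∈ Finset.range L, μ (SmSet f A m) := by
      rw [hUdef]
      exact measure_biUnion_finset hpd (fun m _ => SmSet_measurable hmp hAmeas m)
    have := ENNReal.toReal_sum (s := Finset.range L) (f := fun m => μ (SmSet f A m))
      (fun m _ => measure_ne_top μ _)
    rw [← this, ← hbu, hUfull]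
    simp
  have ha0eq : a 0 = (μ A).toReal := by
    have : SmSet f A 0 = A := by
      ext x
      simp [mem_SmSet, h0]
    show (μ (SmSet f A 0)).toReal = (μ A).toReal
    rw [this]
  have ha0le : a 0 ≤ 1 / N := by
    -- the sets f (j:ℤ) ⁻¹' A for j ∈ range N are pairwise disjoint
    have hpd : ((Finset.range N : Finset ℕ) : Set ℕ).Pairwise
        (Function.onFun Disjoint fun j => f (j : ℤ) ⁻¹' A) := by
      intro p hp q hq hne
      have key : ∀ p q : ℕ, p < q → q < N → Disjoint (f (p : ℤ) ⁻¹' A) (f (q : ℤ) ⁻¹' A) := by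
        intro p q hpq hqN
        rw [Set.disjoint_left]
        intro x hxp hxq
        rw [Set.mem_preimage] at hxp hxq
        have : f ((q : ℤ) - p) (f (p : ℤ) x) = f (q : ℤ) x := by
          rw [← hadd]
          norm_num
        exact hAdisj ((q : ℤ) - p) (by omega) (by
          simp only [Finset.mem_coe, Finset.mem_range] at hq
          omega) _ hxp (this ▸ hxq)
      simp only [Finset.mem_coe, Finset.mem_range] at hp hq
      rcases lt_or_gt_of_ne hne with h | h
      · exact key p q h hq
      · exact (key q p h hp).symm
    have hbu : μ (⋃ j ∈ Finset.range N, f (j : ℤ) ⁻¹' A)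
        = ∑ j ∈ Finset.range N, μ (f (j : ℤ) ⁻¹' A) :=
      measure_biUnion_finset hpd (fun j _ => (hmp _) hAmeas)
    have hsum : ∑ j ∈ Finset.range N, μ (f (j : ℤ) ⁻¹' A) = N * μ A := by
      rw [Finset.sum_congr rfl (fun j _ => hprein _ _ hAmeas)]
      simp [Finset.sum_const, mul_comm]
    have hle1 : (N : ℝ≥0∞) * μ A ≤ 1 := by
      rw [← hsum, ← hbu]
      exact le_trans (measure_mono (Set.subset_univ _)) (le_of_eq measure_univ)
    have hle1' : (N : ℝ) * (μ A).toReal ≤ 1 := by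
      have := ENNReal.toReal_mono (by simp) hle1
      rwa [ENNReal.toReal_mul, ENNReal.toReal_natCast, ENNReal.toReal_one] at this
    rw [ha0eq, le_div_iff₀ hNposR]
    linarith
  -- the approximating sets
  set Xs : Fin nn → Set X := fun i =>
    ⋃ m ∈ (Finset.range L).filter (fun m : ℕ => ((m : ZMod n)) ∈ Ys i), SmSet f A m with hXs
  have hXsMeas : ∀ i, MeasurableSet (Xs i) := fun i =>
    MeasurableSet.biUnion (Finset.countable_toSet _) (fun m _ => SmSet_measurable hmp hAmeas m)
  have hXmem : ∀ (i : Fin nn) (m : ℕ) (x : X), x ∈ SmSet f A m →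
      (x ∈ Xs i ↔ (m < L ∧ (m : ZMod n) ∈ Ys i)) := by
    intro i m x hx
    constructor
    · intro hmem
      rw [hXs] at hmem
      simp only [Set.mem_iUnion, Finset.mem_filter, Finset.mem_range, exists_prop] at hmem
      obtain ⟨m', ⟨hm'L, hm'c⟩, hxm'⟩ := hmem
      have : m = m' := by
        by_contra hne
        exact (Set.disjoint_left.1 (SmSet_disjoint hne)) hx hxm'
      subst this
      exact ⟨hm'L, hm'c⟩
    · intro ⟨h1, h2⟩
      rw [hXs]
      exact Set.mem_biUnion (Finset.mem_filter.2 ⟨Finset.mem_range.2 h1, h2⟩) hx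
  refine ⟨Xs, hXsMeas, ?_⟩
  intro i j γ hγS
  have hγR : γ.natAbs ≤ R := Finset.le_sup (f := fun γ : ℤ => γ.natAbs) hγS
  -- bad set of points near a marker visit
  set Bad : Set X := ⋃ t ∈ Finset.Icc (-(R : ℤ)) (R : ℤ), f t ⁻¹' A with hBadDef
  have hBadMeas : MeasurableSet Bad :=
    MeasurableSet.biUnion (Finset.countable_toSet _) (fun t _ => (hmp t) hAmeas)
  have hBadBound : (μ Bad).toReal ≤ (2 * R + 1) * a 0 := by
    have h1 : μ Bad ≤ ∑ t ∈ Finset.Icc (-(R : ℤ)) (R : ℤ), μ (f t ⁻¹' A) :=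
      measure_biUnion_finset_le _ _
    have h2 : ∑ t ∈ Finset.Icc (-(R : ℤ)) (R : ℤ), μ (f t ⁻¹' A)
        = ((2 * R + 1 : ℕ) : ℝ≥0∞) * μ A := by
      rw [Finset.sum_congr rfl (fun t _ => hprein t A hAmeas), Finset.sum_const,
        Int.card_Icc]
      simp only [nsmul_eq_mul]
      congr 1
      norm_cast
      omega
    have h3 := ENNReal.toReal_mono (a := μ Bad) (b := ((2 * R + 1 : ℕ) : ℝ≥0∞) * μ A)
      (ENNReal.mul_ne_top (ENNReal.natCast_ne_top _) (measure_ne_top μ _)) (h2 ▸ h1)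
    rw [ENNReal.toReal_mul, ENNReal.toReal_natCast] at h3
    calc (μ Bad).toReal ≤ ((2 * R + 1 : ℕ) : ℝ) * (μ A).toReal := h3
      _ = (2 * R + 1) * a 0 := by rw [ha0eq]; push_cast; ring
  -- the set whose measure we must estimate
  set T : Set X := f γ '' Xs i ∩ Xs j with hTdef
  have hTpre : T = (f (-γ) ⁻¹' Xs i) ∩ Xs j := by
    rw [hTdef, fimage hadd h0]
  have hTmeas : MeasurableSet T := by
    rw [hTpre]
    exact ((hmp _) (hXsMeas i)).inter (hXsMeas j)
  -- the target finite set
  set DF : Finset (ZMod n) :=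
    Finset.univ.filter (fun k => k - (γ : ZMod n) ∈ Ys i ∧ k ∈ Ys j) with hDFdef
  have hDFcard : (DF.card : ℝ) ≤ n := by
    have h1 : DF.card ≤ Fintype.card (ZMod n) :=
      le_trans (Finset.card_le_card (Finset.subset_univ DF)) (le_of_eq Finset.card_univ)
    have h2 : Fintype.card (ZMod n) = n := ZMod.card n
    exact_mod_cast h1.trans (le_of_eq h2)
  -- value of ν on the target set
  haveI : MeasurableSingletonClass (ZMod n) := ⟨fun _ => MeasurableSpace.measurableSet_top⟩
  have hνval : ((((n : ENNReal)⁻¹ • Measure.count : Measure (ZMod n)))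
      ((fun (y : ZMod n) => y + (γ : ZMod n)) '' Ys i ∩ Ys j)).toReal = (DF.card : ℝ) / n := by
    have hset : (fun (y : ZMod n) => y + (γ : ZMod n)) '' Ys i ∩ Ys j = (DF : Set (ZMod n)) := by
      ext k
      simp only [Set.mem_inter_iff, Set.mem_image, hDFdef, Finset.coe_filter, Finset.mem_univ,
        true_and, Set.mem_setOf_eq]
      constructor
      · rintro ⟨⟨y, hy, rfl⟩, hk2⟩
        refine ⟨by simpa using hy, hk2⟩
      · rintro ⟨hk1, hk2⟩
        exact ⟨⟨k - (γ : ZMod n), hk1, by ring⟩, hk2⟩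
    rw [hset, Measure.smul_apply, Measure.count_apply_finset, smul_eq_mul,
      ENNReal.toReal_mul, ENNReal.toReal_inv, ENNReal.toReal_natCast, ENNReal.toReal_natCast]
    rw [inv_mul_eq_div]
  -- per-level quantities
  set u : ℕ → ℝ := fun c => (μ (SmSet f A c ∩ T)).toReal with hu
  set b : ℕ → ℝ := fun c => (μ (SmSet f A c ∩ Bad)).toReal with hb
  set Cond : ℕ → Prop := fun c => ((c : ZMod n) - (γ : ZMod n) ∈ Ys i ∧ (c : ZMod n) ∈ Ys j)
    with hCond
  set w : ℕ → ℝ := fun c => if (0 ≤ (c : ℤ) - γ ∧ ((c : ℤ) - γ).toNat < L) then 0 else a c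
    with hw
  have hupos : ∀ c, 0 ≤ u c := fun c => ENNReal.toReal_nonneg
  have hbpos : ∀ c, 0 ≤ b c := fun c => ENNReal.toReal_nonneg
  have hwpos : ∀ c, 0 ≤ w c := fun c => by
    rw [hw]
    dsimp only
    split
    · exact le_refl 0
    · exact hapos c
  -- sum of u over range L is μ T
  have hu_sum : ∑ c ∈ Finset.range L, u c = (μ T).toReal := by
    have h1 : T ∩ U = ⋃ c ∈ Finset.range L, SmSet f A c ∩ T := by
      rw [hUdef]
      ext x
      simp only [Set.mem_inter_iff, Set.mem_iUnion, exists_prop, Finset.mem_range]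
      tauto
    have h2 : μ T ≤ μ (T ∩ U) := by
      calc μ T = μ ((T ∩ U) ∪ (T \ U)) := by rw [Set.inter_union_diff]
        _ ≤ μ (T ∩ U) + μ (T \ U) := measure_union_le _ _
        _ ≤ μ (T ∩ U) + μ Uᶜ := by
            exact add_le_add_right (measure_mono (Set.diff_subset_compl T U)) _
        _ = μ (T ∩ U) := by rw [hcoverNull, add_zero]
    have h3 : μ T = μ (T ∩ U) := le_antisymm h2 (measure_mono Set.inter_subset_left)
    have hpd : ((Finset.range L : Finset ℕ) : Set ℕ).Pairwise
        (Function.onFun Disjoint fun c => SmSet f A c ∩ T) :=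
      fun c _ c' _ hne =>
        Disjoint.mono Set.inter_subset_left Set.inter_subset_left (SmSet_disjoint hne)
    have h4 : μ (T ∩ U) = ∑ c ∈ Finset.range L, μ (SmSet f A c ∩ T) := by
      rw [h1]
      exact measure_biUnion_finset hpd
        (fun c _ => (SmSet_measurable hmp hAmeas c).inter hTmeas)
    rw [← ENNReal.toReal_sum (fun c _ => measure_ne_top μ _), ← h4, ← h3]
  -- sum of b is at most μ Bad
  have hb_sum : ∑ c ∈ Finset.range L, b c ≤ (2 * R + 1) * a 0 := by
    have hpd : ((Finset.range L : Finset ℕ) : Set ℕ).Pairwise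
        (Function.onFun Disjoint fun c => SmSet f A c ∩ Bad) :=
      fun c _ c' _ hne =>
        Disjoint.mono Set.inter_subset_left Set.inter_subset_left (SmSet_disjoint hne)
    have h4 : ∑ c ∈ Finset.range L, μ (SmSet f A c ∩ Bad)
        = μ (⋃ c ∈ Finset.range L, SmSet f A c ∩ Bad) :=
      (measure_biUnion_finset hpd
        (fun c _ => (SmSet_measurable hmp hAmeas c).inter hBadMeas)).symm
    have h5 : μ (⋃ c ∈ Finset.range L, SmSet f A c ∩ Bad) ≤ μ Bad :=
      measure_mono (Set.iUnion₂_subset fun c _ => Set.inter_subset_right)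
    calc ∑ c ∈ Finset.range L, b c
        = (∑ c ∈ Finset.range L, μ (SmSet f A c ∩ Bad)).toReal :=
          (ENNReal.toReal_sum (fun c _ => measure_ne_top μ _)).symm
      _ ≤ (μ Bad).toReal := ENNReal.toReal_mono (measure_ne_top μ _) (h4 ▸ h5)
      _ ≤ (2 * R + 1) * a 0 := hBadBound
  -- the cast identity for shifted levels
  have hcast : ∀ c : ℕ, 0 ≤ (c : ℤ) - γ →
      ((((c : ℤ) - γ).toNat : ZMod n)) = (c : ZMod n) - (γ : ZMod n) := by
    intro c he
    have h1 : ((((c : ℤ) - γ).toNat : ℤ) : ZMod n) = (((c : ℤ) - γ) : ZMod n) := by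
      rw [Int.toNat_of_nonneg he]
      push_cast
      ring
    rw [Int.cast_natCast] at h1
    rw [h1]
    norm_cast
  -- upper bound for u
  have hupper : ∀ c ∈ Finset.range L, u c ≤ b c + (if Cond c then a c else 0) := by
    intro c hc
    rw [Finset.mem_range] at hc
    by_cases hC : Cond c
    · rw [if_pos hC]
      have : u c ≤ a c :=
        ENNReal.toReal_mono (measure_ne_top μ _) (measure_mono Set.inter_subset_left)
      linarith [hbpos c]
    · rw [if_neg hC, add_zero]
      have hsub : SmSet f A c ∩ T ⊆ SmSet f A c ∩ Bad := by
        rintro x ⟨hxS, hxT⟩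
        refine ⟨hxS, ?_⟩
        by_contra hxB
        rw [hTpre] at hxT
        obtain ⟨hxT1, hxT2⟩ := hxT
        have hj : (c : ZMod n) ∈ Ys j := ((hXmem j c x hxS).1 hxT2).2
        obtain ⟨he, hy⟩ := SmSet_shift h0 hadd hγR hxS hxB
        have hi := ((hXmem i _ _ hy).1 hxT1).2
        rw [hcast c he] at hi
        exact hC ⟨hi, hj⟩
      exact ENNReal.toReal_mono (measure_ne_top μ _) (measure_mono hsub)
  -- lower bound for u
  have hlower : ∀ c ∈ Finset.range L, (if Cond c then a c else 0) ≤ u c + b c + w c := by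
    intro c hc
    rw [Finset.mem_range] at hc
    by_cases hC : Cond c
    · rw [if_pos hC]
      by_cases hwc : (0 ≤ (c : ℤ) - γ ∧ ((c : ℤ) - γ).toNat < L)
      · have hw0 : w c = 0 := by rw [hw]; exact if_pos hwc
        rw [hw0, add_zero]
        have hsub : SmSet f A c ⊆ (SmSet f A c ∩ T) ∪ (SmSet f A c ∩ Bad) := by
          intro x hxS
          by_cases hxB : x ∈ Bad
          · exact Or.inr ⟨hxS, hxB⟩
          · refine Or.inl ⟨hxS, ?_⟩
            obtain ⟨he, hy⟩ := SmSet_shift h0 hadd hγR hxS hxB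
            rw [hTpre]
            constructor
            · refine (hXmem i _ _ hy).2 ⟨hwc.2, ?_⟩
              rw [hcast c he]
              exact hC.1
            · exact (hXmem j c x hxS).2 ⟨hc, hC.2⟩
        have h1 : μ (SmSet f A c) ≤ μ (SmSet f A c ∩ T) + μ (SmSet f A c ∩ Bad) :=
          le_trans (measure_mono hsub) (measure_union_le _ _)
        have h2 := ENNReal.toReal_mono
          (by exact ENNReal.add_ne_top.2 ⟨measure_ne_top μ _, measure_ne_top μ _⟩) h1
        rw [ENNReal.toReal_add (measure_ne_top μ _) (measure_ne_top μ _)] at h2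
        exact h2
      · have hwa : w c = a c := by rw [hw]; exact if_neg hwc
        rw [hwa]
        linarith [hupos c, hbpos c]
    · rw [if_neg hC]
      have := hupos c; have := hbpos c; have := hwpos c
      linarith
  -- sum of w is small
  have hw_sum : ∑ c ∈ Finset.range L, w c ≤ 2 * R * a 0 := by
    have hsumw : ∑ c ∈ Finset.range L, w c
        = ∑ c ∈ (Finset.range L).filter
            (fun c : ℕ => ¬(0 ≤ (c : ℤ) - γ ∧ ((c : ℤ) - γ).toNat < L)), a c := by
      rw [Finset.sum_filter]
      refine Finset.sum_congr rfl (fun c _ => ?_)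
      rw [hw]
      dsimp only
      by_cases hcc : (0 ≤ (c : ℤ) - γ ∧ ((c : ℤ) - γ).toNat < L)
      · rw [if_pos hcc, if_neg (not_not_intro hcc)]
      · rw [if_neg hcc, if_pos hcc]
    set F1 : Finset ℕ := (Finset.range L).filter (fun c : ℕ => (c : ℤ) < γ) with hF1
    set F2 : Finset ℕ := (Finset.range L).filter (fun c : ℕ => (L : ℤ) + γ ≤ (c : ℤ)) with hF2
    have hsubF : (Finset.range L).filter
        (fun c : ℕ => ¬(0 ≤ (c : ℤ) - γ ∧ ((c : ℤ) - γ).toNat < L)) ⊆ F1 ∪ F2 := by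
      intro c hcmem
      rw [Finset.mem_filter] at hcmem
      obtain ⟨hcL, hcbad⟩ := hcmem
      rw [Finset.mem_range] at hcL
      simp only [Finset.mem_union, hF1, hF2, Finset.mem_filter, Finset.mem_range]
      by_cases h1 : (c : ℤ) < γ
      · exact Or.inl ⟨hcL, h1⟩
      · push_neg at h1
        refine Or.inr ⟨hcL, ?_⟩
        have he : 0 ≤ (c : ℤ) - γ := by omega
        have := fun h => hcbad ⟨he, h⟩
        omega
    have hcardF1 : F1.card ≤ R := by
      refine le_trans (Finset.card_le_card ?_) (le_of_eq (Finset.card_range R))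
      intro c hcm
      rw [hF1, Finset.mem_filter] at hcm
      rw [Finset.mem_range]
      omega
    have hcardF2 : F2.card ≤ R := by
      refine le_trans (Finset.card_le_card (show F2 ⊆ Finset.Ico (L - R) L from ?_)) ?_
      · intro c hcm
        rw [hF2, Finset.mem_filter, Finset.mem_range] at hcm
        rw [Finset.mem_Ico]
        omega
      · rw [Nat.card_Ico]
        omega
    calc ∑ c ∈ Finset.range L, w c
        = ∑ c ∈ (Finset.range L).filter
            (fun c : ℕ => ¬(0 ≤ (c : ℤ) - γ ∧ ((c : ℤ) - γ).toNat < L)), a c := hsumw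
      _ ≤ ∑ c ∈ F1 ∪ F2, a c :=
          Finset.sum_le_sum_of_subset_of_nonneg hsubF (fun c _ _ => hapos c)
      _ ≤ (F1 ∪ F2).card • a 0 :=
          Finset.sum_le_card_nsmul _ _ _ (fun c _ => hamono (Nat.zero_le c))
      _ ≤ 2 * R * a 0 := by
          have hcard : (F1 ∪ F2).card ≤ 2 * R :=
            le_trans (Finset.card_union_le F1 F2) (by omega)
          rw [nsmul_eq_mul]
          have h0a := hapos 0
          have hcard' : ((F1 ∪ F2).card : ℝ) ≤ 2 * R := by exact_mod_cast hcard
          nlinarith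
  -- main term estimate
  have hmain : |(∑ c ∈ Finset.range L, (if Cond c then a c else 0)) - (DF.card : ℝ) / n|
      ≤ (n : ℝ) * a 0 := by
    have hreidx : ∑ c ∈ Finset.range L, (if Cond c then a c else 0)
        = ∑ c ∈ (Finset.range L).filter (fun c : ℕ => ((c : ZMod n)) ∈ DF), a c := by
      rw [Finset.sum_filter]
      refine Finset.sum_congr rfl (fun c _ => ?_)
      have : Cond c ↔ ((c : ZMod n)) ∈ DF := by
        rw [hCond, hDFdef]
        simp only [Finset.mem_filter, Finset.mem_univ, true_and]
      by_cases hC : Cond c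
      · rw [if_pos hC, if_pos (this.1 hC)]
      · rw [if_neg hC, if_neg (fun hm => hC (this.2 hm))]
    have hfib := Finset.sum_fiberwise_eq_sum_filter (Finset.range L) DF
      (fun c : ℕ => (c : ZMod n)) a
    have hinner : ∀ k : ZMod n,
        ∑ c ∈ (Finset.range L).filter (fun c : ℕ => ((c : ZMod n)) = k), a c
        = ∑ c ∈ (Finset.range L).filter (fun c : ℕ => c % n = k.val), a c := by
      intro k
      refine Finset.sum_congr ?_ (fun _ _ => rfl)
      refine Finset.filter_congr (fun c _ => ?_)
      constructor
      · intro h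
        simp only [eq_iff_iff, ← h, ZMod.val_natCast]
      · intro h
        have : ((c : ZMod n)).val = k.val := by rw [ZMod.val_natCast]; exact h
        exact ZMod.val_injective n this
    have hperk : ∀ k : ZMod n,
        |(∑ c ∈ (Finset.range L).filter (fun c : ℕ => ((c : ZMod n)) = k), a c) - 1 / n|
          ≤ a 0 := by
      intro k
      rw [hinner k]
      exact residue_sum_bounds a hamono hapos L n k.val hn (ZMod.val_lt k) hLN hsum1 hzero
    have habs : |(∑ k ∈ DF, ∑ c ∈ (Finset.range L).filter
        (fun c : ℕ => ((c : ZMod n)) = k), a c) - (DF.card : ℝ) / n| ≤ (DF.card : ℝ) * a 0 := by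
      have h1 : (∑ k ∈ DF, ∑ c ∈ (Finset.range L).filter
          (fun c : ℕ => ((c : ZMod n)) = k), a c) - (DF.card : ℝ) / n
          = ∑ k ∈ DF, ((∑ c ∈ (Finset.range L).filter
              (fun c : ℕ => ((c : ZMod n)) = k), a c) - 1 / n) := by
        rw [Finset.sum_sub_distrib, Finset.sum_const]
        congr 1
        rw [nsmul_eq_mul]
        ring
      rw [h1]
      calc |∑ k ∈ DF, ((∑ c ∈ (Finset.range L).filter
            (fun c : ℕ => ((c : ZMod n)) = k), a c) - 1 / n)|
          ≤ ∑ k ∈ DF, |(∑ c ∈ (Finset.range L).filter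
            (fun c : ℕ => ((c : ZMod n)) = k), a c) - 1 / n| :=
            Finset.abs_sum_le_sum_abs _ _
        _ ≤ ∑ _k ∈ DF, a 0 := Finset.sum_le_sum (fun k _ => hperk k)
        _ = (DF.card : ℝ) * a 0 := by rw [Finset.sum_const, nsmul_eq_mul]
    rw [hreidx, ← hfib]
    have := hapos 0
    have h2 : (DF.card : ℝ) * a 0 ≤ (n : ℝ) * a 0 := by nlinarith [hDFcard]
    exact le_trans habs h2
  -- final combination
  have hμT : (μ T).toReal = ∑ c ∈ Finset.range L, u c := hu_sum.symm
  have hsum_upper : ∑ c ∈ Finset.range L, u c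
      ≤ (∑ c ∈ Finset.range L, b c) + ∑ c ∈ Finset.range L, (if Cond c then a c else 0) := by
    rw [← Finset.sum_add_distrib]
    exact Finset.sum_le_sum hupper
  have hsum_lower : ∑ c ∈ Finset.range L, (if Cond c then a c else 0)
      ≤ (∑ c ∈ Finset.range L, u c) + (∑ c ∈ Finset.range L, b c)
        + ∑ c ∈ Finset.range L, w c := by
    rw [← Finset.sum_add_distrib, ← Finset.sum_add_distrib]
    exact Finset.sum_le_sum hlower
  rw [hTdef] at hμT
  have hgoal : |(μ (f γ '' Xs i ∩ Xs j)).toReal - (DF.card : ℝ) / n| ≤ (4 * R + n + 1) * a 0 := by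
    rw [hμT]
    rw [abs_le] at hmain ⊢
    have := hapos 0
    constructor
    · nlinarith [hmain.1, hsum_lower, hw_sum, hb_sum]
    · nlinarith [hmain.2, hsum_upper, hb_sum]
  have hfin : |(μ (f γ '' Xs i ∩ Xs j)).toReal - (DF.card : ℝ) / n| < ε := by
    refine lt_of_le_of_lt hgoal (lt_of_le_of_lt ?_ hNerr)
    have h1 : (0:ℝ) ≤ 4 * R + n + 1 := by positivity
    rw [div_eq_mul_inv]
    calc (4 * (R:ℝ) + n + 1) * a 0 ≤ (4 * R + n + 1) * (1 / N) := by
          exact mul_le_mul_of_nonneg_left ha0le h1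
      _ = (4 * R + n + 1) * (N:ℝ)⁻¹ := by rw [one_div]
  -- identify the ν-value
  have hgoal2 : ((((n : ENNReal)⁻¹ • Measure.count : Measure (ZMod n)))
      ((fun (y : ZMod n) => y + (γ : ZMod n)) '' Ys i ∩ Ys j)).toReal = (DF.card : ℝ) / n :=
    hνval
  rw [show ((fun (m : ℤ) (y : ZMod n) => y + (m : ZMod n)) γ '' Ys i ∩ Ys j)
    = ((fun (y : ZMod n) => y + (γ : ZMod n)) '' Ys i ∩ Ys j) from rfl]
  rw [hgoal2]
  exact hfin

end RokhlinAuxiliary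
end

section
/- Fix an integer n > 0. On {0,1}^ℤ with the shift operator T, for a natural number k and 0 ≤ l ≤ n−1 let ‖ω‖_{k,l} = Σ_{i=0}^{k−1} ω(in + l), and let A_k = {ω ∈ {0,1}^ℤ : ‖ω‖_{k,0} > ‖ω‖_{k,l} + n for all 1 ≤ l ≤ n−1}. Then the sets A_k, T A_k, …, T^{n−1} A_k are pairwise disjoint. -/
open Filter Topology

/-- `‖ω‖_{k,l} = ∑_{i=0}^{k-1} ω (i·n + l)`. -/
def wnorm (n : ℕ) (k : ℕ) (l : ℤ) (ω : ℤ → Fin 2) : ℕ :=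
  ∑ i ∈ Finset.range k, (ω ((i : ℤ) * (n : ℤ) + l) : ℕ)

/-- The set `A_k = {ω : ‖ω‖_{k,0} > ‖ω‖_{k,l} + n for all 1 ≤ l ≤ n-1}`. -/
def Aset (n : ℕ) (k : ℕ) : Set (ℤ → Fin 2) :=
  {ω | ∀ l : ℤ, 1 ≤ l → l ≤ (n : ℤ) - 1 → wnorm n k 0 ω > wnorm n k l ω + n}

/-- The shift operator `T` on `{0,1}^ℤ`, `(Tω)(i) = ω (i+1)`. -/
def shiftT (ω : ℤ → Fin 2) : ℤ → Fin 2 := fun i => ω (i + 1)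

lemma iterate_shiftT (m : ℕ) (ω : ℤ → Fin 2) (i : ℤ) : shiftT^[m] ω i = ω (i + m) := by
  induction m generalizing ω i with
  | zero => simp
  | succ m ih =>
    rw [Function.iterate_succ_apply, ih]
    simp only [shiftT]
    congr 1
    push_cast
    ring

lemma key_contradiction (n k d : ℕ) (hd1 : 1 ≤ d) (hdn : d < n) (α β : ℤ → Fin 2)
    (hβ : ∀ j : ℤ, β j = α (j - (d : ℤ))) (hα : α ∈ Aset n k) (hβA : β ∈ Aset n k) :
    False := by
  have h1 : wnorm n k d β = wnorm n k 0 α := by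
    unfold wnorm
    apply Finset.sum_congr rfl
    intro i _
    rw [hβ]
    ring_nf
  have h2 : wnorm n k 0 β ≤ wnorm n k ((n : ℤ) - d) α + 1 := by
    cases k with
    | zero => simp [wnorm]
    | succ k =>
      unfold wnorm
      rw [Finset.sum_range_succ']
      have hterm : ∀ i ∈ Finset.range k,
          (β (((i : ℕ) + 1 : ℕ) * (n : ℤ) + 0) : ℕ) = (α ((i : ℤ) * n + ((n : ℤ) - d)) : ℕ) := by
        intro i _
        rw [hβ]
        congr 1
        push_cast
        ring
      rw [Finset.sum_congr rfl hterm]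
      have hsub : ∑ i ∈ Finset.range k, (α ((i : ℤ) * n + ((n : ℤ) - d)) : ℕ)
          ≤ ∑ i ∈ Finset.range (k + 1), (α ((i : ℤ) * n + ((n : ℤ) - d)) : ℕ) :=
        Finset.sum_le_sum_of_subset (Finset.range_subset_range.mpr (Nat.le_succ k))
      have hb0 : (β ((0 : ℕ) * (n : ℤ) + 0) : ℕ) ≤ 1 := Fin.is_le _
      omega
  have hA := hα ((n : ℤ) - d) (by push_cast; omega) (by push_cast; omega)
  have hB := hβA (d : ℤ) (by exact_mod_cast hd1) (by push_cast; omega)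
  rw [h1] at hB
  omega

/-- The sets `A_k, T A_k, …, T^{n-1} A_k` are pairwise disjoint. -/
theorem shifted_Asets_pairwise_disjoint (n : ℕ) (hn : 0 < n) (k : ℕ) :
    ∀ m m' : ℕ, m < n → m' < n → m ≠ m' →
      Disjoint (shiftT^[m] '' Aset n k) (shiftT^[m'] '' Aset n k) := by
  have main : ∀ m m' : ℕ, m < m' → m' < n →
      Disjoint (shiftT^[m] '' Aset n k) (shiftT^[m'] '' Aset n k) := by
    intro m m' hlt hm'
    rw [Set.disjoint_left]
    rintro ω ⟨α, hα, rfl⟩ ⟨β, hβ, heq⟩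
    have hpt : ∀ j : ℤ, β j = α (j - ((m' - m : ℕ) : ℤ)) := by
      intro j
      have h := congrFun heq (j - m')
      rw [iterate_shiftT, iterate_shiftT] at h
      have e1 : j - (m' : ℤ) + m' = j := by ring
      rw [e1] at h
      rw [h]
      congr 1
      have : ((m' - m : ℕ) : ℤ) = (m' : ℤ) - m := by
        rw [Nat.cast_sub hlt.le]
      rw [this]
      ring
    exact (key_contradiction n k (m' - m) (by omega) (by omega) α β hpt hα hβ).elim
  intro m m' hm hm' hne
  rcases hne.lt_or_gt with h | h
  · exact main m m' h hm'
  · exact (main m' m h hm).symm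
end

section
/- Fix an integer n > 0. On {0,1}^ℤ endowed with the Bernoulli product measure with p(0) = p(1) = 1/2, for a natural number k and 0 ≤ l ≤ n−1 let ‖ω‖_{k,l} = Σ_{i=0}^{k−1} ω(in + l), and let A_k = {ω ∈ {0,1}^ℤ : ‖ω‖_{k,0} > ‖ω‖_{k,l} + n for all 1 ≤ l ≤ n−1}. Then the measure of A_k converges to 1/n as k tends to infinity. -/
open MeasureTheory Filter Topology

/-! ### Auxiliary definitions -/

/-- weight of a binary word -/
def wt {k : ℕ} (a : Fin k → Fin 2) : ℕ := ∑ i, (a i : ℕ)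

/-- the column of a configuration -/
def col {n k : ℕ} (c : Fin n × Fin k → Fin 2) (l : Fin n) : Fin k → Fin 2 := fun i => c (l, i)

/-- the set of configurations where column `l` strictly dominates all others by more than `n` -/
def Gset (n k : ℕ) (l : Fin n) : Finset (Fin n × Fin k → Fin 2) :=
  Finset.univ.filter fun c => ∀ m, m ≠ l → wt (col c m) + n < wt (col c l)

/-! ### The central binomial coefficient bound -/

lemma cb_sq (k : ℕ) : (2*k+1) * (Nat.centralBinom k)^2 ≤ 16^k := by
  induction k with
  | zero => simp [Nat.centralBinom]
  | succ k ih =>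
    have h := Nat.succ_mul_centralBinom_succ k
    have h2 : ((k+1) * Nat.centralBinom (k+1))^2 = (2*(2*k+1) * Nat.centralBinom k)^2 := by rw [h]
    have key : (k+1)^2 * ((2*(k+1)+1) * Nat.centralBinom (k+1)^2) ≤ (k+1)^2 * 16^(k+1) := by
      calc (k+1)^2 * ((2*(k+1)+1) * Nat.centralBinom (k+1)^2)
          = (2*(k+1)+1) * ((k+1) * Nat.centralBinom (k+1))^2 := by ring
        _ = (2*(k+1)+1) * (2*(2*k+1) * Nat.centralBinom k)^2 := by rw [h2]
        _ = (4*(2*k+3)*(2*k+1)) * ((2*k+1) * Nat.centralBinom k^2) := by ring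
        _ ≤ (4*(2*k+3)*(2*k+1)) * 16^k := Nat.mul_le_mul_left _ ih
        _ ≤ (16*(k+1)^2) * 16^k := Nat.mul_le_mul_right _ (by nlinarith)
        _ = (k+1)^2 * 16^(k+1) := by ring
    exact Nat.le_of_mul_le_mul_left key (by positivity)

lemma cb_tendsto : Tendsto (fun k : ℕ => (Nat.centralBinom k : ℝ) / 4^k) atTop (nhds 0) := by
  have hsq : Tendsto (fun k : ℕ => ((Nat.centralBinom k : ℝ) / 4^k)^2) atTop (nhds 0) := by
    apply squeeze_zero (fun k => by positivity) (g := fun k : ℕ => (2*(k:ℝ)+1)⁻¹)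
    · intro k
      have h' : ((2*k+1 : ℕ) : ℝ) * ((Nat.centralBinom k : ℝ))^2 ≤ 16^k := by
        exact_mod_cast cb_sq k
      have h16 : ((4:ℝ)^k)^2 = 16^k := by
        rw [show (16:ℝ) = 4^2 by norm_num, ← pow_mul, mul_comm, pow_mul]
      rw [div_pow, h16, inv_eq_one_div, div_le_div_iff₀ (by positivity) (by positivity)]
      push_cast at h'
      nlinarith [h']
    · apply Tendsto.inv_tendsto_atTop
      apply tendsto_atTop_add_const_right
      exact (tendsto_natCast_atTop_atTop (R := ℝ)).const_mul_atTop (by norm_num)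
  have h2 : Tendsto (fun k : ℕ => Real.sqrt (((Nat.centralBinom k : ℝ) / 4^k)^2)) atTop (nhds 0) := by
    have := (Real.continuous_sqrt.tendsto 0).comp hsq
    simpa [Function.comp_def] using this
  refine h2.congr (fun k => ?_)
  exact Real.sqrt_sq (by positivity)

/-! ### Counting lemmas -/

lemma wt_le {k : ℕ} (a : Fin k → Fin 2) : wt a ≤ k := by
  have h : ∀ v : Fin 2, (v : ℕ) ≤ 1 := by decide
  calc wt a ≤ ∑ _i : Fin k, 1 := Finset.sum_le_sum (fun i _ => h (a i))
    _ = k := by simp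

lemma wt_count (k s : ℕ) :
    ((Finset.univ.filter fun a : Fin k → Fin 2 => wt a = s)).card = k.choose s := by
  classical
  rw [show k.choose s = (Finset.powersetCard s (Finset.univ : Finset (Fin k))).card by
    rw [Finset.card_powersetCard, Finset.card_univ, Fintype.card_fin]]
  apply Finset.card_bij (fun a _ => Finset.univ.filter (fun x => a x = 1))
  · intro a ha
    simp only [Finset.mem_filter, Finset.mem_univ, true_and] at ha
    rw [Finset.mem_powersetCard]
    refine ⟨Finset.subset_univ _, ?_⟩
    rw [Finset.card_filter, ← ha]
    unfold wt
    congr 1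
    funext i
    exact (by decide : ∀ v : Fin 2, (if v = 1 then 1 else 0 : ℕ) = (v : ℕ)) (a i)
  · intro a₁ h₁ a₂ h₂ heq
    funext x
    have hx : a₁ x = 1 ↔ a₂ x = 1 := by
      constructor <;> intro h
      · have : x ∈ Finset.univ.filter (fun y => a₂ y = 1) := by rw [← heq]; simp [h]
        simpa using this
      · have : x ∈ Finset.univ.filter (fun y => a₁ y = 1) := by rw [heq]; simp [h]
        simpa using this
    exact (by decide : ∀ v w : Fin 2, ((v = 1 ↔ w = 1) → v = w)) (a₁ x) (a₂ x) hx
  · intro t ht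
    rw [Finset.mem_powersetCard] at ht
    refine ⟨fun x => if x ∈ t then 1 else 0, ?_, ?_⟩
    · simp only [Finset.mem_filter, Finset.mem_univ, true_and]
      unfold wt
      rw [← ht.2]
      simp only [apply_ite Fin.val, Fin.val_one, Fin.val_zero, Finset.sum_ite_mem,
        Finset.univ_inter, Finset.sum_const, smul_eq_mul, mul_one]
    · ext x
      simp only [Finset.mem_filter, Finset.mem_univ, true_and]
      split <;> simp_all

lemma pair_count (k j : ℕ) :
    ((Finset.univ.filter fun p : (Fin k → Fin 2) × (Fin k → Fin 2) =>
      wt p.1 = wt p.2 + j)).card ≤ Nat.centralBinom k := by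
  classical
  rw [Finset.card_eq_sum_card_fiberwise
    (f := fun p : (Fin k → Fin 2) × (Fin k → Fin 2) => wt p.2) (t := Finset.range (k+1))
    (fun p _ => Finset.mem_range.mpr (Nat.lt_succ_of_le (wt_le p.2)))]
  have hfib : ∀ s ∈ Finset.range (k+1),
      ((Finset.univ.filter fun p : (Fin k → Fin 2) × (Fin k → Fin 2) =>
        wt p.1 = wt p.2 + j).filter fun p => wt p.2 = s).card = k.choose (s+j) * k.choose s := by
    intro s hs
    rw [Finset.filter_filter]
    have heq : ∀ p : (Fin k → Fin 2) × (Fin k → Fin 2),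
        (wt p.1 = wt p.2 + j ∧ wt p.2 = s) ↔ (wt p.1 = s + j ∧ wt p.2 = s) := by
      intro p; constructor <;> rintro ⟨h1, h2⟩ <;> subst h2 <;> simp_all
    rw [Finset.filter_congr (fun p _ => heq p)]
    rw [show (Finset.univ : Finset ((Fin k → Fin 2) × (Fin k → Fin 2)))
      = Finset.univ ×ˢ Finset.univ from (Finset.univ_product_univ).symm]
    rw [Finset.filter_product (fun a => wt a = s + j) (fun b => wt b = s), Finset.card_product,
      wt_count, wt_count]
  rw [Finset.sum_congr rfl hfib]
  have himg : ∑ s ∈ Finset.range (k+1), k.choose (s+j) * k.choose s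
      ≤ (k + k).choose (k + j) := by
    rw [Nat.add_choose_eq]
    have hsum : ∑ s ∈ Finset.range (k+1), k.choose (s+j) * k.choose s
        = ∑ q ∈ (Finset.range (k+1)).image (fun s => (s + j, k - s)),
            k.choose q.1 * k.choose q.2 := by
      rw [Finset.sum_image (by intro a _ b _ h; simpa using congrArg Prod.fst h)]
      apply Finset.sum_congr rfl
      intro s hs
      simp only []
      rw [Finset.mem_range] at hs
      congr 1
      exact (Nat.choose_symm (by omega : s ≤ k)).symm
    rw [hsum]
    apply Finset.sum_le_sum_of_subset
    intro q hq
    simp only [Finset.mem_image, Finset.mem_range] at hq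
    obtain ⟨s, hs, rfl⟩ := hq
    rw [Finset.HasAntidiagonal.mem_antidiagonal]
    omega
  calc ∑ s ∈ Finset.range (k+1), k.choose (s+j) * k.choose s ≤ (k+k).choose (k+j) := himg
    _ ≤ Nat.centralBinom k := by rw [← two_mul]; exact Nat.choose_le_centralBinom _ k

lemma Dpair_count (k n : ℕ) :
    ((Finset.univ.filter fun p : (Fin k → Fin 2) × (Fin k → Fin 2) =>
      wt p.2 ≤ wt p.1 ∧ wt p.1 ≤ wt p.2 + n)).card ≤ (n+1) * Nat.centralBinom k := by
  classical
  have hsub : (Finset.univ.filter fun p : (Fin k → Fin 2) × (Fin k → Fin 2) =>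
      wt p.2 ≤ wt p.1 ∧ wt p.1 ≤ wt p.2 + n)
      ⊆ (Finset.range (n+1)).biUnion (fun j => Finset.univ.filter
          fun p : (Fin k → Fin 2) × (Fin k → Fin 2) => wt p.1 = wt p.2 + j) := by
    intro p hp
    simp only [Finset.mem_filter, Finset.mem_univ, true_and] at hp
    simp only [Finset.mem_biUnion, Finset.mem_range, Finset.mem_filter, Finset.mem_univ, true_and]
    exact ⟨wt p.1 - wt p.2, by omega, by omega⟩
  calc _ ≤ ((Finset.range (n+1)).biUnion (fun j => Finset.univ.filter
          fun p : (Fin k → Fin 2) × (Fin k → Fin 2) => wt p.1 = wt p.2 + j)).card :=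
        Finset.card_le_card hsub
    _ ≤ ∑ j ∈ Finset.range (n+1), ((Finset.univ.filter
          fun p : (Fin k → Fin 2) × (Fin k → Fin 2) => wt p.1 = wt p.2 + j)).card :=
        Finset.card_biUnion_le
    _ ≤ ∑ _j ∈ Finset.range (n+1), Nat.centralBinom k :=
        Finset.sum_le_sum (fun j _ => pair_count k j)
    _ = (n+1) * Nat.centralBinom k := by rw [Finset.sum_const, Finset.card_range, smul_eq_mul]

lemma col_count_le {n k : ℕ} (l m : Fin n) (hlm : l ≠ m)
    (P : (Fin k → Fin 2) → (Fin k → Fin 2) → Prop) [∀ a b, Decidable (P a b)] :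
    ((Finset.univ.filter fun c : Fin n × Fin k → Fin 2 => P (col c l) (col c m))).card
      ≤ ((Finset.univ.filter fun p : (Fin k → Fin 2) × (Fin k → Fin 2) => P p.1 p.2)).card
        * 2 ^ (k * (n - 2)) := by
  classical
  rw [Finset.card_eq_sum_card_fiberwise
    (f := fun c : Fin n × Fin k → Fin 2 => (col c l, col c m))
    (t := Finset.univ.filter fun p : (Fin k → Fin 2) × (Fin k → Fin 2) => P p.1 p.2)
    (fun c hc => by
      simp only [Finset.coe_filter, Finset.mem_filter, Finset.mem_univ, true_and, Set.mem_setOf_eq] at hc ⊢; exact hc)]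
  have hfib : ∀ p ∈ (Finset.univ.filter fun p : (Fin k → Fin 2) × (Fin k → Fin 2) => P p.1 p.2),
      ((Finset.univ.filter fun c : Fin n × Fin k → Fin 2 => P (col c l) (col c m)).filter
        fun c => (col c l, col c m) = p).card ≤ 2 ^ (k * (n - 2)) := by
    intro p _
    have hinj : Set.InjOn (fun c : Fin n × Fin k → Fin 2 =>
        (fun q : {x : Fin n // x ≠ l ∧ x ≠ m} × Fin k => c (q.1.1, q.2)))
        ((Finset.univ.filter fun c : Fin n × Fin k → Fin 2 => P (col c l) (col c m)).filter
          fun c => (col c l, col c m) = p) := by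
      intro c₁ h₁ c₂ h₂ heq
      simp only [Finset.coe_filter, Set.mem_setOf_eq, Prod.mk.injEq] at h₁ h₂
      funext q
      obtain ⟨x, i⟩ := q
      by_cases hx : x = l
      · subst hx
        have : col c₁ x = col c₂ x :=
          (congrArg Prod.fst h₁.2).trans (congrArg Prod.fst h₂.2).symm
        exact congrFun this i
      · by_cases hx' : x = m
        · subst hx'
          have : col c₁ x = col c₂ x :=
            (congrArg Prod.snd h₁.2).trans (congrArg Prod.snd h₂.2).symm
          exact congrFun this i
        · exact congrFun heq ⟨⟨x, hx, hx'⟩, i⟩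
    calc _ ≤ (Finset.univ : Finset ({x : Fin n // x ≠ l ∧ x ≠ m} × Fin k → Fin 2)).card :=
          Finset.card_le_card_of_injOn _ (fun _ _ => Finset.mem_univ _) hinj
      _ = 2 ^ (k * (n - 2)) := by
          rw [Finset.card_univ, Fintype.card_fun, Fintype.card_fin, Fintype.card_prod,
            Fintype.card_fin]
          congr 1
          have hcard : Fintype.card {x : Fin n // x ≠ l ∧ x ≠ m} = n - 2 := by
            rw [Fintype.card_subtype]
            have hft : Finset.univ.filter (fun x : Fin n => x ≠ l ∧ x ≠ m)
                = Finset.univ \ {l, m} := by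
              ext x; simp [Finset.mem_sdiff, not_or]
            rw [hft, Finset.card_sdiff_of_subset (Finset.subset_univ _), Finset.card_univ,
              Fintype.card_fin, Finset.card_insert_of_notMem (by simpa using hlm),
              Finset.card_singleton]
          rw [hcard, mul_comm]
  calc _ ≤ ∑ _p ∈ (Finset.univ.filter fun p : (Fin k → Fin 2) × (Fin k → Fin 2) => P p.1 p.2),
        2 ^ (k * (n - 2)) := Finset.sum_le_sum hfib
    _ = _ := by rw [Finset.sum_const, smul_eq_mul]

lemma Gset_card_eq {n k : ℕ} (l l' : Fin n) : (Gset n k l).card = (Gset n k l').card := by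
  classical
  refine Finset.card_bij' (fun c _ => fun p => c (Equiv.swap l l' p.1, p.2))
    (fun c _ => fun p => c (Equiv.swap l l' p.1, p.2)) ?_ ?_ ?_ ?_
  · intro c hc
    simp only [Gset, Finset.mem_filter, Finset.mem_univ, true_and] at hc ⊢
    intro m hm
    have hcol : ∀ x, col (fun p => c (Equiv.swap l l' p.1, p.2)) x = col c (Equiv.swap l l' x) :=
      fun x => rfl
    rw [hcol, hcol, Equiv.swap_apply_right]
    exact hc _ (fun h => hm ((Equiv.swap l l').injective
      (by rw [h, Equiv.swap_apply_right])))
  · intro c hc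
    simp only [Gset, Finset.mem_filter, Finset.mem_univ, true_and] at hc ⊢
    intro m hm
    have hcol : ∀ x, col (fun p => c (Equiv.swap l l' p.1, p.2)) x = col c (Equiv.swap l l' x) :=
      fun x => rfl
    rw [hcol, hcol, Equiv.swap_apply_left]
    exact hc _ (fun h => hm ((Equiv.swap l l').injective
      (by rw [h, Equiv.swap_apply_left])))
  · intro c _; funext p; simp [Equiv.swap_apply_self]
  · intro c _; funext p; simp [Equiv.swap_apply_self]

lemma Gset_disjoint {n k : ℕ} {l l' : Fin n} (h : l ≠ l') :
    Disjoint (Gset n k l) (Gset n k l') := by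
  rw [Finset.disjoint_left]
  intro c hc hc'
  simp only [Gset, Finset.mem_filter, Finset.mem_univ, true_and] at hc hc'
  have h1 := hc l' (Ne.symm h)
  have h2 := hc' l h
  omega

lemma compl_subset {n k : ℕ} (hn : 0 < n) :
    Finset.univ \ Finset.univ.biUnion (Gset n k) ⊆
      ((Finset.univ : Finset (Fin n × Fin n)).filter fun q => q.1 ≠ q.2).biUnion
        (fun q => Finset.univ.filter fun c : Fin n × Fin k → Fin 2 =>
          wt (col c q.2) ≤ wt (col c q.1) ∧ wt (col c q.1) ≤ wt (col c q.2) + n) := by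
  classical
  intro c hc
  simp only [Finset.mem_sdiff, Finset.mem_univ, true_and, Finset.mem_biUnion, not_exists] at hc
  obtain ⟨l, _, hl⟩ := Finset.exists_max_image Finset.univ (fun m => wt (col c m))
    ⟨⟨0, hn⟩, Finset.mem_univ _⟩
  have hnotin : c ∉ Gset n k l := hc l
  simp only [Gset, Finset.mem_filter, Finset.mem_univ, true_and, not_forall] at hnotin
  obtain ⟨m, hm, hmle⟩ := hnotin
  simp only [Finset.mem_biUnion, Finset.mem_filter, Finset.mem_univ, true_and]
  refine ⟨(l, m), Ne.symm hm, ?_⟩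
  dsimp only
  exact ⟨hl m (Finset.mem_univ m), by omega⟩

/-- master counting estimate -/
lemma master_count (n k : ℕ) (hn : 0 < n) :
    n * (Gset n k ⟨0, hn⟩).card ≤ 2^(n*k) ∧
    2^(n*k) ≤ n * (Gset n k ⟨0, hn⟩).card
      + n^2 * ((n+1) * Nat.centralBinom k * 2 ^ (k * (n - 2))) := by
  classical
  have hbi : (Finset.univ.biUnion (Gset n k)).card = n * (Gset n k ⟨0, hn⟩).card := by
    rw [Finset.card_biUnion (fun l _ l' _ h => Gset_disjoint h)]
    rw [Finset.sum_congr rfl (fun l _ => Gset_card_eq l ⟨0, hn⟩)]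
    rw [Finset.sum_const, Finset.card_univ, Fintype.card_fin, smul_eq_mul]
  have huniv : (Finset.univ : Finset (Fin n × Fin k → Fin 2)).card = 2^(n*k) := by
    rw [Finset.card_univ, Fintype.card_fun, Fintype.card_fin, Fintype.card_prod,
      Fintype.card_fin, Fintype.card_fin]
  constructor
  · rw [← hbi, ← huniv]
    exact Finset.card_le_card (Finset.subset_univ _)
  · have hsd : (Finset.univ \ Finset.univ.biUnion (Gset n k)).card
        = 2^(n*k) - n * (Gset n k ⟨0, hn⟩).card := by
      rw [Finset.card_sdiff_of_subset (Finset.subset_univ _), huniv, hbi]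
    have hcb : (Finset.univ \ Finset.univ.biUnion (Gset n k)).card
        ≤ n^2 * ((n+1) * Nat.centralBinom k * 2 ^ (k * (n - 2))) := by
      calc (Finset.univ \ Finset.univ.biUnion (Gset n k)).card
          ≤ (((Finset.univ : Finset (Fin n × Fin n)).filter fun q => q.1 ≠ q.2).biUnion
              (fun q => Finset.univ.filter fun c : Fin n × Fin k → Fin 2 =>
                wt (col c q.2) ≤ wt (col c q.1) ∧ wt (col c q.1) ≤ wt (col c q.2) + n)).card :=
            Finset.card_le_card (compl_subset hn)
        _ ≤ ∑ q ∈ ((Finset.univ : Finset (Fin n × Fin n)).filter fun q => q.1 ≠ q.2),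
              ((Finset.univ.filter fun c : Fin n × Fin k → Fin 2 =>
                wt (col c q.2) ≤ wt (col c q.1) ∧ wt (col c q.1) ≤ wt (col c q.2) + n)).card :=
            Finset.card_biUnion_le
        _ ≤ ∑ _q ∈ ((Finset.univ : Finset (Fin n × Fin n)).filter fun q => q.1 ≠ q.2),
              ((n+1) * Nat.centralBinom k * 2 ^ (k * (n - 2))) := by
            apply Finset.sum_le_sum
            intro q hq
            simp only [Finset.mem_filter, Finset.mem_univ, true_and] at hq
            calc _ ≤ ((Finset.univ.filter fun p : (Fin k → Fin 2) × (Fin k → Fin 2) =>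
                  wt p.2 ≤ wt p.1 ∧ wt p.1 ≤ wt p.2 + n)).card * 2 ^ (k * (n - 2)) :=
                col_count_le q.1 q.2 hq (fun a b => wt b ≤ wt a ∧ wt a ≤ wt b + n)
              _ ≤ _ := Nat.mul_le_mul_right _ (Dpair_count k n)
        _ ≤ n^2 * ((n+1) * Nat.centralBinom k * 2 ^ (k * (n - 2))) := by
            rw [Finset.sum_const, smul_eq_mul]
            apply Nat.mul_le_mul_right
            calc _ ≤ (Finset.univ : Finset (Fin n × Fin n)).card :=
                  Finset.card_le_card (Finset.filter_subset _ _)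
              _ = n^2 := by
                  rw [Finset.card_univ, Fintype.card_prod, Fintype.card_fin, sq]
    omega

/-! ### The cylinder measure -/

lemma cylinder_measure {ι : Type*} [Fintype ι] [DecidableEq ι]
    (ν : Measure (ℤ → Fin 2))
    (hν : IsBernoulliMeasure ((2 : ENNReal)⁻¹ • Measure.count) ν)
    (e : ι → ℤ) (he : Function.Injective e)
    (Q : (ι → Fin 2) → Prop) [DecidablePred Q] :
    ν {ω | Q (fun p => ω (e p))} =
      ((Finset.univ.filter Q).card : ENNReal) * (2 : ENNReal)⁻¹ ^ (Fintype.card ι) := by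
  classical
  have hcyl : ∀ c : ι → Fin 2,
      ν {ω : ℤ → Fin 2 | ∀ p, ω (e p) = c p} = (2 : ENNReal)⁻¹ ^ (Fintype.card ι) := by
    intro c
    have h := hν.2 (Finset.univ.image e)
      (fun γ => {x | ∀ p, e p = γ → x = c p}) (fun γ => (Set.to_countable _).measurableSet)
    have hset : {ω : ℤ → Fin 2 | ∀ γ ∈ Finset.univ.image e, ω γ ∈ {x | ∀ p, e p = γ → x = c p}}
        = {ω : ℤ → Fin 2 | ∀ p, ω (e p) = c p} := by
      ext ω
      simp only [Set.mem_setOf_eq, Finset.mem_image, Finset.mem_univ, true_and]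
      constructor
      · intro h p; exact h (e p) ⟨p, rfl⟩ p rfl
      · rintro h γ ⟨p, rfl⟩ q hq; rw [← hq]; exact h q
    rw [hset] at h
    rw [h, Finset.prod_image (fun a _ b _ hab => he hab)]
    have hone : ∀ p : ι, ((2 : ENNReal)⁻¹ • Measure.count) {x | ∀ q, e q = e p → x = c q}
        = (2 : ENNReal)⁻¹ := by
      intro p
      have hsing : {x : Fin 2 | ∀ q, e q = e p → x = c q} = {c p} := by
        ext x
        simp only [Set.mem_setOf_eq, Set.mem_singleton_iff]
        constructor
        · intro h; exact h p rfl
        · intro h q hq; rw [h, he hq]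
      rw [hsing, Measure.smul_apply, Measure.count_singleton, smul_eq_mul, mul_one]
    simp only [hone, Finset.prod_const, Finset.card_univ]
  have hdecomp : {ω : ℤ → Fin 2 | Q (fun p => ω (e p))}
      = ⋃ c ∈ Finset.univ.filter Q, {ω : ℤ → Fin 2 | ∀ p, ω (e p) = c p} := by
    ext ω
    simp only [Set.mem_setOf_eq, Set.mem_iUnion, Finset.mem_filter, Finset.mem_univ, true_and]
    constructor
    · intro h; exact ⟨fun p => ω (e p), h, fun p => rfl⟩
    · rintro ⟨c, hc, hωc⟩
      have : (fun p => ω (e p)) = c := funext hωc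
      rwa [this]
  rw [hdecomp, measure_biUnion_finset]
  · simp only [hcyl, Finset.sum_const, nsmul_eq_mul]
  · intro c hc c' hc' hne
    simp only [Function.onFun, Set.disjoint_left]
    intro ω hω hω'
    exact hne (funext fun p => by rw [← hω p, ← hω' p])
  · intro c hc
    have : {ω : ℤ → Fin 2 | ∀ p, ω (e p) = c p} = ⋂ p, (fun ω : ℤ → Fin 2 => ω (e p)) ⁻¹' {c p} := by
      ext ω; simp [Set.mem_iInter]
    rw [this]
    exact MeasurableSet.iInter fun p => (measurable_pi_apply (e p)) (MeasurableSet.singleton _)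

/-! ### The bridge between `Aset` and configurations -/

/-- the embedding of coordinates -/
def emb (n k : ℕ) (p : Fin n × Fin k) : ℤ := (p.2.val : ℤ) * (n : ℤ) + (p.1.val : ℤ)

lemma emb_injective (n k : ℕ) : Function.Injective (emb n k) := by
  rintro ⟨l₁, i₁⟩ ⟨l₂, i₂⟩ h
  simp only [emb] at h
  have hl₁ : (l₁.val : ℤ) < n := by exact_mod_cast l₁.isLt
  have hl₂ : (l₂.val : ℤ) < n := by exact_mod_cast l₂.isLt
  have hl1 : (0:ℤ) ≤ l₁.val := by positivity
  have hl2 : (0:ℤ) ≤ l₂.val := by positivity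
  have hn' : (0:ℤ) < n := by linarith
  have key : ((i₁.val:ℤ) - i₂.val) * n = l₂.val - l₁.val := by linarith
  have hii : (i₁.val : ℤ) = i₂.val ∧ (l₁.val : ℤ) = l₂.val := by
    rcases lt_trichotomy (i₁.val : ℤ) (i₂.val : ℤ) with hlt | heq | hgt
    · exfalso
      have ha : ((i₁.val:ℤ) - i₂.val) ≤ -1 := by omega
      have h2 : ((i₁.val:ℤ) - i₂.val) * n ≤ (-1) * n :=
        mul_le_mul_of_nonneg_right ha (le_of_lt hn')
      linarith
    · constructor
      · exact heq
      · rw [heq] at key; linarith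
    · exfalso
      have ha : (1:ℤ) ≤ ((i₁.val:ℤ) - i₂.val) := by omega
      have h2 : (1:ℤ) * n ≤ ((i₁.val:ℤ) - i₂.val) * n :=
        mul_le_mul_of_nonneg_right ha (le_of_lt hn')
      linarith
  have : i₁ = i₂ := Fin.ext (by exact_mod_cast hii.1)
  have : l₁ = l₂ := Fin.ext (by exact_mod_cast hii.2)
  simp_all

lemma wt_col_eq (n k : ℕ) (ω : ℤ → Fin 2) (m : Fin n) :
    wt (col (fun p : Fin n × Fin k => ω (emb n k p)) m) = wnorm n k (m.val : ℤ) ω := by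
  unfold wt col wnorm emb
  exact Fin.sum_univ_eq_sum_range (fun i : ℕ => (ω ((i : ℤ) * (n : ℤ) + (m.val : ℤ)) : ℕ)) k

/-- For the Bernoulli `(1/2, 1/2)` product measure on `{0,1}^ℤ`, the measure of `A_k`
converges to `1/n` as `k → ∞`. -/
theorem measure_Aset_tendsto (n : ℕ) (hn : 0 < n)
    (ν : Measure (ℤ → Fin 2))
    (hν : IsBernoulliMeasure ((2 : ENNReal)⁻¹ • Measure.count) ν) :
    Tendsto (fun k : ℕ => (ν (Aset n k)).toReal) atTop (nhds (1 / (n : ℝ))) := by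
  classical
  haveI := hν.1
  rcases eq_or_lt_of_le (Nat.succ_le_of_lt hn) with h1 | h2
  · -- n = 1
    have hn1 : n = 1 := h1.symm
    subst hn1
    have hA : ∀ k, Aset 1 k = Set.univ := by
      intro k
      ext ω
      simp only [Aset, Set.mem_setOf_eq, Set.mem_univ, iff_true]
      intro l hl1 hl2
      omega
    simp only [hA, measure_univ, ENNReal.toReal_one, Nat.cast_one, div_one]
    exact tendsto_const_nhds
  · -- 2 ≤ n
    set z : Fin n := ⟨0, hn⟩ with hz
    have hnR : (0:ℝ) < n := by exact_mod_cast hn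
    -- identification of the measure of Aset
    have hmeas : ∀ k, ν (Aset n k)
        = ((Gset n k z).card : ENNReal) * (2 : ENNReal)⁻¹ ^ (n * k) := by
      intro k
      have hAQ : Aset n k = {ω | (fun c => ∀ m, m ≠ z → wt (col c m) + n < wt (col c z))
          (fun p : Fin n × Fin k => ω (emb n k p))} := by
        ext ω
        simp only [Aset, Set.mem_setOf_eq]
        constructor
        · intro h m hm
          rw [wt_col_eq, wt_col_eq]
          have hz0 : ((z.val : ℕ) : ℤ) = 0 := by simp [hz]
          rw [hz0]
          have hm1 : 1 ≤ (m.val : ℤ) := by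
            have : m.val ≠ 0 := fun hc => hm (Fin.ext (by simp [hz, hc]))
            omega
          have hm2 : (m.val : ℤ) ≤ (n : ℤ) - 1 := by
            have := m.isLt
            omega
          exact h (m.val : ℤ) hm1 hm2
        · intro h l hl1 hl2
          have hln : l.toNat < n := by omega
          have hm : (⟨l.toNat, hln⟩ : Fin n) ≠ z := by
            intro hc
            have : l.toNat = 0 := by simpa [hz] using congrArg Fin.val hc
            omega
          have := h ⟨l.toNat, hln⟩ hm
          rw [wt_col_eq, wt_col_eq] at this
          have hz0 : ((z.val : ℕ) : ℤ) = 0 := by simp [hz]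
          rw [hz0] at this
          have hl : ((l.toNat : ℕ) : ℤ) = l := by omega
          rw [hl] at this
          exact this
      rw [hAQ, cylinder_measure ν hν (emb n k) (emb_injective n k)
        (fun c => ∀ m, m ≠ z → wt (col c m) + n < wt (col c z))]
      have hcard : (Finset.univ.filter
          (fun c : Fin n × Fin k → Fin 2 => ∀ m, m ≠ z → wt (col c m) + n < wt (col c z))).card
          = (Gset n k z).card := by
        congr 1
      rw [Fintype.card_prod, Fintype.card_fin, Fintype.card_fin, hcard]
    -- real form
    have hreal : ∀ k, (ν (Aset n k)).toReal
        = ((Gset n k z).card : ℝ) / 2 ^ (n * k) := by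
      intro k
      rw [hmeas k, ENNReal.toReal_mul, ENNReal.toReal_pow, ENNReal.toReal_inv]
      simp [div_eq_mul_inv, inv_pow]
    -- inequalities
    have hub : ∀ k, (ν (Aset n k)).toReal ≤ 1 / (n:ℝ) := by
      intro k
      rw [hreal k]
      rw [div_le_div_iff₀ (by positivity) hnR]
      have h := (master_count n k hn).1
      have : ((n * (Gset n k z).card : ℕ) : ℝ) ≤ ((2^(n*k) : ℕ) : ℝ) := by exact_mod_cast h
      push_cast at this
      linarith
    have hlb : ∀ k, 1 / (n:ℝ) - (n*(n+1)) * ((Nat.centralBinom k : ℝ) / 4^k)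
        ≤ (ν (Aset n k)).toReal := by
      intro k
      rw [hreal k]
      set N : ℝ := ((Gset n k z).card : ℝ) with hN
      have hNpos : 0 ≤ N := by positivity
      have hPeq : (2:ℝ)^(n*k) = 2^(k*(n-2)) * 4^k := by
        rw [show (4:ℝ) = 2^2 by norm_num, ← pow_mul, ← pow_add]
        congr 1
        have h22 : n - 2 + 2 = n := by omega
        calc n*k = ((n-2)+2)*k := by rw [h22]
          _ = k*(n-2) + 2*k := by ring
      have h2' := (master_count n k hn).2
      have h2R : (2:ℝ)^(n*k)
          ≤ n*N + n^2*((n+1)*(Nat.centralBinom k : ℝ)*2^(k*(n-2))) := by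
        have : ((2^(n*k) : ℕ) : ℝ) ≤ ((n * (Gset n k z).card
            + n^2 * ((n+1) * Nat.centralBinom k * 2 ^ (k * (n - 2))) : ℕ) : ℝ) := by
          exact_mod_cast h2'
        push_cast at this
        linarith
      rw [sub_le_iff_le_add]
      have hP : (0:ℝ) < 2^(n*k) := by positivity
      have h4 : (0:ℝ) < 4^k := by positivity
      have h2k : (0:ℝ) < (2:ℝ)^(k*(n-2)) := by positivity
      have expand : N / 2^(n*k) + (n:ℝ)*((n:ℝ)+1)*((Nat.centralBinom k : ℝ)/4^k)
          = (N*4^k + (n:ℝ)*((n:ℝ)+1)*(Nat.centralBinom k : ℝ)*2^(n*k)) / (2^(n*k)*4^k) := by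
        field_simp
      rw [expand, div_le_div_iff₀ hnR (by positivity)]
      calc (1:ℝ) * (2^(n*k) * 4^k) = 2^(n*k) * 4^k := by ring
        _ ≤ (n*N + n^2*((n+1)*(Nat.centralBinom k : ℝ)*2^(k*(n-2)))) * 4^k := by
            apply mul_le_mul_of_nonneg_right h2R (le_of_lt h4)
        _ = (N * 4^k + n*(n+1)*(Nat.centralBinom k : ℝ)*(2^(k*(n-2))*4^k))*n := by ring
        _ = (N * 4^k + n*(n+1)*(Nat.centralBinom k : ℝ)*2^(n*k))*n := by rw [← hPeq]
        _ = (N * 4 ^ k + n * (n + 1) * ↑(Nat.centralBinom k) * 2 ^ (n * k)) * ↑n := by ring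
    -- squeeze
    have hlow : Tendsto (fun k : ℕ => 1 / (n:ℝ)
        - (n*(n+1)) * ((Nat.centralBinom k : ℝ) / 4^k)) atTop (nhds (1 / (n:ℝ))) := by
      have := tendsto_const_nhds (x := (1:ℝ)/(n:ℝ)) (f := atTop (α := ℕ))
      have h0 : Tendsto (fun k : ℕ => ((n:ℝ)*(n+1)) * ((Nat.centralBinom k : ℝ) / 4^k))
          atTop (nhds 0) := by
        have := cb_tendsto.const_mul ((n:ℝ)*(n+1))
        simpa using this
      simpa using tendsto_const_nhds.sub h0
    exact tendsto_of_tendsto_of_tendsto_of_le_of_le hlow tendsto_const_nhds hlb hub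
end

section
/- Let f be a p.m.p. action of the countable group Γ on a standard Borel probability space (X, μ), and let p₁, …, p_d be positive reals summing to 1. Suppose that for every finite subset F ⊆ Γ and every δ > 0 there exists a Borel map φ : X → {1, …, d} such that for every α ∈ {1, …, d}^F, |μ({x ∈ X : φ(f_γ x) = α(γ) for all γ ∈ F}) − Π_{γ∈F} p_{α(γ)}| < δ. Then f weakly contains the Bernoulli action κ(p₁, …, p_d)^Γ. -/
open MeasureTheory Filter Topology

/-- The measure on `Fin d` with `P(i) = p i`. -/
noncomputable def discreteMeasure {d : ℕ} (p : Fin d → ℝ) : Measure (Fin d) :=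
  ∑ i : Fin d, ENNReal.ofReal (p i) • Measure.dirac i


open scoped ENNReal

section Helpers
open Set Function

variable {Γ : Type*} {d : ℕ}

/-- `C ⊆ (Γ → Fin d)` is determined by the coordinates in `F`. -/
def wcDetBy (F : Finset Γ) (C : Set (Γ → Fin d)) : Prop :=
  ∀ ⦃ω ω' : Γ → Fin d⦄, (∀ γ ∈ F, ω γ = ω' γ) → ω ∈ C → ω' ∈ C

lemma wcDetBy.mono {F F' : Finset Γ} {C : Set (Γ → Fin d)} (hFF : F ⊆ F')
    (h : wcDetBy F C) : wcDetBy F' C :=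
  fun _ _ hag => h (fun γ hγ => hag γ (hFF hγ))

lemma wcDetBy.compl {F : Finset Γ} {C : Set (Γ → Fin d)} (h : wcDetBy F C) :
    wcDetBy F Cᶜ := fun _ _ hag hω hmem => hω (h (fun γ hγ => (hag γ hγ).symm) hmem)

lemma wcDetBy.inter {F : Finset Γ} {C C' : Set (Γ → Fin d)} (h : wcDetBy F C)
    (h' : wcDetBy F C') : wcDetBy F (C ∩ C') :=
  fun _ _ hag hm => ⟨h hag hm.1, h' hag hm.2⟩

/-- Atom: all configurations agreeing with `α` on `F`. -/
def wcAtom (F : Finset Γ) (α : Γ → Fin d) : Set (Γ → Fin d) := {ω | ∀ γ ∈ F, ω γ = α γ}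

lemma measurableSet_wcAtom (F : Finset Γ) (α : Γ → Fin d) : MeasurableSet (wcAtom F α) := by
  have h : wcAtom F α = ⋂ γ ∈ F, (fun ω : Γ → Fin d => ω γ) ⁻¹' {α γ} := by
    ext ω; simp [wcAtom]
  rw [h]
  exact MeasurableSet.biInter F.countable_toSet
    (fun γ _ => measurable_pi_apply γ (measurableSet_singleton _))

open scoped Classical in
noncomputable def wcExt [Nonempty (Fin d)] (F : Finset Γ) (a : ↥F → Fin d) : Γ → Fin d :=
  fun γ => if h : γ ∈ F then a ⟨γ, h⟩ else Classical.arbitrary _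

open scoped Classical in
lemma wcExt_mem [Nonempty (Fin d)] {F : Finset Γ} (a : ↥F → Fin d) {γ : Γ} (h : γ ∈ F) :
    wcExt F a γ = a ⟨γ, h⟩ := dif_pos h

open scoped Classical in
lemma wcDetBy.eq_biUnion [Nonempty (Fin d)] {F : Finset Γ} {C : Set (Γ → Fin d)}
    (h : wcDetBy F C) :
    C = ⋃ a ∈ Finset.univ.filter (fun a : ↥F → Fin d => wcExt F a ∈ C),
      wcAtom F (wcExt F a) := by
  ext ω
  simp only [Set.mem_iUnion, Finset.mem_filter, Finset.mem_univ, true_and, exists_prop]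
  constructor
  · intro hω
    refine ⟨fun x => ω x.1, h (fun γ hγ => (wcExt_mem (fun x : ↥F => ω x.1) hγ).symm) hω,
      fun γ hγ => (wcExt_mem (fun x : ↥F => ω x.1) hγ).symm⟩
  · rintro ⟨a, haC, hω⟩
    exact h (fun γ hγ => (hω γ hγ).symm) haC

lemma wcAtom_disjoint [Nonempty (Fin d)] {F : Finset Γ} {a b : ↥F → Fin d} (hab : a ≠ b) :
    Disjoint (wcAtom F (wcExt F a)) (wcAtom F (wcExt F b)) := by
  rw [Set.disjoint_left]
  intro ω hωa hωb
  apply hab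
  funext x
  have h := (hωa x.1 x.2).symm.trans (hωb x.1 x.2)
  rwa [wcExt_mem a x.2, wcExt_mem b x.2] at h

open scoped Classical in
lemma measure_preimage_wcDetBy [Nonempty (Fin d)] {F : Finset Γ} {C : Set (Γ → Fin d)}
    (h : wcDetBy F C) {Z : Type*} [MeasurableSpace Z] (m : Measure Z)
    {g : Z → (Γ → Fin d)} (hg : Measurable g) :
    m (g ⁻¹' C) = ∑ a ∈ Finset.univ.filter (fun a : ↥F → Fin d => wcExt F a ∈ C),
      m (g ⁻¹' wcAtom F (wcExt F a)) := by
  have hdecomp : g ⁻¹' C = ⋃ a ∈ Finset.univ.filter (fun a : ↥F → Fin d => wcExt F a ∈ C),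
      g ⁻¹' wcAtom F (wcExt F a) := by
    conv_lhs => rw [h.eq_biUnion]
    rw [Set.preimage_iUnion₂]
  rw [hdecomp]
  refine measure_biUnion_finset ?_ (fun a _ => hg (measurableSet_wcAtom F _))
  intro a _ b _ hab
  exact (wcAtom_disjoint hab).preimage g

lemma wcDetBy.measurableSet [Nonempty (Fin d)] {F : Finset Γ} {C : Set (Γ → Fin d)}
    (h : wcDetBy F C) : MeasurableSet C := by
  classical
  rw [h.eq_biUnion]
  exact (Finset.univ.filter _).measurableSet_biUnion fun a _ => measurableSet_wcAtom F _

end Helpers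

section Helpers2
open Set Function

variable {Γ : Type*} {d : ℕ}

lemma measurable_bernoulliShift [Group Γ] {κ : Type*} [MeasurableSpace κ] (γ : Γ) :
    Measurable (bernoulliShift (Γ := Γ) (κ := κ) γ) :=
  measurable_pi_lambda _ fun δ => measurable_pi_apply (δ * γ)

lemma bernoulliShift_image [Group Γ] {κ : Type*} (γ : Γ) (C : Set (Γ → κ)) :
    bernoulliShift γ '' C = bernoulliShift γ⁻¹ ⁻¹' C := by
  ext ω
  constructor
  · rintro ⟨ω', hω', rfl⟩
    have h : bernoulliShift γ⁻¹ (bernoulliShift (Γ := Γ) (κ := κ) γ ω') = ω' := by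
      funext δ; simp [bernoulliShift]
    simpa [Set.mem_preimage, h] using hω'
  · intro hω
    exact ⟨bernoulliShift γ⁻¹ ω, hω, by funext δ; simp [bernoulliShift]⟩

open scoped Classical in
lemma wcDetBy.preimage_shift [Group Γ] {F : Finset Γ} {C : Set (Γ → Fin d)}
    (h : wcDetBy F C) (γ : Γ) :
    wcDetBy (F.image (fun δ => δ * γ)) (bernoulliShift γ ⁻¹' C) := by
  intro ω ω' hag hω
  exact h (fun δ hδ => hag (δ * γ) (Finset.mem_image_of_mem _ hδ)) hω

lemma symmDiff_inter_subset {α : Type*} (P P' Q Q' : Set α) :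
    symmDiff (P ∩ Q) (P' ∩ Q') ⊆ symmDiff P P' ∪ symmDiff Q Q' := by
  intro x hx
  simp only [Set.mem_symmDiff, Set.mem_union, Set.mem_inter_iff] at *
  tauto

lemma preimage_symmDiff' {α β : Type*} (g : α → β) (A B : Set β) :
    g ⁻¹' (symmDiff A B) = symmDiff (g ⁻¹' A) (g ⁻¹' B) := by
  ext x; simp [Set.mem_symmDiff]

lemma abs_toReal_sub_le {α : Type*} [MeasurableSpace α] (m : Measure α) [IsFiniteMeasure m]
    (A B : Set α) :
    |(m A).toReal - (m B).toReal| ≤ (m (symmDiff A B)).toReal := by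
  have key : ∀ P Q : Set α, (m P).toReal - (m Q).toReal ≤ (m (symmDiff P Q)).toReal := by
    intro P Q
    have hsub : P ⊆ Q ∪ symmDiff P Q := by
      intro x hx
      by_cases hxQ : x ∈ Q
      · exact Or.inl hxQ
      · exact Or.inr (Set.mem_symmDiff.mpr (Or.inl ⟨hx, hxQ⟩))
    have h1 := (measure_mono hsub).trans (measure_union_le (μ := m) Q (symmDiff P Q))
    have h2 := ENNReal.toReal_mono
      (ENNReal.add_ne_top.mpr ⟨measure_ne_top m Q, measure_ne_top m _⟩) h1
    rw [ENNReal.toReal_add (measure_ne_top m Q) (measure_ne_top m _)] at h2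
    linarith
  have h1 := key A B
  have h2 := key B A
  rw [symmDiff_comm] at h2
  exact abs_sub_le_iff.mpr ⟨h1, h2⟩

lemma exists_wcDetBy_approx (m : Measure (Γ → Fin d)) [IsFiniteMeasure m]
    {A : Set (Γ → Fin d)} (hA : MeasurableSet A) :
    ∀ ε : ℝ≥0∞, 0 < ε → ∃ (F : Finset Γ) (C : Set (Γ → Fin d)),
      wcDetBy F C ∧ m (symmDiff A C) < ε := by
  classical
  have hgen := MeasurableSpace.pi_eq_generateFrom_projections (α := fun _ : Γ => Fin d) (mα := fun _ => inferInstance)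
  have hA' : MeasurableSet[MeasurableSpace.generateFrom
      {B | ∃ (γ : Γ) (s : Set (Fin d)), MeasurableSet s ∧ Function.eval γ ⁻¹' s = B}] A := by
    rw [← hgen]; exact hA
  refine MeasurableSpace.generateFrom_induction _
    (fun t _ => ∀ ε : ℝ≥0∞, 0 < ε → ∃ (F : Finset Γ) (C : Set (Γ → Fin d)),
      wcDetBy F C ∧ m (symmDiff t C) < ε) ?_ ?_ ?_ ?_ A hA'
  · rintro t ⟨γ, s, _, rfl⟩ _ ε hε
    refine ⟨{γ}, Function.eval γ ⁻¹' s, ?_, ?_⟩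
    · intro ω ω' hag hω
      have := hag γ (Finset.mem_singleton_self γ)
      simpa [Function.eval, ← this] using hω
    · rw [symmDiff_self]
      simpa using hε
  · intro ε hε
    exact ⟨∅, ∅, fun _ _ _ h => h, by rw [symmDiff_self]; simpa using hε⟩
  · intro t _ IH ε hε
    obtain ⟨F, C, hdet, hlt⟩ := IH ε hε
    exact ⟨F, Cᶜ, hdet.compl, by rwa [compl_symmDiff_compl]⟩
  · intro s hs IH ε hε
    by_cases hεtop : ε = ∞
    · refine ⟨∅, ∅, fun _ _ _ h => h, ?_⟩
      rw [hεtop]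
      simpa [symmDiff] using measure_lt_top m _
    · have hsm : ∀ k, MeasurableSet (s k) := fun k => by rw [hgen]; exact hs k
      have hε2 : (0 : ℝ≥0∞) < ε / 2 := ENNReal.div_pos hε.ne' (by norm_num)
      have htendsto := tendsto_measure_iUnion_accumulate (μ := m) (f := s)
      have hmem : {v : ℝ≥0∞ | m (⋃ k, s k) < v + ε / 2} ∈ 𝓝 (m (⋃ k, s k)) := by
        have hopen : IsOpen {v : ℝ≥0∞ | m (⋃ k, s k) < v + ε / 2} :=
          isOpen_lt continuous_const (continuous_id.add continuous_const)
        exact hopen.mem_nhds (ENNReal.lt_add_right (measure_ne_top m _) hε2.ne')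
      obtain ⟨N, hN⟩ := (htendsto.eventually hmem).exists
      set εn := ε / 2 / (N + 1) with hεn
      have hεnpos : 0 < εn :=
        ENNReal.div_pos hε2.ne' (by simp)
      choose Fn Cn hdet hC using fun k : ℕ => IH k εn hεnpos
      refine ⟨(Finset.range (N + 1)).biUnion Fn, ⋃ k ∈ Finset.range (N + 1), Cn k, ?_, ?_⟩
      · intro ω ω' hag hω
        simp only [Set.mem_iUnion, exists_prop] at hω ⊢
        obtain ⟨k, hk, hωk⟩ := hω
        exact ⟨k, hk, ((hdet k).mono fun γ hγ => Finset.mem_biUnion.mpr ⟨k, hk, hγ⟩) hag hωk⟩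
      · have hGmeas : MeasurableSet (Set.accumulate s N) := by
          rw [Set.accumulate_def]
          exact MeasurableSet.biUnion (Set.to_countable _) fun y _ => hsm y
        have hGsub : Set.accumulate s N ⊆ ⋃ k, s k :=
          (Set.subset_iUnion (Set.accumulate s) N).trans (Set.iUnion_accumulate).le
        have hdiff : m ((⋃ k, s k) \ Set.accumulate s N) < ε / 2 := by
          rw [measure_diff hGsub hGmeas.nullMeasurableSet (measure_ne_top m _)]
          exact ENNReal.sub_lt_of_lt_add (measure_mono hGsub) (by rwa [add_comm] at hN)
        have hsubset : symmDiff (⋃ k, s k) (⋃ k ∈ Finset.range (N + 1), Cn k) ⊆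
            ((⋃ k, s k) \ Set.accumulate s N) ∪
              ⋃ k ∈ Finset.range (N + 1), symmDiff (s k) (Cn k) := by
          intro x hx
          rw [Set.mem_symmDiff] at hx
          rcases hx with ⟨hxA, hxC⟩ | ⟨hxC, hxA⟩
          · by_cases hxG : x ∈ Set.accumulate s N
            · obtain ⟨k, hk, hxk⟩ : ∃ k, k ≤ N ∧ x ∈ s k := by
                simpa [Set.accumulate_def] using hxG
              refine Or.inr (Set.mem_biUnion (Finset.mem_range.mpr (Nat.lt_succ_of_le hk)) ?_)
              rw [Set.mem_symmDiff]
              exact Or.inl ⟨hxk, fun hmem => hxC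
                (Set.mem_biUnion (Finset.mem_range.mpr (Nat.lt_succ_of_le hk)) hmem)⟩
            · exact Or.inl ⟨hxA, hxG⟩
          · simp only [Set.mem_iUnion, exists_prop] at hxC
            obtain ⟨k, hk, hxk⟩ := hxC
            refine Or.inr (Set.mem_biUnion hk ?_)
            rw [Set.mem_symmDiff]
            exact Or.inr ⟨hxk, fun h => hxA (Set.mem_iUnion.mpr ⟨k, h⟩)⟩
        have hε2top : ε / 2 ≠ ∞ := (ENNReal.div_lt_top hεtop (by norm_num)).ne
        calc m (symmDiff (⋃ k, s k) (⋃ k ∈ Finset.range (N + 1), Cn k))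
            ≤ m ((⋃ k, s k) \ Set.accumulate s N) +
              m (⋃ k ∈ Finset.range (N + 1), symmDiff (s k) (Cn k)) :=
              (measure_mono hsubset).trans (measure_union_le _ _)
          _ ≤ m ((⋃ k, s k) \ Set.accumulate s N) +
              ∑ k ∈ Finset.range (N + 1), m (symmDiff (s k) (Cn k)) := by
              gcongr
              exact measure_biUnion_finset_le _ _
          _ ≤ m ((⋃ k, s k) \ Set.accumulate s N) + ∑ k ∈ Finset.range (N + 1), εn := by
              gcongr with k hk
              exact (hC k).le
          _ ≤ m ((⋃ k, s k) \ Set.accumulate s N) + ε / 2 := by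
              gcongr
              rw [Finset.sum_const, Finset.card_range, nsmul_eq_mul, hεn]
              push_cast
              exact ENNReal.mul_div_le
          _ < ε / 2 + ε / 2 := ENNReal.add_lt_add_right hε2top hdiff
          _ = ε := ENNReal.add_halves ε

end Helpers2

section Helpers3
open Set Function

lemma discreteMeasure_singleton {d : ℕ} (p : Fin d → ℝ) (j : Fin d) :
    discreteMeasure p {j} = ENNReal.ofReal (p j) := by
  simp only [discreteMeasure, Measure.finset_sum_apply, Measure.smul_apply, smul_eq_mul,
    Measure.dirac_apply]
  rw [Finset.sum_eq_single j]
  · simp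
  · intro i _ hij
    simp [Set.indicator_of_notMem, hij]
  · simp

lemma bernoulli_atom {Γ : Type*} {d : ℕ} {p : Fin d → ℝ} {ν : Measure (Γ → Fin d)}
    (hν : IsBernoulliMeasure (discreteMeasure p) ν) (F : Finset Γ) (α : Γ → Fin d) :
    ν (wcAtom F α) = ∏ γ ∈ F, ENNReal.ofReal (p (α γ)) := by
  have h := hν.2 F (fun γ => {α γ}) (fun γ => measurableSet_singleton _)
  simp only [Set.mem_singleton_iff] at h
  have hset : wcAtom F α = {ω : Γ → Fin d | ∀ γ ∈ F, ω γ = α γ} := rfl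
  rw [hset, h]
  exact Finset.prod_congr rfl fun γ _ => discreteMeasure_singleton p (α γ)

lemma abs_toReal_sum_sub_le {ι : Type*} [Fintype ι] (T : Finset ι) (u v : ι → ℝ≥0∞) {δ : ℝ}
    (hδ : 0 ≤ δ) (hu : ∀ a ∈ T, u a ≠ ∞) (hv : ∀ a ∈ T, v a ≠ ∞)
    (h : ∀ a ∈ T, |(u a).toReal - (v a).toReal| ≤ δ) :
    |(∑ a ∈ T, u a).toReal - (∑ a ∈ T, v a).toReal| ≤ (Fintype.card ι : ℝ) * δ := by
  rw [ENNReal.toReal_sum hu, ENNReal.toReal_sum hv, ← Finset.sum_sub_distrib]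
  refine (Finset.abs_sum_le_sum_abs _ _).trans ?_
  refine (Finset.sum_le_sum h).trans ?_
  rw [Finset.sum_const, nsmul_eq_mul]
  have hcard : (T.card : ℝ) ≤ (Fintype.card ι : ℝ) := by
    exact_mod_cast Finset.card_le_univ T
  exact mul_le_mul_of_nonneg_right hcard hδ

end Helpers3

/-- **Lemma (reduction).** If the finite-dimensional distributions of the Bernoulli base can
be simulated by Borel maps `φ : X → {1,…,d}` with arbitrarily small error, then `f` weakly
contains the Bernoulli action `κ(p₁,…,p_d)^Γ`. -/
theorem weakly_contains_bernoulli_of_approx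
    {Γ : Type*} [Group Γ] [Countable Γ]
    {X : Type*} [MeasurableSpace X] [StandardBorelSpace X]
    (μ : Measure X) [IsProbabilityMeasure μ]
    (f : Γ → X → X) (hf : IsPMPAction f μ)
    {d : ℕ} (p : Fin d → ℝ) (hp : ∀ i, 0 < p i) (hsum : ∑ i, p i = 1)
    (happrox : ∀ (F : Finset Γ) (δ : ℝ), 0 < δ →
      ∃ φ : X → Fin d, Measurable φ ∧
        ∀ α : Γ → Fin d,
          |(μ {x | ∀ γ ∈ F, φ (f γ x) = α γ}).toReal - ∏ γ ∈ F, p (α γ)| < δ)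
    (ν : Measure (Γ → Fin d)) (hν : IsBernoulliMeasure (discreteMeasure p) ν) :
    WeaklyContains f μ (bernoulliShift (κ := Fin d)) ν := by
  classical
  obtain ⟨hmp, hone, hmul⟩ := hf
  haveI hνP : IsProbabilityMeasure ν := hν.1
  have hd : 0 < d := by
    rcases Nat.eq_zero_or_pos d with rfl | hd
    · simp at hsum
    · exact hd
  haveI : Nonempty (Fin d) := ⟨⟨0, hd⟩⟩
  intro n Ys hYs S ε hε
  set ν' : Measure (Γ → Fin d) :=
    ν + ∑ γ ∈ S, Measure.map (bernoulliShift (κ := Fin d) γ⁻¹) ν with hν'def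
  haveI : IsFiniteMeasure ν' := by
    constructor
    rw [hν'def, Measure.add_apply, Measure.finset_sum_apply]
    refine ENNReal.add_lt_top.mpr ⟨measure_lt_top _ _, ?_⟩
    rw [ENNReal.sum_lt_top]
    intro γ _
    haveI := Measure.isProbabilityMeasure_map
      (μ := ν) (measurable_bernoulliShift (Γ := Γ) (κ := Fin d) γ⁻¹).aemeasurable
    exact measure_lt_top _ _
  have hν'le : ∀ E : Set (Γ → Fin d), ν E ≤ ν' E := by
    intro E
    rw [hν'def, Measure.add_apply]
    exact le_self_add
  have hν'shift : ∀ γ ∈ S, ∀ E : Set (Γ → Fin d), MeasurableSet E →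
      ν (bernoulliShift γ⁻¹ ⁻¹' E) ≤ ν' E := by
    intro γ hγ E hE
    have h1 : ν (bernoulliShift γ⁻¹ ⁻¹' E)
        = Measure.map (bernoulliShift (κ := Fin d) γ⁻¹) ν E :=
      (Measure.map_apply (measurable_bernoulliShift _) hE).symm
    rw [h1, hν'def, Measure.add_apply, Measure.finset_sum_apply]
    refine le_trans ?_ le_add_self
    exact Finset.single_le_sum
      (f := fun γ' => Measure.map (bernoulliShift (κ := Fin d) γ'⁻¹) ν E)
      (fun _ _ => zero_le) hγ
  have hε8 : (0 : ℝ≥0∞) < ENNReal.ofReal (ε / 8) := ENNReal.ofReal_pos.mpr (by linarith)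
  choose J C hdet happ using fun i : Fin n =>
    exists_wcDetBy_approx ν' (hYs i) (ENNReal.ofReal (ε / 8)) hε8
  set J0 : Finset Γ := Finset.univ.sup J with hJ0def
  have hJ0 : ∀ i, J i ⊆ J0 := fun i => Finset.le_sup (Finset.mem_univ i)
  have hdet0 : ∀ i, wcDetBy J0 (C i) := fun i => (hdet i).mono (hJ0 i)
  set F : Finset Γ := J0 ∪ S.biUnion (fun γ => J0.image (fun δ => δ * γ⁻¹)) with hFdef
  have hsub1 : J0 ⊆ F := Finset.subset_union_left
  have hsub2 : ∀ γ ∈ S, J0.image (fun δ => δ * γ⁻¹) ⊆ F := fun γ hγ =>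
    (Finset.subset_biUnion_of_mem (fun γ => J0.image (fun δ => δ * γ⁻¹)) hγ).trans Finset.subset_union_right
  set N : ℕ := Fintype.card (↥F → Fin d) with hNdef
  have hδ0pos : (0 : ℝ) < ε / (4 * (N + 1)) := by positivity
  obtain ⟨φ, hφm, hφ2⟩ := happrox F (ε / (4 * (N + 1))) hδ0pos
  set Φ : X → (Γ → Fin d) := fun x γ => φ (f γ x) with hΦdef
  have hΦ : Measurable Φ := measurable_pi_lambda _ fun γ => hφm.comp (hmp γ).measurable
  refine ⟨fun i => Φ ⁻¹' (C i), fun i => hΦ (hdet0 i).measurableSet, ?_⟩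
  intro i j γ hγ
  have hcomm : ∀ x : X, Φ (f γ⁻¹ x) = bernoulliShift γ⁻¹ (Φ x) := by
    intro x
    funext δ
    show φ (f δ (f γ⁻¹ x)) = φ (f (δ * γ⁻¹) x)
    rw [hmul]
  have himg : f γ '' (Φ ⁻¹' (C i)) = Φ ⁻¹' (bernoulliShift γ⁻¹ ⁻¹' (C i)) := by
    ext x
    constructor
    · rintro ⟨y, hy, rfl⟩
      have hyx : f γ⁻¹ (f γ y) = y := by rw [← hmul, inv_mul_cancel, hone]
      have h2 : bernoulliShift γ⁻¹ (Φ (f γ y)) = Φ y := by rw [← hcomm, hyx]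
      simp only [Set.mem_preimage]
      rw [h2]
      exact hy
    · intro hx
      refine ⟨f γ⁻¹ x, ?_, ?_⟩
      · simp only [Set.mem_preimage]
        rw [hcomm]
        exact hx
      · rw [← hmul, mul_inv_cancel, hone]
  set D : Set (Γ → Fin d) := bernoulliShift γ⁻¹ ⁻¹' (C i) ∩ C j with hDdef
  have hDdet : wcDetBy F D :=
    (((hdet0 i).preimage_shift γ⁻¹).mono (hsub2 γ hγ)).inter ((hdet0 j).mono hsub1)
  have hkey : |(μ (Φ ⁻¹' D)).toReal - (ν D).toReal| ≤ ε / 4 := by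
    have hμeq := measure_preimage_wcDetBy hDdet μ hΦ
    have hνeq := measure_preimage_wcDetBy hDdet ν measurable_id
    simp only [Set.preimage_id] at hνeq
    rw [hμeq, hνeq]
    refine le_trans (abs_toReal_sum_sub_le _ _ _ hδ0pos.le
      (fun a _ => measure_ne_top μ _) (fun a _ => measure_ne_top ν _) ?_) ?_
    · intro a _
      rw [bernoulli_atom hν F (wcExt F a),
        ← ENNReal.ofReal_prod_of_nonneg (fun γ' _ => (hp _).le),
        ENNReal.toReal_ofReal (Finset.prod_nonneg fun γ' _ => (hp _).le)]
      exact (hφ2 (wcExt F a)).le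
    · rw [← hNdef]
      have hN1 : (N : ℝ) ≤ (N : ℝ) + 1 := by linarith
      calc (N : ℝ) * (ε / (4 * (N + 1)))
          ≤ ((N : ℝ) + 1) * (ε / (4 * (N + 1))) :=
            mul_le_mul_of_nonneg_right hN1 hδ0pos.le
        _ = ε / 4 := by
            field_simp
  have hCi : MeasurableSet (C i) := (hdet0 i).measurableSet
  have hCj : MeasurableSet (C j) := (hdet0 j).measurableSet
  have h2 : |(ν D).toReal - (ν (bernoulliShift γ⁻¹ ⁻¹' Ys i ∩ Ys j)).toReal| ≤ ε / 4 := by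
    refine (abs_toReal_sub_le ν _ _).trans ?_
    have hss : symmDiff D (bernoulliShift γ⁻¹ ⁻¹' Ys i ∩ Ys j) ⊆
        (bernoulliShift γ⁻¹ ⁻¹' symmDiff (C i) (Ys i)) ∪ symmDiff (C j) (Ys j) := by
      rw [preimage_symmDiff']
      exact symmDiff_inter_subset _ _ _ _
    have hm : ν (symmDiff D (bernoulliShift γ⁻¹ ⁻¹' Ys i ∩ Ys j))
        ≤ ENNReal.ofReal (ε / 8) + ENNReal.ofReal (ε / 8) := by
      refine ((measure_mono hss).trans (measure_union_le _ _)).trans ?_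
      refine add_le_add ?_ ?_
      · refine (hν'shift γ hγ _ (hCi.symmDiff (hYs i))).trans ?_
        rw [symmDiff_comm]
        exact (happ i).le
      · refine (hν'le _).trans ?_
        rw [symmDiff_comm]
        exact (happ j).le
    refine (ENNReal.toReal_mono
      (ENNReal.add_ne_top.mpr ⟨ENNReal.ofReal_ne_top, ENNReal.ofReal_ne_top⟩) hm).trans ?_
    rw [ENNReal.toReal_add ENNReal.ofReal_ne_top ENNReal.ofReal_ne_top,
      ENNReal.toReal_ofReal (by linarith : (0:ℝ) ≤ ε / 8)]
    linarith
  have hXseq : f γ '' (Φ ⁻¹' C i) ∩ Φ ⁻¹' C j = Φ ⁻¹' D := by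
    rw [himg, hDdef, Set.preimage_inter]
  calc |(μ (f γ '' (Φ ⁻¹' C i) ∩ Φ ⁻¹' C j)).toReal
        - (ν (bernoulliShift γ '' Ys i ∩ Ys j)).toReal|
      = |(μ (Φ ⁻¹' D)).toReal - (ν (bernoulliShift γ⁻¹ ⁻¹' Ys i ∩ Ys j)).toReal| := by
        rw [hXseq, bernoulliShift_image]
    _ ≤ |(μ (Φ ⁻¹' D)).toReal - (ν D).toReal|
        + |(ν D).toReal - (ν (bernoulliShift γ⁻¹ ⁻¹' Ys i ∩ Ys j)).toReal| :=
        abs_sub_le _ _ _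
    _ ≤ ε / 4 + ε / 4 := add_le_add hkey h2
    _ < ε := by linarith
end

section
/- Let g be a p.m.p. action of the countable group Γ on a standard Borel probability space (Y, ν) and let K be a compact metrizable space. Then E(g, K) is contained in the weak* closure of the union, over all finite subsets L ⊆ K, of E(g, L) (where an invariant measure on L^Γ is regarded as an invariant measure on K^Γ via the inclusion L^Γ ⊆ K^Γ). -/
open MeasureTheory Filter Topology

open TopologicalSpace in
/-- `E(g, K)`: the set of invariant measures on `K^Γ` obtained as pushforwards `Φ∘ν` of `ν`
under maps `Φ(y)(γ) = φ(g_γ y)` for Borel `φ : Y → K`. -/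
def EClass {Γ Y : Type*} (K : Type*) [MeasurableSpace Y] [TopologicalSpace K]
    [MeasurableSpace K] (g : Γ → Y → Y) (ν : Measure Y) [IsProbabilityMeasure ν] :
    Set (ProbabilityMeasure (Γ → K)) :=
  {ρ | ∃ φ : Y → K, Measurable φ ∧
    (ρ : Measure (Γ → K)) = ν.map (fun y => fun γ : Γ => φ (g γ y))}

open TopologicalSpace in
/-- `E(g, L)` for a finite `L ⊆ K`, regarded inside the measures on `K^Γ` via `L^Γ ⊆ K^Γ`:
pushforwards coming from Borel maps `φ : Y → K` taking values in `L`. -/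
def EClassFin {Γ Y : Type*} (K : Type*) [MeasurableSpace Y] [TopologicalSpace K]
    [MeasurableSpace K] (g : Γ → Y → Y) (ν : Measure Y) [IsProbabilityMeasure ν]
    (L : Finset K) : Set (ProbabilityMeasure (Γ → K)) :=
  {ρ | ∃ φ : Y → K, Measurable φ ∧ (∀ y, φ y ∈ L) ∧
    (ρ : Measure (Γ → K)) = ν.map (fun y => fun γ : Γ => φ (g γ y))}

noncomputable def finProj {K : Type*} [MetricSpace K] (ε : ℝ) (d : K) :
    List K → K → K
  | [] => fun _ => d
  | c :: rest => fun x => if dist x c < ε then c else finProj ε d rest x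

lemma finProj_measurable {K : Type*} [MetricSpace K] [MeasurableSpace K] [BorelSpace K]
    (ε : ℝ) (d : K) (l : List K) : Measurable (finProj ε d l) := by
  induction l with
  | nil => exact measurable_const
  | cons c rest ih =>
    exact Measurable.ite measurableSet_ball measurable_const ih

lemma finProj_mem {K : Type*} [MetricSpace K] (ε : ℝ) (d : K) (l : List K) (x : K) :
    finProj ε d l x = d ∨ finProj ε d l x ∈ l := by
  induction l with
  | nil => exact Or.inl rfl
  | cons c rest ih =>
    simp only [finProj]
    split
    · exact Or.inr (List.mem_cons_self)
    · rcases ih with h | h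
      · exact Or.inl h
      · exact Or.inr (List.mem_cons_of_mem _ h)

lemma finProj_dist {K : Type*} [MetricSpace K] (ε : ℝ) (d : K) (l : List K) (x : K)
    (h : ∃ c ∈ l, dist x c < ε) : dist (finProj ε d l x) x < ε := by
  induction l with
  | nil => simp at h
  | cons c rest ih =>
    simp only [finProj]
    split
    · next hb => rw [dist_comm]; exact hb
    · next hb =>
      apply ih
      rcases h with ⟨c', hc', hx⟩
      rcases List.mem_cons.mp hc' with rfl | h'
      · exact absurd hx hb
      · exact ⟨c', h', hx⟩

lemma exists_finProj {K : Type*} [MetricSpace K] [CompactSpace K] [MeasurableSpace K]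
    [BorelSpace K] (d : K) {ε : ℝ} (hε : 0 < ε) :
    ∃ (L : Finset K) (π : K → K), Measurable π ∧ (∀ x, π x ∈ L) ∧ ∀ x, dist (π x) x < ε := by
  haveI := Classical.decEq K
  obtain ⟨t, -, htf, hcov⟩ := isCompact_univ.finite_cover_balls (X := K) hε
  refine ⟨insert d htf.toFinset, finProj ε d htf.toFinset.toList,
    finProj_measurable ε d _, fun x => ?_, fun x => ?_⟩
  · rcases finProj_mem ε d htf.toFinset.toList x with h | h
    · simp [h]
    · simp only [Finset.mem_toList] at h
      exact Finset.mem_insert_of_mem h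
  · apply finProj_dist
    have := hcov (Set.mem_univ x)
    simp only [Set.mem_iUnion, Metric.mem_ball] at this
    obtain ⟨c, hc, hx⟩ := this
    exact ⟨c, by simp [hc], hx⟩

open TopologicalSpace in
/-- `E(g,K)` is contained in the weak* closure of the union of the `E(g,L)` over the finite
subsets `L ⊆ K`. -/
theorem EClass_subset_closure_union_finite
    {Γ : Type} [Group Γ] [Countable Γ]
    {Y : Type} [MeasurableSpace Y] [StandardBorelSpace Y]
    (ν : Measure Y) [IsProbabilityMeasure ν] (g : Γ → Y → Y) (hg : IsPMPAction g ν)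
    (K : Type) [TopologicalSpace K] [CompactSpace K] [MetrizableSpace K]
    [SecondCountableTopology K] [MeasurableSpace K] [BorelSpace K] :
    EClass K g ν ⊆ closure (⋃ L : Finset K, EClassFin K g ν L) := by
  rintro ρ ⟨φ, hφ, hρ⟩
  letI : MetricSpace K := TopologicalSpace.metrizableSpaceMetric K
  have hY : Nonempty Y := by
    rcases isEmpty_or_nonempty Y with h | h
    · exfalso
      have h1 : ν Set.univ = 1 := measure_univ
      simp [Set.univ_eq_empty_iff.mpr h] at h1
    · exact h
  obtain ⟨y₀⟩ := hY
  have key := fun n : ℕ => exists_finProj (K := K) (φ y₀)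
    (ε := 1/(n+1)) (by positivity)
  choose L π hπm hπL hπd using key
  set Φ : ℕ → Y → (Γ → K) := fun n y γ => π n (φ (g γ y)) with hΦdef
  set Psi : Y → (Γ → K) := fun y γ => φ (g γ y) with hPsidef
  have hΦm : ∀ n, Measurable (Φ n) := fun n =>
    measurable_pi_lambda _ fun γ => (hπm n).comp (hφ.comp (hg.1 γ).measurable)
  have hPsim : Measurable Psi :=
    measurable_pi_lambda _ fun γ => hφ.comp (hg.1 γ).measurable
  have hmap : ∀ n, IsProbabilityMeasure (ν.map (Φ n)) := fun n =>
    Measure.isProbabilityMeasure_map (hΦm n).aemeasurable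
  set ρn : ℕ → ProbabilityMeasure (Γ → K) := fun n => ⟨ν.map (Φ n), hmap n⟩ with hρn
  have hmem : ∀ n, ρn n ∈ ⋃ L : Finset K, EClassFin K g ν L := fun n =>
    Set.mem_iUnion.mpr ⟨L n, fun y => π n (φ y), (hπm n).comp hφ,
      fun y => hπL n _, rfl⟩
  refine mem_closure_of_tendsto (b := atTop) ?_ (Eventually.of_forall hmem)
  rw [ProbabilityMeasure.tendsto_iff_forall_integral_tendsto]
  intro f
  have heq : ∀ n, ∫ ω, f ω ∂(ρn n : Measure (Γ → K)) = ∫ y, f (Φ n y) ∂ν := fun n => by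
    show ∫ ω, f ω ∂(ν.map (Φ n)) = _
    rw [integral_map (hΦm n).aemeasurable f.continuous.aestronglyMeasurable]
  have heqI : ∫ ω, f ω ∂(ρ : Measure (Γ → K)) = ∫ y, f (Psi y) ∂ν := by
    rw [hρ, integral_map hPsim.aemeasurable f.continuous.aestronglyMeasurable]
  simp only [heq, heqI]
  apply tendsto_integral_of_dominated_convergence (bound := fun _ => ‖f‖)
  · exact fun n => (f.continuous.measurable.comp (hΦm n)).aestronglyMeasurable
  · exact integrable_const _
  · exact fun n => Eventually.of_forall fun y => f.norm_coe_le_norm _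
  · refine Eventually.of_forall fun y => ?_
    refine (f.continuous.tendsto _).comp ?_
    rw [tendsto_pi_nhds]
    intro γ
    rw [tendsto_iff_dist_tendsto_zero]
    apply squeeze_zero (fun n => dist_nonneg) (fun n => (hπd n _).le)
    exact tendsto_one_div_add_atTop_nhds_zero_nat
end
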